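/- arXiv:2205.08038 — 7 statements merged into one kernel-verified Lean document; each statement's English description precedes it below -/
import Mathlib

section
/- Let f : ℝⁿ → ℝ be twice continuously differentiable, let x* ∈ ℝⁿ satisfy ∇f(x*) = 0, assume the Hessian ∇²f(x*) is invertible and that ∇²f(·) is differentiable in a neighborhood of x*. Let ε : ℝⁿ → [0,∞) be a function that is constant in a neighborhood of x* and satisfies ∇²f(x*) + ε(x*)·I ≻ 0. If x* is a local minimum of f (equivalently, given the invertibility assumption, ∇²f(x*) ≻ 0), then x* is a locally asymptotically stable equilibrium of the modified Newton iteration x⁺ = x − (∇²f(x) + ε(x)·I)⁻¹ ∇f(x). -/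
open Filter Topology Matrix
open scoped RealInnerProductSpace

noncomputable section

/-- The `i`-th partial derivative of `f` at `x`. -/
def pd {n : ℕ} (f : EuclideanSpace ℝ (Fin n) → ℝ) (x : EuclideanSpace ℝ (Fin n)) (i : Fin n) : ℝ :=
  fderiv ℝ f x (EuclideanSpace.single i 1)

/-- The Hessian matrix of `f` at `x`. -/
def hessian {n : ℕ} (f : EuclideanSpace ℝ (Fin n) → ℝ) (x : EuclideanSpace ℝ (Fin n)) :
    Matrix (Fin n) (Fin n) ℝ :=
  Matrix.of fun i j => pd (fun y => pd f y j) x i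

/-- The modified Newton iteration map `x ↦ x - (∇²f(x) + ε(x)·I)⁻¹ ∇f(x)`. -/
def newtonMap {n : ℕ} (f : EuclideanSpace ℝ (Fin n) → ℝ) (ε : EuclideanSpace ℝ (Fin n) → ℝ)
    (x : EuclideanSpace ℝ (Fin n)) : EuclideanSpace ℝ (Fin n) :=
  x - (WithLp.equiv 2 (Fin n → ℝ)).symm
    ((hessian f x + ε x • (1 : Matrix (Fin n) (Fin n) ℝ))⁻¹.mulVec
      (WithLp.equiv 2 (Fin n → ℝ) (gradient f x)))

/-- Lyapunov stability of a fixed point of the discrete iteration `z⁺ = T(z)`. -/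
def StableFixedPt {Z : Type*} [NormedAddCommGroup Z] (T : Z → Z) (z : Z) : Prop :=
  ∀ η > 0, ∃ δ > 0, ∀ z₀, ‖z₀ - z‖ < δ → ∀ k : ℕ, ‖T^[k] z₀ - z‖ < η

/-- Local asymptotic stability: fixed point, stability, and local attractivity. -/
def IsLASFixedPt {Z : Type*} [NormedAddCommGroup Z] (T : Z → Z) (z : Z) : Prop :=
  Function.IsFixedPt T z ∧ StableFixedPt T z ∧
    ∃ δ > 0, ∀ z₀, ‖z₀ - z‖ < δ → Tendsto (fun k => T^[k] z₀) atTop (𝓝 z)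

def matL (S : Matrix (Fin n) (Fin n) ℝ) :
    EuclideanSpace ℝ (Fin n) →L[ℝ] EuclideanSpace ℝ (Fin n) :=
  LinearMap.toContinuousLinearMap (Matrix.toEuclideanLin S)

lemma matL_apply (S : Matrix (Fin n) (Fin n) ℝ) (v : EuclideanSpace ℝ (Fin n)) :
    matL S v = (WithLp.equiv 2 (Fin n → ℝ)).symm (S.mulVec (WithLp.equiv 2 (Fin n → ℝ) v)) := rfl

lemma matL_mul (S T : Matrix (Fin n) (Fin n) ℝ) : matL (S * T) = (matL S).comp (matL T) := by
  ext v
  simp [matL_apply, Matrix.mulVec_mulVec]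

lemma matL_one : matL (1 : Matrix (Fin n) (Fin n) ℝ) = ContinuousLinearMap.id ℝ _ := by
  ext v
  simp [matL_apply]

lemma matL_smul (c : ℝ) (S : Matrix (Fin n) (Fin n) ℝ) : matL (c • S) = c • matL S := by
  ext v
  simp [matL_apply, Matrix.smul_mulVec]

lemma matL_add (S T : Matrix (Fin n) (Fin n) ℝ) : matL (S + T) = matL S + matL T := by
  ext v
  simp [matL_apply, Matrix.add_mulVec]

lemma matL_sub (S T : Matrix (Fin n) (Fin n) ℝ) : matL (S - T) = matL S - matL T := by
  ext v
  simp [matL_apply, Matrix.sub_mulVec]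

lemma continuous_matL : Continuous (matL (n := n)) := by
  have : IsLinearMap ℝ (matL (n := n)) := ⟨matL_add, fun c S => matL_smul c S⟩
  exact (this.mk' _).continuous_of_finiteDimensional

lemma inner_matL (S : Matrix (Fin n) (Fin n) ℝ) (v w : EuclideanSpace ℝ (Fin n)) :
    ⟪v, matL S w⟫ = (fun k => v k) ⬝ᵥ S.mulVec (fun k => w k) := by
  simp [PiLp.inner_apply, matL_apply, dotProduct, RCLike.inner_apply]
  exact Finset.sum_congr rfl fun x _ => mul_comm _ _


variable {n : ℕ} {f : EuclideanSpace ℝ (Fin n) → ℝ} {xs : EuclideanSpace ℝ (Fin n)}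

lemma hessian_eq (hf : ContDiff ℝ 2 f) (x : EuclideanSpace ℝ (Fin n)) (i j : Fin n) :
    hessian f x i j
      = fderiv ℝ (fderiv ℝ f) x (EuclideanSpace.single i 1) (EuclideanSpace.single j 1) := by
  have hd : DifferentiableAt ℝ (fderiv ℝ f) x :=
    ((hf.fderiv_right (m := 1) (by norm_num)).differentiable one_ne_zero) x
  have : hessian f x i j
      = fderiv ℝ (fun y => fderiv ℝ f y (EuclideanSpace.single j 1)) x
          (EuclideanSpace.single i 1) := rfl
  rw [this, fderiv_clm_apply hd (differentiableAt_const _)]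
  simp

lemma hessian_continuous (hf : ContDiff ℝ 2 f) : Continuous fun x => hessian f x := by
  have h2 : Continuous (fderiv ℝ (fderiv ℝ f)) :=
    (hf.fderiv_right (m := 1) (by norm_num)).continuous_fderiv one_ne_zero
  apply continuous_matrix
  intro i j
  have : (fun x => hessian f x i j) = fun x =>
      (ContinuousLinearMap.apply ℝ ℝ (EuclideanSpace.single j 1))
        ((ContinuousLinearMap.apply ℝ (EuclideanSpace ℝ (Fin n) →L[ℝ] ℝ)
          (EuclideanSpace.single i 1)) (fderiv ℝ (fderiv ℝ f) x)) := by
    funext x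
    simp [hessian_eq hf]
  rw [this]
  exact (ContinuousLinearMap.apply ℝ ℝ _).continuous.comp
    ((ContinuousLinearMap.apply ℝ _ _).continuous.comp h2)

lemma hessian_symm (hf : ContDiff ℝ 2 f) (x : EuclideanSpace ℝ (Fin n)) (i j : Fin n) :
    hessian f x i j = hessian f x j i := by
  rw [hessian_eq hf, hessian_eq hf]
  have hd : ∀ y, HasFDerivAt f (fderiv ℝ f y) y :=
    fun y => ((hf.differentiable (by norm_num)) y).hasFDerivAt
  have hB : HasFDerivAt (fderiv ℝ f) (fderiv ℝ (fderiv ℝ f) x) x :=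
    (((hf.fderiv_right (m := 1) (by norm_num)).differentiable one_ne_zero) x).hasFDerivAt
  exact second_derivative_symmetric hd hB _ _

lemma euclid_sum_single (v : EuclideanSpace ℝ (Fin n)) :
    v = ∑ i, v i • EuclideanSpace.single i (1 : ℝ) := by
  have := (EuclideanSpace.basisFun (Fin n) ℝ).sum_repr v
  simp only [EuclideanSpace.basisFun_repr, EuclideanSpace.basisFun_apply] at this
  exact this.symm

lemma bilin_expand (B : EuclideanSpace ℝ (Fin n) →L[ℝ] EuclideanSpace ℝ (Fin n) →L[ℝ] ℝ)
    (v w : EuclideanSpace ℝ (Fin n)) :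
    B v w = ∑ i, ∑ j, v i * w j * B (EuclideanSpace.single i 1) (EuclideanSpace.single j 1) := by
  have h1 : B v w = ∑ i, v i * (B (EuclideanSpace.single i 1) w) := by
    conv_lhs => rw [euclid_sum_single v]
    rw [map_sum B]
    simp [ContinuousLinearMap.sum_apply]
  rw [h1]
  congr 1; funext i
  have h2 : B (EuclideanSpace.single i 1) w
      = ∑ j, w j * B (EuclideanSpace.single i 1) (EuclideanSpace.single j 1) := by
    conv_lhs => rw [euclid_sum_single w]
    simp
  rw [h2, Finset.mul_sum]
  congr 1; funext j; ring

lemma fderiv_eq_zero_of_gradient (hgrad : gradient f xs = 0) : fderiv ℝ f xs = 0 := by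
  have := congrArg (InnerProductSpace.toDual ℝ (EuclideanSpace ℝ (Fin n))) hgrad
  simpa [gradient] using this

lemma snd_deriv_nonneg (hf : ContDiff ℝ 2 f) (hgrad : gradient f xs = 0)
    (hmin : ∃ δ > 0, ∀ x, ‖x - xs‖ < δ → f xs ≤ f x) (v : EuclideanSpace ℝ (Fin n)) :
    0 ≤ fderiv ℝ (fderiv ℝ f) xs v v := by
  by_contra hneg
  push_neg at hneg
  set B := fderiv ℝ (fderiv ℝ f) xs with hBdef
  obtain ⟨δ₀, hδ₀, hlocmin⟩ := hmin
  -- the curve γ t = xs + t • v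
  have hγ : ∀ t : ℝ, HasDerivAt (fun s : ℝ => xs + s • v) v t := by
    intro t
    simpa using ((hasDerivAt_id t).smul_const v).const_add xs
  have hdf : Differentiable ℝ f := hf.differentiable (by norm_num)
  -- first derivative of g = f ∘ γ
  have hg' : ∀ t : ℝ, HasDerivAt (fun s : ℝ => f (xs + s • v)) (fderiv ℝ f (xs + t • v) v) t :=
    fun t => ((hdf (xs + t • v)).hasFDerivAt).comp_hasDerivAt t (hγ t)
  -- second derivative at 0
  have hB : HasFDerivAt (fderiv ℝ f) B xs :=
    (((hf.fderiv_right (m := 1) (by norm_num)).differentiable one_ne_zero) xs).hasFDerivAt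
  have hB0 : HasFDerivAt (fderiv ℝ f) B (xs + (0:ℝ) • v) := by simpa using hB
  have hg'' : HasDerivAt (fun t : ℝ => fderiv ℝ f (xs + t • v) v) (B v v) 0 := by
    have hc : HasDerivAt (fun t : ℝ => fderiv ℝ f (xs + t • v)) (B v) 0 :=
      hB0.comp_hasDerivAt 0 (hγ 0)
    simpa using hc.clm_apply (hasDerivAt_const 0 v)
  have h0 : fderiv ℝ f (xs + (0:ℝ) • v) v = 0 := by
    simp [fderiv_eq_zero_of_gradient hgrad]
  -- the derivative g' is negative on a right neighborhood of 0
  have hslope : Tendsto (slope (fun t : ℝ => fderiv ℝ f (xs + t • v) v) 0) (𝓝[≠] 0) (𝓝 (B v v)) :=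
    hasDerivAt_iff_tendsto_slope.mp hg''
  have hslopeneg : ∀ᶠ t in 𝓝[≠] (0:ℝ), slope (fun t : ℝ => fderiv ℝ f (xs + t • v) v) 0 t < 0 :=
    hslope.eventually (eventually_lt_nhds hneg)
  have hslopeneg' : ∀ᶠ t in 𝓝[>] (0:ℝ), slope (fun t : ℝ => fderiv ℝ f (xs + t • v) v) 0 t < 0 :=
    hslopeneg.filter_mono (nhdsWithin_mono 0 (fun t ht => ne_of_gt ht))
  obtain ⟨u, hu, hsub⟩ := mem_nhdsGT_iff_exists_Ioo_subset.mp hslopeneg'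
  have hderivneg : ∀ t ∈ Set.Ioo (0:ℝ) u, fderiv ℝ f (xs + t • v) v < 0 := by
    intro t ht
    have := hsub ht
    rw [Set.mem_setOf_eq, slope_def_field] at this
    have h0' : fderiv ℝ f (xs + (0:ℝ) • v) v = 0 := h0
    rw [h0', sub_zero, sub_zero] at this
    have htpos := ht.1
    calc fderiv ℝ f (xs + t • v) v = (fderiv ℝ f (xs + t • v) v / t) * t := by
          field_simp
      _ < 0 := mul_neg_of_neg_of_pos this htpos
  set d : ℝ := min (u / 2) (δ₀ / (2 * (‖v‖ + 1))) with hd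
  have hdpos : 0 < d := by
    have h1 : (0:ℝ) < u / 2 := by have := hu; simp only [Set.mem_Ioi] at this; linarith
    have h2 : (0:ℝ) < δ₀ / (2 * (‖v‖ + 1)) := by positivity
    exact lt_min h1 h2
  have hanti : StrictAntiOn (fun s : ℝ => f (xs + s • v)) (Set.Icc 0 d) := by
    apply strictAntiOn_of_deriv_neg (convex_Icc 0 d)
    · exact (hdf.continuous.comp (continuous_const.add (continuous_id.smul continuous_const))).continuousOn
    · intro t ht
      rw [interior_Icc] at ht
      rw [(hg' t).deriv]
      apply hderivneg
      constructor
      · exact ht.1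
      · have : d ≤ u / 2 := min_le_left _ _
        have hu' : (0:ℝ) < u := by have := hu; simpa using this
        calc t < d := ht.2
          _ ≤ u / 2 := this
          _ < u := by linarith
  have hlt : f (xs + d • v) < f xs := by
    have := hanti (Set.left_mem_Icc.mpr hdpos.le) (Set.right_mem_Icc.mpr hdpos.le) hdpos
    simpa using this
  have hmem : ‖(xs + d • v) - xs‖ < δ₀ := by
    have : ‖(xs + d • v) - xs‖ = d * ‖v‖ := by
      rw [add_sub_cancel_left, norm_smul, Real.norm_eq_abs, abs_of_pos hdpos]
    rw [this]
    have hd2 : d ≤ δ₀ / (2 * (‖v‖ + 1)) := min_le_right _ _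
    have hv : (0:ℝ) ≤ ‖v‖ := norm_nonneg v
    have h1 : d * ‖v‖ ≤ δ₀ / (2 * (‖v‖ + 1)) * ‖v‖ :=
      mul_le_mul_of_nonneg_right hd2 hv
    have h2 : δ₀ / (2 * (‖v‖ + 1)) * ‖v‖ < δ₀ := by
      rw [div_mul_eq_mul_div, div_lt_iff₀ (by positivity)]
      nlinarith
    linarith
  exact absurd (hlocmin _ hmem) (not_le.mpr hlt)

lemma dotProduct_hessian (hf : ContDiff ℝ 2 f) (x : Fin n → ℝ) :
    x ⬝ᵥ (hessian f xs) *ᵥ x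
      = fderiv ℝ (fderiv ℝ f) xs ((WithLp.equiv 2 (Fin n → ℝ)).symm x)
          ((WithLp.equiv 2 (Fin n → ℝ)).symm x) := by
  rw [bilin_expand]
  simp only [dotProduct, Matrix.mulVec, WithLp.equiv_symm_apply, WithLp.ofLp_toLp]
  congr 1; funext i
  rw [Finset.mul_sum]
  congr 1; funext j
  rw [hessian_eq hf]
  ring

lemma hessian_posDef (hf : ContDiff ℝ 2 f) (hgrad : gradient f xs = 0)
    (hmin : ∃ δ > 0, ∀ x, ‖x - xs‖ < δ → f xs ≤ f x) (hinv : IsUnit (hessian f xs).det) :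
    (hessian f xs).PosDef := by
  have hsymm : (hessian f xs).IsHermitian := by
    ext i j
    simp only [Matrix.conjTranspose_apply, star_trivial]
    exact hessian_symm hf xs j i
  have hpsd : (hessian f xs).PosSemidef := by
    refine Matrix.PosSemidef.of_dotProduct_mulVec_nonneg hsymm fun x => ?_
    rw [star_trivial, dotProduct_hessian hf]
    exact snd_deriv_nonneg hf hgrad hmin _
  refine Matrix.PosDef.of_dotProduct_mulVec_pos hsymm fun x hx => ?_
  rcases lt_or_eq_of_le (hpsd.dotProduct_mulVec_nonneg x) with h | h
  · simpa using h
  · exfalso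
    have h0 : (hessian f xs) *ᵥ x = 0 := by
      rw [← (hpsd.dotProduct_mulVec_zero_iff x)]
      exact h.symm
    have : x = 0 := by
      have := congrArg (fun y => (hessian f xs)⁻¹ *ᵥ y) h0
      simpa [Matrix.mulVec_mulVec, Matrix.nonsing_inv_mul _ hinv] using this
    exact hx this


lemma key_norm {H M : Matrix (Fin n) (Fin n) ℝ} {ε : ℝ} (hε : 0 ≤ ε)
    (hH : H.PosDef) (hM : M = H + ε • 1) (hn : 0 < n) :
    ‖matL (ε • M⁻¹)‖ < 1 := by
  have hMpd : M.PosDef := by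
    rw [hM]
    refine hH.add_posSemidef ?_
    rw [Matrix.smul_one_eq_diagonal]
    exact Matrix.posSemidef_diagonal_iff.mpr fun i => hε
  have hcont : Continuous fun w : EuclideanSpace ℝ (Fin n) => ⟪w, matL H w⟫ :=
    continuous_id.inner (matL H).continuous
  have hsphere : (Metric.sphere (0 : EuclideanSpace ℝ (Fin n)) 1).Nonempty := by
    refine ⟨EuclideanSpace.single ⟨0, hn⟩ 1, ?_⟩
    rw [mem_sphere_zero_iff_norm, EuclideanSpace.norm_single]
    simp
  obtain ⟨w₀, hw₀, hminw⟩ :=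
    (isCompact_sphere (0 : EuclideanSpace ℝ (Fin n)) 1).exists_isMinOn hsphere hcont.continuousOn
  have hminw' := isMinOn_iff.mp hminw
  set m := ⟪w₀, matL H w₀⟫ with hmdef
  have hw₀norm : ‖w₀‖ = 1 := mem_sphere_zero_iff_norm.mp hw₀
  have hw₀ne : w₀ ≠ 0 := by
    intro h; rw [h, norm_zero] at hw₀norm; exact zero_ne_one hw₀norm
  have hmpos : 0 < m := by
    rw [hmdef, inner_matL]
    have : (fun k => w₀ k) ≠ 0 := by
      intro h
      apply hw₀ne
      ext k
      exact congrFun h k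
    have := hH.dotProduct_mulVec_pos this
    simpa using this
  have hq : ∀ w : EuclideanSpace ℝ (Fin n), m * ‖w‖ ^ 2 ≤ ⟪w, matL H w⟫ := by
    intro w
    rcases eq_or_ne w 0 with rfl | hw
    · simp
    · have hr : 0 < ‖w‖ := norm_pos_iff.mpr hw
      set u : EuclideanSpace ℝ (Fin n) := ‖w‖⁻¹ • w with hudef
      have hu : ‖u‖ = 1 := by
        rw [hudef, norm_smul, Real.norm_eq_abs, abs_of_pos (inv_pos.mpr hr), inv_mul_cancel₀ hr.ne']
      have hmu : m ≤ ⟪u, matL H u⟫ := hminw' u (mem_sphere_zero_iff_norm.mpr hu)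
      have hexp : ⟪u, matL H u⟫ = ‖w‖⁻¹ * (‖w‖⁻¹ * ⟪w, matL H w⟫) := by
        rw [hudef, real_inner_smul_left, ContinuousLinearMap.map_smul, real_inner_smul_right]
      rw [hexp] at hmu
      have h2 : m * ‖w‖ ^ 2 ≤ ‖w‖⁻¹ * (‖w‖⁻¹ * ⟪w, matL H w⟫) * ‖w‖ ^ 2 :=
        mul_le_mul_of_nonneg_right hmu (by positivity)
      calc m * ‖w‖ ^ 2 ≤ ‖w‖⁻¹ * (‖w‖⁻¹ * ⟪w, matL H w⟫) * ‖w‖ ^ 2 := h2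
        _ = ⟪w, matL H w⟫ * (‖w‖⁻¹ * ‖w‖) * (‖w‖⁻¹ * ‖w‖) := by ring
        _ = ⟪w, matL H w⟫ := by rw [inv_mul_cancel₀ hr.ne']; ring
  have hlow : ∀ w : EuclideanSpace ℝ (Fin n), (ε + m) * ‖w‖ ≤ ‖matL M w‖ := by
    intro w
    rcases eq_or_ne w 0 with rfl | hw
    · simp
    · have hr : 0 < ‖w‖ := norm_pos_iff.mpr hw
      have hsum : ⟪w, matL M w⟫ = ⟪w, matL H w⟫ + ε * ‖w‖ ^ 2 := by
        rw [hM, matL_add, matL_smul, matL_one]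
        rw [ContinuousLinearMap.add_apply, inner_add_right]
        congr 1
        rw [ContinuousLinearMap.smul_apply, real_inner_smul_right, ContinuousLinearMap.id_apply,
          real_inner_self_eq_norm_sq]
      have h1 : (ε + m) * ‖w‖ ^ 2 ≤ ⟪w, matL M w⟫ := by
        rw [hsum]
        have := hq w
        ring_nf
        ring_nf at this ⊢
        nlinarith [norm_nonneg w]
      have h2 : ⟪w, matL M w⟫ ≤ ‖w‖ * ‖matL M w‖ := real_inner_le_norm _ _
      rw [← mul_le_mul_iff_of_pos_right hr]
      nlinarith
  have hdetM : IsUnit M.det := hMpd.det_pos.ne'.isUnit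
  have hbound : ∀ v : EuclideanSpace ℝ (Fin n),
      ‖matL (ε • M⁻¹) v‖ ≤ (ε / (ε + m)) * ‖v‖ := by
    intro v
    set w := matL M⁻¹ v with hwdef
    have hMw : matL M w = v := by
      rw [hwdef, ← ContinuousLinearMap.comp_apply, ← matL_mul,
        Matrix.mul_nonsing_inv _ hdetM, matL_one, ContinuousLinearMap.id_apply]
    have hnorm : ‖matL (ε • M⁻¹) v‖ = ε * ‖w‖ := by
      rw [matL_smul, ContinuousLinearMap.smul_apply, norm_smul, Real.norm_eq_abs,
        abs_of_nonneg hε, hwdef]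
    rw [hnorm]
    have hεm : 0 < ε + m := by linarith
    have := mul_le_mul_of_nonneg_left (hlow w) (by positivity : (0:ℝ) ≤ ε / (ε + m))
    rw [hMw] at this
    calc ε * ‖w‖ = ε / (ε + m) * ((ε + m) * ‖w‖) := by
          rw [div_mul_eq_mul_div, mul_comm (ε + m) ‖w‖, ← mul_assoc, mul_div_assoc,
            div_self (by linarith : ε + m ≠ 0), mul_one]
      _ ≤ ε / (ε + m) * ‖v‖ := this
  have : ‖matL (ε • M⁻¹)‖ ≤ ε / (ε + m) := by
    apply ContinuousLinearMap.opNorm_le_bound _ (by positivity) hbound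
  refine lt_of_le_of_lt this ?_
  rw [div_lt_one (by linarith)]
  linarith

-- REST

lemma gradient_coord (x : EuclideanSpace ℝ (Fin n)) (j : Fin n) :
    gradient f x j = fderiv ℝ f x (EuclideanSpace.single j 1) := by
  have h2 : gradient f x j = ⟪EuclideanSpace.single j (1:ℝ), gradient f x⟫ := by
    rw [EuclideanSpace.inner_single_left]; simp
  rw [h2, real_inner_comm, gradient, InnerProductSpace.toDual_symm_apply]

def dualVec : (EuclideanSpace ℝ (Fin n) →L[ℝ] ℝ) →L[ℝ] EuclideanSpace ℝ (Fin n) :=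
  LinearMap.toContinuousLinearMap
    { toFun := fun l => (WithLp.equiv 2 (Fin n → ℝ)).symm (fun j => l (EuclideanSpace.single j 1))
      map_add' := by intro a b; ext j; simp
      map_smul' := by intro c a; ext j; simp }

lemma gradient_eq_dualVec (x : EuclideanSpace ℝ (Fin n)) :
    gradient f x = dualVec (fderiv ℝ f x) := by
  ext j
  rw [gradient_coord]
  rfl

lemma hasFDerivAt_gradient (hf : ContDiff ℝ 2 f) :
    HasFDerivAt (gradient f) (matL (hessian f xs)) xs := by
  have hB : HasFDerivAt (fderiv ℝ f) (fderiv ℝ (fderiv ℝ f) xs) xs :=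
    (((hf.fderiv_right (m := 1) (by norm_num)).differentiable one_ne_zero) xs).hasFDerivAt
  have h1 : HasFDerivAt (gradient f) (dualVec.comp (fderiv ℝ (fderiv ℝ f) xs)) xs := by
    have := dualVec.hasFDerivAt.comp xs hB
    refine this.congr_of_eventuallyEq ?_
    filter_upwards with x
    rw [Function.comp_apply, gradient_eq_dualVec]
  have heq : dualVec.comp (fderiv ℝ (fderiv ℝ f) xs) = matL (hessian f xs) := by
    apply ContinuousLinearMap.ext
    intro v
    ext j
    have hexp : fderiv ℝ (fderiv ℝ f) xs v (EuclideanSpace.single j 1)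
        = ∑ k, v k * hessian f xs k j := by
      conv_lhs => rw [euclid_sum_single v]
      rw [map_sum]
      simp only [ContinuousLinearMap.coe_sum', Finset.sum_apply, ContinuousLinearMap.map_smul,
        ContinuousLinearMap.coe_smul', Pi.smul_apply, smul_eq_mul]
      congr 1; funext k
      rw [hessian_eq hf]
    have hlhs : dualVec.comp (fderiv ℝ (fderiv ℝ f) xs) v j
        = fderiv ℝ (fderiv ℝ f) xs v (EuclideanSpace.single j 1) := rfl
    have hrhs : matL (hessian f xs) v j = ∑ k, hessian f xs j k * v k := rfl
    rw [hlhs, hexp, hrhs]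
    congr 1; funext k
    rw [hessian_symm hf xs k j]; ring
  rw [heq] at h1
  exact h1

/-- **Theorem (stability part)**: at an equilibrium point of the modified Newton iteration
that is a local minimum, the iteration is locally asymptotically stable. -/
theorem newton_LAS_of_localMin {n : ℕ}
    (f : EuclideanSpace ℝ (Fin n) → ℝ) (xs : EuclideanSpace ℝ (Fin n))
    (ε : EuclideanSpace ℝ (Fin n) → ℝ)
    (hf : ContDiff ℝ 2 f)
    (hgrad : gradient f xs = 0)
    (hinv : IsUnit (hessian f xs).det)
    (hHdiff : ∀ᶠ y in 𝓝 xs, ∀ i j, DifferentiableAt ℝ (fun w => hessian f w i j) y)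
    (hε0 : ∀ x, 0 ≤ ε x)
    (hεconst : ∀ᶠ y in 𝓝 xs, ε y = ε xs)
    (hpd : (hessian f xs + ε xs • (1 : Matrix (Fin n) (Fin n) ℝ)).PosDef)
    (hmin : ∃ δ > 0, ∀ x, ‖x - xs‖ < δ → f xs ≤ f x) :
    IsLASFixedPt (newtonMap f ε) xs := by
  classical
  have hfix : Function.IsFixedPt (newtonMap f ε) xs := by
    show newtonMap f ε xs = xs
    simp [newtonMap, hgrad]
  rcases Nat.eq_zero_or_pos n with hn0 | hn
  · subst hn0
    haveI : Subsingleton (EuclideanSpace ℝ (Fin 0)) :=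
      inferInstance
    refine ⟨hfix, fun η hη => ⟨1, one_pos, fun z₀ _ k => ?_⟩, 1, one_pos, fun z₀ _ => ?_⟩
    · rw [Subsingleton.elim ((newtonMap f ε)^[k] z₀) xs]
      simpa using hη
    · have : (fun k => (newtonMap f ε)^[k] z₀) = fun _ => xs := by
        funext k; exact Subsingleton.elim _ _
      rw [this]; exact tendsto_const_nhds
  set T := newtonMap f ε with hT
  set H := hessian f xs with hHdef
  set εs := ε xs with hεsdef
  set M : Matrix (Fin n) (Fin n) ℝ := H + εs • 1 with hMdef
  have hMpd : M.PosDef := hpd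
  have hHpd : H.PosDef := hessian_posDef hf hgrad hmin hinv
  have hc0 : ‖matL (εs • M⁻¹)‖ < 1 := key_norm (hε0 xs) hHpd rfl hn
  have hdetM : IsUnit M.det := hMpd.det_pos.ne'.isUnit
  have hiden : (matL M⁻¹).comp (matL H) = ContinuousLinearMap.id ℝ _ - matL (εs • M⁻¹) := by
    rw [← matL_mul, ← matL_one (n := n), ← matL_sub]
    congr 1
    have hMM : M⁻¹ * M = 1 := Matrix.nonsing_inv_mul _ hdetM
    have hH' : H = M - εs • 1 := by rw [hMdef, add_sub_cancel_right]
    rw [hH', Matrix.mul_sub, hMM, Matrix.mul_smul, Matrix.mul_one]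
  -- continuity of the iteration matrix
  have hΨcont : ContinuousAt (fun x => matL ((hessian f x + εs • 1)⁻¹)) xs := by
    have h1 : ContinuousAt (fun x => hessian f x + εs • (1 : Matrix (Fin n) (Fin n) ℝ)) xs :=
      ((hessian_continuous hf).continuousAt).add continuousAt_const
    have hdet : ContinuousAt (fun x => (hessian f x + εs • (1 : Matrix (Fin n) (Fin n) ℝ)).det) xs :=
      (continuous_id.matrix_det).continuousAt.comp h1
    have hadj : ContinuousAt
        (fun x => (hessian f x + εs • (1 : Matrix (Fin n) (Fin n) ℝ)).adjugate) xs :=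
      (continuous_id.matrix_adjugate).continuousAt.comp h1
    have h2 : ContinuousAt (fun x => (hessian f x + εs • (1 : Matrix (Fin n) (Fin n) ℝ))⁻¹) xs := by
      have heq : (fun x => (hessian f x + εs • (1 : Matrix (Fin n) (Fin n) ℝ))⁻¹)
          = fun x => ((hessian f x + εs • (1 : Matrix (Fin n) (Fin n) ℝ)).det)⁻¹ •
              (hessian f x + εs • (1 : Matrix (Fin n) (Fin n) ℝ)).adjugate := by
        funext x
        rw [Matrix.inv_def, Ring.inverse_eq_inv']
      rw [heq]
      have hdetne : ((hessian f xs + εs • (1 : Matrix (Fin n) (Fin n) ℝ)).det) ≠ 0 := by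
        rw [← hHdef, ← hMdef]
        exact hMpd.det_pos.ne'
      exact (hdet.inv₀ hdetne).smul hadj
    exact continuous_matL.continuousAt.comp h2
  have hGrad : HasFDerivAt (gradient f) (matL H) xs := hasFDerivAt_gradient hf
  set c : ℝ := (1 + ‖matL (εs • M⁻¹)‖) / 2 with hcdef
  have hcnn : 0 ≤ ‖matL (εs • M⁻¹)‖ := norm_nonneg _
  have hc1 : c < 1 := by rw [hcdef]; linarith
  have hcpos : 0 < c := by rw [hcdef]; linarith
  have hchalf : ‖matL (εs • M⁻¹)‖ < c := by rw [hcdef]; linarith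
  set a : ℝ := ‖matL M⁻¹‖ + 1 with hadef
  have hapos : 0 < a := by positivity
  set θ : ℝ := (1 - c) / (2 * a) with hθdef
  have hθpos : 0 < θ := by
    apply div_pos (by linarith) (by linarith)
  have hev1 : ∀ᶠ x in 𝓝 xs, ‖ContinuousLinearMap.id ℝ (EuclideanSpace ℝ (Fin n))
      - (matL ((hessian f x + εs • 1)⁻¹)).comp (matL H)‖ < c := by
    have hcont2 : ContinuousAt (fun x => ‖ContinuousLinearMap.id ℝ (EuclideanSpace ℝ (Fin n))
        - (matL ((hessian f x + εs • 1)⁻¹)).comp (matL H)‖) xs := by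
      apply ContinuousAt.norm
      apply ContinuousAt.sub continuousAt_const
      exact ((continuous_id.clm_comp continuous_const).continuousAt).comp hΨcont
    have hval : ‖ContinuousLinearMap.id ℝ (EuclideanSpace ℝ (Fin n))
        - (matL ((hessian f xs + εs • 1)⁻¹)).comp (matL H)‖ = ‖matL (εs • M⁻¹)‖ := by
      rw [← hHdef, ← hMdef, hiden, sub_sub_cancel]
    have := hcont2.tendsto
    rw [hval] at this
    exact this.eventually_lt_const hchalf
  have hev2 : ∀ᶠ x in 𝓝 xs, ‖matL ((hessian f x + εs • 1)⁻¹)‖ < a := by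
    have hval : ‖matL ((hessian f xs + εs • 1)⁻¹)‖ < a := by
      rw [← hHdef, ← hMdef, hadef]; exact lt_add_one _
    exact (hΨcont.norm.tendsto).eventually_lt_const hval
  have hev3 : ∀ᶠ x in 𝓝 xs, ‖gradient f x - gradient f xs - matL H (x - xs)‖ ≤ θ * ‖x - xs‖ := by
    have := hGrad.isLittleO.def hθpos
    filter_upwards [this] with x hx
    simpa using hx
  set K : ℝ := (1 + c) / 2 with hKdef
  have hK0 : 0 ≤ K := by rw [hKdef]; linarith
  have hK1 : K < 1 := by rw [hKdef]; linarith
  have key : ∀ᶠ x in 𝓝 xs, ‖T x - xs‖ ≤ K * ‖x - xs‖ := by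
    filter_upwards [hev1, hev2, hev3, hεconst] with x h1 h2 h3 h4
    set A := matL ((hessian f x + εs • 1)⁻¹) with hAdef
    have hTx : T x = x - A (gradient f x) := by
      rw [hT]
      show newtonMap f ε x = _
      rw [newtonMap, h4]
      rfl
    have hsplit : T x - xs
        = (ContinuousLinearMap.id ℝ (EuclideanSpace ℝ (Fin n)) - A.comp (matL H)) (x - xs)
          - A (gradient f x - gradient f xs - matL H (x - xs)) := by
      rw [hTx, hgrad]
      simp only [ContinuousLinearMap.sub_apply, ContinuousLinearMap.coe_id', id_eq,
        ContinuousLinearMap.comp_apply, map_sub, sub_zero]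
      abel
    rw [hsplit]
    have hb1 : ‖(ContinuousLinearMap.id ℝ (EuclideanSpace ℝ (Fin n)) - A.comp (matL H)) (x - xs)‖
        ≤ c * ‖x - xs‖ := by
      calc ‖(ContinuousLinearMap.id ℝ (EuclideanSpace ℝ (Fin n)) - A.comp (matL H)) (x - xs)‖
          ≤ ‖ContinuousLinearMap.id ℝ (EuclideanSpace ℝ (Fin n)) - A.comp (matL H)‖ * ‖x - xs‖ :=
            ContinuousLinearMap.le_opNorm _ _
        _ ≤ c * ‖x - xs‖ := mul_le_mul_of_nonneg_right h1.le (norm_nonneg _)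
    have hb2 : ‖A (gradient f x - gradient f xs - matL H (x - xs))‖ ≤ a * (θ * ‖x - xs‖) := by
      calc ‖A (gradient f x - gradient f xs - matL H (x - xs))‖
          ≤ ‖A‖ * ‖gradient f x - gradient f xs - matL H (x - xs)‖ :=
            ContinuousLinearMap.le_opNorm _ _
        _ ≤ a * (θ * ‖x - xs‖) := by
            apply mul_le_mul h2.le h3 (norm_nonneg _) (by linarith)
    calc ‖(ContinuousLinearMap.id ℝ (EuclideanSpace ℝ (Fin n)) - A.comp (matL H)) (x - xs)
          - A (gradient f x - gradient f xs - matL H (x - xs))‖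
        ≤ ‖(ContinuousLinearMap.id ℝ (EuclideanSpace ℝ (Fin n)) - A.comp (matL H)) (x - xs)‖
          + ‖A (gradient f x - gradient f xs - matL H (x - xs))‖ := norm_sub_le _ _
      _ ≤ c * ‖x - xs‖ + a * (θ * ‖x - xs‖) := add_le_add hb1 hb2
      _ = K * ‖x - xs‖ := by
          rw [hKdef, hθdef]
          field_simp
          ring
  obtain ⟨δ, hδpos, hδ⟩ := Metric.eventually_nhds_iff.mp key
  have hstep : ∀ z, ‖z - xs‖ < δ → ‖T z - xs‖ ≤ K * ‖z - xs‖ := by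
    intro z hz
    exact hδ (by rwa [dist_eq_norm])
  have hiter : ∀ z₀, ‖z₀ - xs‖ < δ → ∀ k : ℕ,
      ‖T^[k] z₀ - xs‖ ≤ K ^ k * ‖z₀ - xs‖ ∧ ‖T^[k] z₀ - xs‖ < δ := by
    intro z₀ h0 k
    induction k with
    | zero =>
      simp only [Function.iterate_zero, id_eq, pow_zero, one_mul]
      exact ⟨le_refl _, h0⟩
    | succ k ih =>
      rw [Function.iterate_succ_apply']
      have hb := hstep _ ih.2
      constructor
      · calc ‖T (T^[k] z₀) - xs‖ ≤ K * ‖T^[k] z₀ - xs‖ := hb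
          _ ≤ K * (K ^ k * ‖z₀ - xs‖) := mul_le_mul_of_nonneg_left ih.1 hK0
          _ = K ^ (k + 1) * ‖z₀ - xs‖ := by ring
      · calc ‖T (T^[k] z₀) - xs‖ ≤ K * ‖T^[k] z₀ - xs‖ := hb
          _ ≤ 1 * ‖T^[k] z₀ - xs‖ :=
            mul_le_mul_of_nonneg_right hK1.le (norm_nonneg _)
          _ < δ := by rw [one_mul]; exact ih.2
  refine ⟨hfix, ?_, δ, hδpos, ?_⟩
  · intro η hη
    refine ⟨min δ η, lt_min hδpos hη, fun z₀ hz k => ?_⟩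
    have h0 : ‖z₀ - xs‖ < δ := lt_of_lt_of_le hz (min_le_left _ _)
    calc ‖T^[k] z₀ - xs‖ ≤ K ^ k * ‖z₀ - xs‖ := (hiter z₀ h0 k).1
      _ ≤ 1 * ‖z₀ - xs‖ :=
        mul_le_mul_of_nonneg_right (pow_le_one₀ hK0 hK1.le) (norm_nonneg _)
      _ = ‖z₀ - xs‖ := one_mul _
      _ < min δ η := hz
      _ ≤ η := min_le_right _ _
  · intro z₀ hz
    rw [tendsto_iff_norm_sub_tendsto_zero]
    apply squeeze_zero (fun k => norm_nonneg _) (fun k => (hiter z₀ hz k).1)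
    have := (tendsto_pow_atTop_nhds_zero_of_lt_one hK0 hK1).mul_const ‖z₀ - xs‖
    simpa using this
end
end

section
/- Let A be a real symmetric invertible n×n matrix whose smallest eigenvalue is negative, and let ε > 0 be such that A + ε·I is positive definite. Then there exists μ ∈ (0,1) such that A + μ·ε·I is singular, and consequently the matrix I − (A + ε·I)⁻¹A has the real eigenvalue 1/(1−μ) > 1. -/
open Matrix

noncomputable section

/-- `ρ` is a (complex) eigenvalue of the real matrix `M`, i.e. a root of its characteristic
polynomial: `det(ρ·I − M) = 0` over `ℂ`. -/
def IsCxEigenvalue {n : ℕ} (M : Matrix (Fin n) (Fin n) ℝ) (ρ : ℂ) : Prop :=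
  (ρ • (1 : Matrix (Fin n) (Fin n) ℂ) - M.map (Complex.ofReal)).det = 0

lemma isCxEigenvalue_of_real {n : ℕ} (M : Matrix (Fin n) (Fin n) ℝ) (r : ℝ)
    (h : (r • (1 : Matrix (Fin n) (Fin n) ℝ) - M).det = 0) :
    IsCxEigenvalue M ((r : ℝ) : ℂ) := by
  unfold IsCxEigenvalue
  have : ((r : ℂ) • (1 : Matrix (Fin n) (Fin n) ℂ) - M.map Complex.ofReal)
      = (r • (1 : Matrix (Fin n) (Fin n) ℝ) - M).map Complex.ofReal := by
    ext i j
    by_cases hij : i = j <;>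
      simp [Matrix.map_apply, Matrix.one_apply, Matrix.smul_apply, hij]
  rw [this]
  have h2 : ((r • (1 : Matrix (Fin n) (Fin n) ℝ) - M).map Complex.ofReal).det
      = Complex.ofRealHom (r • (1 : Matrix (Fin n) (Fin n) ℝ) - M).det :=
    (RingHom.map_det Complex.ofRealHom _).symm
  rw [h2, h, map_zero]

/-- If `A` is symmetric, invertible, with a negative eigenvalue, and `ε > 0` makes `A + ε·I`
positive definite, then `A + μ·ε·I` is singular for some `μ ∈ (0,1)`, and consequently
`I − (A + ε·I)⁻¹A` has the real eigenvalue `1/(1−μ) > 1`. -/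
theorem newton_jacobian_unstable_eigenvalue {n : ℕ} (A : Matrix (Fin n) (Fin n) ℝ)
    (hA : A.IsHermitian) (hinv : IsUnit A.det)
    (hneg : ∃ i, hA.eigenvalues i < 0)
    (ε : ℝ) (hε : 0 < ε)
    (hpd : (A + ε • (1 : Matrix (Fin n) (Fin n) ℝ)).PosDef) :
    ∃ μ ∈ Set.Ioo (0 : ℝ) 1,
      (A + (μ * ε) • (1 : Matrix (Fin n) (Fin n) ℝ)).det = 0 ∧
      IsCxEigenvalue ((1 : Matrix (Fin n) (Fin n) ℝ) -
          (A + ε • (1 : Matrix (Fin n) (Fin n) ℝ))⁻¹ * A) ((1 / (1 - μ) : ℝ) : ℂ) ∧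
      1 < 1 / (1 - μ) := by
  obtain ⟨i, hneg_i⟩ := hneg
  set lam := hA.eigenvalues i with hlam
  set v : Fin n → ℝ := ⇑(hA.eigenvectorBasis i) with hv
  have hv0 : v ≠ 0 := by
    have := hA.eigenvectorBasis.orthonormal.ne_zero i
    intro h
    apply this
    ext j
    exact congrFun h j
  have hAv : A *ᵥ v = lam • v := hA.mulVec_eigenvectorBasis i
  set B := A + ε • (1 : Matrix (Fin n) (Fin n) ℝ) with hB
  -- λ + ε > 0
  have hvv : 0 < v ⬝ᵥ v := by
    rcases Function.ne_iff.mp hv0 with ⟨j, hj⟩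
    have hj' : v j ≠ 0 := by simpa using hj
    simp only [dotProduct]
    exact Finset.sum_pos' (fun k _ => mul_self_nonneg _)
      ⟨j, Finset.mem_univ j, mul_self_pos.mpr hj'⟩
  have hBv : B *ᵥ v = (lam + ε) • v := by
    simp [hB, Matrix.add_mulVec, hAv, Matrix.smul_mulVec, add_smul]
  have hpos : 0 < lam + ε := by
    have h2 := hpd.dotProduct_mulVec_pos hv0
    rw [hBv] at h2
    simp only [star_trivial, dotProduct_smul, smul_eq_mul] at h2
    nlinarith
  set μ := -lam / ε with hμ
  have hμε : μ * ε = -lam := by rw [hμ]; exact div_mul_cancel₀ (-lam) hε.ne'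
  have hμ0 : 0 < μ := div_pos (by linarith) hε
  have hμ1 : μ < 1 := by rw [hμ, div_lt_one hε]; linarith
  refine ⟨μ, ⟨hμ0, hμ1⟩, ?_, ?_, ?_⟩
  · -- singular
    rw [← Matrix.exists_mulVec_eq_zero_iff]
    refine ⟨v, hv0, ?_⟩
    rw [Matrix.add_mulVec, hAv, Matrix.smul_mulVec, Matrix.one_mulVec, hμε]
    simp [← add_smul]
  · -- eigenvalue
    set r := 1 / (1 - μ) with hr
    have h1μ : (1 : ℝ) - μ ≠ 0 := by linarith
    apply isCxEigenvalue_of_real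
    have hBunit : IsUnit B.det := hpd.det_pos.ne'.isUnit
    have hBinv : B⁻¹ * B = 1 := Matrix.nonsing_inv_mul B hBunit
    have key : r • (1 : Matrix (Fin n) (Fin n) ℝ) - (1 - B⁻¹ * A)
        = B⁻¹ * (r • (A + (μ * ε) • (1 : Matrix (Fin n) (Fin n) ℝ))) := by
      have hrne : (r - 1) * ε = r * (μ * ε) := by
        rw [hr]; field_simp; ring
      have expand : r • (A + (μ * ε) • (1 : Matrix (Fin n) (Fin n) ℝ))
          = (r - 1) • B + A := by
        rw [hB, smul_add, smul_add, smul_smul, smul_smul, ← hrne, sub_smul, one_smul]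
        abel
      rw [expand, mul_add, Matrix.mul_smul, hBinv, sub_smul, one_smul]
      abel
    rw [key]
    have hdet : (A + (μ * ε) • (1 : Matrix (Fin n) (Fin n) ℝ)).det = 0 := by
      rw [← Matrix.exists_mulVec_eq_zero_iff]
      refine ⟨v, hv0, ?_⟩
      rw [Matrix.add_mulVec, hAv, Matrix.smul_mulVec, Matrix.one_mulVec, hμε]
      simp [← add_smul]
    rw [Matrix.det_mul, Matrix.det_smul, hdet]
    ring
  · rw [one_lt_div (by linarith)]; linarith
end
end

section
/- Consider the constrained minimization min f(x) over {x ∈ ℝⁿ : G(x) = 0, F(x) ≤ 0}, with f : ℝⁿ → ℝ, G : ℝⁿ → ℝˡ, F : ℝⁿ → ℝᵐ all twice continuously differentiable. Let z = (x, s, ν, λ) with slack s ∈ ℝᵐ satisfy g(z,0) = 0 with λ ≥ 0 and s ≥ 0. If the LICQ and strict complementarity hold at z, and the inertia of H_zz f(z) equals (n+m, l+m, 0), then x is a local minimum of the constrained problem, i.e., there is δ > 0 such that f(x) ≤ f(x̃) for every x̃ with G(x̃)=0, F(x̃) ≤ 0 and ‖x̃ − x‖ < δ. -/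
open Filter Topology Matrix

noncomputable section

/-- The real symmetric matrix `A` has inertia `t = (n₊, n₋, n₀)`: the numbers of positive,
negative, and zero eigenvalues counted with multiplicity. -/
def HasInertia {ι : Type*} [Fintype ι] [DecidableEq ι] (A : Matrix ι ι ℝ)
    (t : ℕ × ℕ × ℕ) : Prop :=
  ∃ hA : A.IsHermitian,
    Nat.card {i // 0 < hA.eigenvalues i} = t.1 ∧
    Nat.card {i // hA.eigenvalues i < 0} = t.2.1 ∧
    Nat.card {i // hA.eigenvalues i = 0} = t.2.2

variable {n l m : ℕ}

/-- The Lagrangian `L(z) = f(x) + ν'G(x) + λ'(F(x)+s)`, as a function of `x`. -/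
def LagrangianMin (f : EuclideanSpace ℝ (Fin n) → ℝ) (G : EuclideanSpace ℝ (Fin n) → Fin l → ℝ)
    (F : EuclideanSpace ℝ (Fin n) → Fin m → ℝ) (s : Fin m → ℝ) (ν : Fin l → ℝ)
    (lam : Fin m → ℝ) : EuclideanSpace ℝ (Fin n) → ℝ :=
  fun x => f x + (∑ j, ν j * G x j) + ∑ i, lam i * (F x i + s i)

/-- The matrix `H_zz f(z)` of the second-order conditions for constrained minimization. -/
def HzzMin (f : EuclideanSpace ℝ (Fin n) → ℝ) (G : EuclideanSpace ℝ (Fin n) → Fin l → ℝ)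
    (F : EuclideanSpace ℝ (Fin n) → Fin m → ℝ) (x : EuclideanSpace ℝ (Fin n)) (s : Fin m → ℝ)
    (ν : Fin l → ℝ) (lam : Fin m → ℝ) :
    Matrix ((Fin n ⊕ Fin m) ⊕ (Fin l ⊕ Fin m)) ((Fin n ⊕ Fin m) ⊕ (Fin l ⊕ Fin m)) ℝ :=
  Matrix.fromBlocks
    (Matrix.fromBlocks (hessian (LagrangianMin f G F s ν lam) x) 0 0 (Matrix.diagonal lam))
    (Matrix.fromBlocks (Matrix.of fun i j => pd (fun x' => G x' j) x i)
      (Matrix.of fun i j => pd (fun x' => F x' j) x i) 0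
      (Matrix.diagonal fun i => Real.sqrt (s i)))
    (Matrix.fromBlocks (Matrix.of fun i j => pd (fun x' => G x' j) x i)
      (Matrix.of fun i j => pd (fun x' => F x' j) x i) 0
      (Matrix.diagonal fun i => Real.sqrt (s i)))ᵀ
    0

lemma pos_eigenspace_exists {ι : Type*} [Fintype ι] [DecidableEq ι]
    (M : Matrix ι ι ℝ) (hA : M.IsHermitian) :
    ∃ P : Submodule ℝ (ι → ℝ),
      Module.finrank ℝ P = Nat.card {i // 0 < hA.eigenvalues i} ∧
      ∀ v ∈ P, v ≠ 0 → 0 < v ⬝ᵥ M *ᵥ v := by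
  classical
  set U : Matrix ι ι ℝ := (hA.eigenvectorUnitary : Matrix ι ι ℝ) with hU
  have hUU : star U * U = 1 := Unitary.coe_star_mul_self hA.eigenvectorUnitary
  let ext : ({i // 0 < hA.eigenvalues i} → ℝ) →ₗ[ℝ] (ι → ℝ) :=
    Function.ExtendByZero.linearMap ℝ Subtype.val
  let T : ({i // 0 < hA.eigenvalues i} → ℝ) →ₗ[ℝ] (ι → ℝ) := U.mulVecLin ∘ₗ ext
  have hext_apply : ∀ c i, ext c i = if h : 0 < hA.eigenvalues i then c ⟨i, h⟩ else 0 := by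
    intro c i
    by_cases h : 0 < hA.eigenvalues i
    · rw [dif_pos h]
      exact Subtype.val_injective.extend_apply c 0 ⟨i, h⟩
    · simp only [ext, Function.ExtendByZero.linearMap, h, dif_neg, not_false_iff,
        LinearMap.coe_mk, AddHom.coe_mk]
      show Function.extend Subtype.val c 0 i = 0
      rw [Function.extend_apply']
      · rfl
      · rintro ⟨⟨j, hj⟩, rfl⟩
        exact h hj
  have hTinj : Function.Injective T := by
    intro c c' hcc
    have h2 : star U *ᵥ (U *ᵥ ext c) = star U *ᵥ (U *ᵥ ext c') := by
      simpa [T, mulVecLin] using congrArg (fun z => star U *ᵥ z) hcc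
    rw [mulVec_mulVec, mulVec_mulVec, hUU, one_mulVec, one_mulVec] at h2
    funext i
    have := congrFun h2 i.1
    rwa [hext_apply, hext_apply, dif_pos i.2, dif_pos i.2, Subtype.coe_eta] at this
  refine ⟨LinearMap.range T, ?_, ?_⟩
  · rw [LinearMap.finrank_range_of_inj hTinj, Module.finrank_fintype_fun_eq_card,
      Nat.card_eq_fintype_card]
  · rintro v ⟨c, rfl⟩ hv0
    set e : ι → ℝ := ext c with he
    have hTc : T c = U *ᵥ e := rfl
    have he0 : e ≠ 0 := by
      intro h
      apply hv0
      rw [hTc, h, mulVec_zero]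
    have hsupp : ∀ i, e i ≠ 0 → 0 < hA.eigenvalues i := by
      intro i hi
      by_contra h
      exact hi (by rw [he, hext_apply, dif_neg h])
    have hform : (T c) ⬝ᵥ M *ᵥ (T c) = ∑ i, hA.eigenvalues i * (e i * e i) := by
      rw [hTc]
      conv_lhs => rw [hA.spectral_theorem, Unitary.conjStarAlgAut_apply, ← hU]
      rw [mulVec_mulVec, mul_assoc (U * _), mul_assoc, hUU, mul_one,
        ← mulVec_mulVec, dotProduct_mulVec]
      have hvm : (U *ᵥ e) ᵥ* U = (star U * U) *ᵥ e := by
        rw [star_eq_conjTranspose, conjTranspose_eq_transpose_of_trivial,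
          ← mulVec_mulVec, mulVec_transpose]
      rw [hvm, hUU, one_mulVec]
      simp [dotProduct, mulVec_diagonal, mul_comm, mul_left_comm]
    rw [hform]
    obtain ⟨i0, hi0⟩ := Function.ne_iff.mp he0
    apply Finset.sum_pos'
    · intro i _
      rcases eq_or_ne (e i) 0 with h | h
      · simp [h]
      · exact le_of_lt (mul_pos (hsupp i h) (mul_self_pos.mpr h))
    · exact ⟨i0, Finset.mem_univ i0, mul_pos (hsupp i0 hi0) (mul_self_pos.mpr hi0)⟩

lemma pos_card_add_nonpos_dim_le {ι : Type*} [Fintype ι] [DecidableEq ι]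
    (M : Matrix ι ι ℝ) (hA : M.IsHermitian) (W : Submodule ℝ (ι → ℝ))
    (hW : ∀ v ∈ W, v ⬝ᵥ M *ᵥ v ≤ 0) :
    Nat.card {i // 0 < hA.eigenvalues i} + Module.finrank ℝ W ≤ Fintype.card ι := by
  obtain ⟨P, hPrank, hPpos⟩ := pos_eigenspace_exists M hA
  by_contra hlt
  push_neg at hlt
  have h1 := Submodule.finrank_sup_add_finrank_inf_eq P W
  have h2 : Module.finrank ℝ (P ⊔ W : Submodule ℝ (ι → ℝ)) ≤ Fintype.card ι := by
    refine le_trans (Submodule.finrank_le _) ?_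
    rw [Module.finrank_fintype_fun_eq_card]
  have h3 : 0 < Module.finrank ℝ (P ⊓ W : Submodule ℝ (ι → ℝ)) := by omega
  obtain ⟨⟨v, hvmem⟩, hvne⟩ := Module.finrank_pos_iff_exists_ne_zero.mp h3
  rw [ne_eq, Submodule.mk_eq_zero] at hvne
  have := hPpos v (Submodule.mem_inf.mp hvmem).1 hvne
  have := hW v (Submodule.mem_inf.mp hvmem).2
  linarith

lemma stepA (f : EuclideanSpace ℝ (Fin n) → ℝ) (G : EuclideanSpace ℝ (Fin n) → Fin l → ℝ)
    (F : EuclideanSpace ℝ (Fin n) → Fin m → ℝ)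
    (x : EuclideanSpace ℝ (Fin n)) (s : Fin m → ℝ) (ν : Fin l → ℝ) (lam : Fin m → ℝ)
    (hcompl : ∀ i, lam i * s i = 0)
    (hFeq : ∀ i, F x i + s i = 0) (hs : ∀ i, 0 ≤ s i)
    (hinertia : HasInertia (HzzMin f G F x s ν lam) (n + m, l + m, 0)) :
    ∀ v : EuclideanSpace ℝ (Fin n), v ≠ 0 →
      (∀ j, fderiv ℝ (fun x' => G x' j) x v = 0) →
      (∀ i, F x i = 0 → fderiv ℝ (fun x' => F x' i) x v = 0) →
      0 < (v : Fin n → ℝ) ⬝ᵥ (hessian (LagrangianMin f G F s ν lam) x) *ᵥ (v : Fin n → ℝ) := by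
  classical
  intro v hv hcritG hcritF
  by_contra hneg
  push_neg at hneg
  obtain ⟨hA, hpos, -, -⟩ := hinertia
  set M := HzzMin f G F x s ν lam with hM
  -- notation for blocks
  set H := hessian (LagrangianMin f G F s ν lam) x with hH
  set Gmat := (Matrix.of fun i j => pd (fun x' => G x' j) x i : Matrix (Fin n) (Fin l) ℝ) with hGmat
  set Fmat := (Matrix.of fun i j => pd (fun x' => F x' j) x i : Matrix (Fin n) (Fin m) ℝ) with hFmat
  set C := Matrix.fromBlocks Gmat Fmat 0 (Matrix.diagonal fun i => Real.sqrt (s i)) with hC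
  set K := Matrix.fromBlocks H 0 0 (Matrix.diagonal lam) with hK
  have hMdef : M = Matrix.fromBlocks K C Cᵀ 0 := rfl
  -- the vector v as plain function, w, z₀
  set v' : Fin n → ℝ := (v : Fin n → ℝ) with hv'
  set w : Fin m → ℝ := fun i =>
    if s i = 0 then 0 else -(fderiv ℝ (fun x' => F x' i) x v) / Real.sqrt (s i) with hw
  set u0 : (Fin n ⊕ Fin m) → ℝ := Sum.elim v' w with hu0
  set z₀ : ((Fin n ⊕ Fin m) ⊕ (Fin l ⊕ Fin m)) → ℝ := Sum.elim u0 0 with hz₀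
  -- directional derivative identities
  have hsum : ∀ (g : EuclideanSpace ℝ (Fin n) → ℝ),
      ∑ k, pd g x k * v' k = fderiv ℝ g x v := by
    intro g
    have hvdec : v = ∑ i, v i • EuclideanSpace.single i 1 := by
      ext j
      rw [WithLp.ofLp_sum, Finset.sum_apply]
      simp [EuclideanSpace.single_apply]
    conv_rhs => rw [hvdec]
    rw [map_sum]
    refine (Finset.sum_congr rfl fun i _ => ?_).symm
    rw [(fderiv ℝ g x).map_smul]
    simp [pd, mul_comm, hv']
  -- the key fact : Cᵀ *ᵥ u0 = 0
  have hkey : Cᵀ *ᵥ u0 = 0 := by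
    funext j
    rw [hC, Matrix.fromBlocks_transpose, hu0, Matrix.fromBlocks_mulVec]
    simp only [Sum.elim_comp_inl, Sum.elim_comp_inr]
    cases j with
    | inl j =>
      simp only [Sum.elim_inl, Pi.zero_apply, Matrix.transpose_zero, Matrix.zero_mulVec,
        Pi.add_apply]
      have : Gmatᵀ *ᵥ v' = fun j => fderiv ℝ (fun x' => G x' j) x v := by
        funext j'
        show ∑ k, Gmat k j' * v' k = _
        rw [← hsum (fun x' => G x' j')]
        rfl
      have h0 : (fderiv ℝ (fun x' => G x' j) x) v = 0 := hcritG j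
      show (Gmatᵀ *ᵥ v') j + 0 = 0
      rw [congrFun this j, h0, add_zero]
    | inr i =>
      simp only [Sum.elim_inr, Pi.zero_apply, Pi.add_apply, Matrix.transpose_zero,
        Matrix.zero_mulVec, Matrix.diagonal_transpose]
      have h1 : (Fmatᵀ *ᵥ v') i = fderiv ℝ (fun x' => F x' i) x v := by
        show ∑ k, Fmat k i * v' k = _
        rw [← hsum (fun x' => F x' i)]
        rfl
      have h2 : (Matrix.diagonal (fun i => Real.sqrt (s i)) *ᵥ w) i = Real.sqrt (s i) * w i := by
        simp [Matrix.mulVec_diagonal]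
      show (Fmatᵀ *ᵥ v') i + (Matrix.diagonal (fun i => Real.sqrt (s i)) *ᵥ w) i = 0
      rw [h1, h2]
      show _ + Real.sqrt (s i) * (if s i = 0 then 0
        else -(fderiv ℝ (fun x' => F x' i) x v) / Real.sqrt (s i)) = 0
      rcases eq_or_ne (s i) 0 with hsi | hsi
      · have hFxi : F x i = 0 := by have := hFeq i; rw [hsi] at this; linarith
        simp [hsi, hcritF i hFxi]
      · have hsq : Real.sqrt (s i) ≠ 0 :=
          Real.sqrt_ne_zero'.mpr (lt_of_le_of_ne (hs i) (Ne.symm hsi))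
        simp only [if_neg hsi]
        field_simp
        ring
  -- build the nonpositive subspace W
  set Q : Submodule ℝ (((Fin n ⊕ Fin m) ⊕ (Fin l ⊕ Fin m)) → ℝ) :=
    LinearMap.ker (LinearMap.funLeft ℝ ℝ
    (Sum.inl : (Fin n ⊕ Fin m) → (Fin n ⊕ Fin m) ⊕ (Fin l ⊕ Fin m))) with hQdef
  have hQmem : ∀ q : ((Fin n ⊕ Fin m) ⊕ (Fin l ⊕ Fin m)) → ℝ, q ∈ Q ↔ ∀ i, q (Sum.inl i) = 0 := by
    intro q
    rw [hQdef, LinearMap.mem_ker]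
    constructor
    · intro hq i
      exact congrFun hq i
    · intro hq
      funext i
      exact hq i
  have hQrank : Module.finrank ℝ Q = l + m := by
    have hsurj : Function.Surjective (LinearMap.funLeft ℝ ℝ
        (Sum.inl : (Fin n ⊕ Fin m) → (Fin n ⊕ Fin m) ⊕ (Fin l ⊕ Fin m))) :=
      LinearMap.funLeft_surjective_of_injective ℝ ℝ _ Sum.inl_injective
    have hrn := LinearMap.finrank_range_add_finrank_ker (LinearMap.funLeft ℝ ℝ
        (Sum.inl : (Fin n ⊕ Fin m) → (Fin n ⊕ Fin m) ⊕ (Fin l ⊕ Fin m)))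
    rw [LinearMap.range_eq_top.mpr hsurj, finrank_top] at hrn
    simp only [Module.finrank_fintype_fun_eq_card, Fintype.card_sum, Fintype.card_fin] at hrn
    rw [← hQdef] at hrn
    omega
  have hex : ∃ i0, v' i0 ≠ 0 := by
    by_contra hno
    push_neg at hno
    exact hv (by ext i; exact hno i)
  obtain ⟨i0, hi0⟩ := hex
  have hz₀Q : z₀ ∉ Q := by
    intro hmem
    have := (hQmem z₀).1 hmem (Sum.inl i0)
    rw [hz₀] at this
    simp only [Sum.elim_inl] at this
    rw [hu0] at this
    simp only [Sum.elim_inl] at this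
    exact hi0 this
  set W : Submodule ℝ (((Fin n ⊕ Fin m) ⊕ (Fin l ⊕ Fin m)) → ℝ) := Submodule.span ℝ {z₀} ⊔ Q with hWdef
  have hz₀W : z₀ ∈ W := Submodule.mem_sup_left (Submodule.mem_span_singleton_self z₀)
  have hQltW : Q < W := SetLike.lt_iff_le_and_exists.2 ⟨le_sup_right, z₀, hz₀W, hz₀Q⟩
  have hWrank : l + m + 1 ≤ Module.finrank ℝ W := by
    have := Submodule.finrank_lt_finrank_of_lt hQltW
    omega
  -- the form is nonpositive on W
  have hMz₀ : M *ᵥ z₀ = Sum.elim (K *ᵥ u0) 0 := by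
    rw [hMdef, hz₀, Matrix.fromBlocks_mulVec]
    simp only [Sum.elim_comp_inl, Sum.elim_comp_inr, hkey, Matrix.mulVec_zero,
      Matrix.zero_mulVec, add_zero, zero_add]
  have hKu0 : u0 ⬝ᵥ (K *ᵥ u0) ≤ 0 := by
    rw [hK, hu0, Matrix.fromBlocks_mulVec]
    simp only [Sum.elim_comp_inl, Sum.elim_comp_inr, Matrix.zero_mulVec, add_zero, zero_add]
    rw [sumElim_dotProduct_sumElim]
    have hzero : w ⬝ᵥ (Matrix.diagonal lam *ᵥ w) = 0 := by
      unfold dotProduct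
      refine Finset.sum_eq_zero fun i _ => ?_
      rw [Matrix.mulVec_diagonal]
      rcases eq_or_ne (s i) 0 with hsi | hsi
      · have : w i = 0 := by rw [hw]; simp [hsi]
        rw [this]; ring
      · have : lam i = 0 := by
          have := hcompl i
          exact (mul_eq_zero.mp this).resolve_right hsi
        rw [this]; ring
    rw [hzero, add_zero]
    exact hneg
  have hform : ∀ u ∈ W, u ⬝ᵥ M *ᵥ u ≤ 0 := by
    intro u hu
    rw [hWdef, Submodule.mem_sup] at hu
    obtain ⟨p, hp, q, hq, rfl⟩ := hu
    rw [Submodule.mem_span_singleton] at hp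
    obtain ⟨t, rfl⟩ := hp
    set r : (Fin l ⊕ Fin m) → ℝ := q ∘ Sum.inr with hr
    have hqelim : q = Sum.elim (0 : (Fin n ⊕ Fin m) → ℝ) r := by
      funext j
      cases j with
      | inl i => exact (hQmem q).1 hq i
      | inr i => rfl
    have hMq : M *ᵥ q = Sum.elim (C *ᵥ r) 0 := by
      rw [hMdef, hqelim, Matrix.fromBlocks_mulVec]
      simp only [Sum.elim_comp_inl, Sum.elim_comp_inr, Matrix.mulVec_zero,
        Matrix.zero_mulVec, add_zero, zero_add]
    have hz0q : z₀ ⬝ᵥ M *ᵥ q = 0 := by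
      rw [hMq, hz₀, sumElim_dotProduct_sumElim]
      have : u0 ⬝ᵥ (C *ᵥ r) = 0 := by
        rw [Matrix.dotProduct_mulVec, ← Matrix.mulVec_transpose, hkey,
          zero_dotProduct]
      rw [this, zero_dotProduct, add_zero]
    have hqz0 : q ⬝ᵥ M *ᵥ z₀ = 0 := by
      rw [hMz₀, hqelim, sumElim_dotProduct_sumElim, zero_dotProduct,
        dotProduct_zero, add_zero]
    have hqq : q ⬝ᵥ M *ᵥ q = 0 := by
      rw [hMq, hqelim, sumElim_dotProduct_sumElim, zero_dotProduct,
        dotProduct_zero, add_zero]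
    have hz0z0 : z₀ ⬝ᵥ M *ᵥ z₀ ≤ 0 := by
      rw [hMz₀, hz₀, sumElim_dotProduct_sumElim, zero_dotProduct, add_zero]
      exact hKu0
    have hexpand : (t • z₀ + q) ⬝ᵥ M *ᵥ (t • z₀ + q)
        = t * t * (z₀ ⬝ᵥ M *ᵥ z₀) + t * (z₀ ⬝ᵥ M *ᵥ q) + t * (q ⬝ᵥ M *ᵥ z₀)
          + q ⬝ᵥ M *ᵥ q := by
      simp only [Matrix.mulVec_add, Matrix.mulVec_smul, add_dotProduct,
        smul_dotProduct, dotProduct_add, dotProduct_smul,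
        smul_eq_mul]
      ring
    rw [hexpand, hz0q, hqz0, hqq]
    have : t * t * (z₀ ⬝ᵥ M *ᵥ z₀) ≤ 0 := mul_nonpos_of_nonneg_of_nonpos (mul_self_nonneg t) hz0z0
    linarith
  have hbound := pos_card_add_nonpos_dim_le M hA W hform
  rw [show (Nat.card {i // 0 < hA.eigenvalues i}) = n + m from hpos] at hbound
  simp only [Fintype.card_sum, Fintype.card_fin] at hbound
  omega

section Helpers

variable {n : ℕ}

local notation "E" => EuclideanSpace ℝ (Fin n)

lemma euclid_decomp (v : E) : v = ∑ i, v i • EuclideanSpace.single i 1 := by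
  ext j
  rw [WithLp.ofLp_sum, Finset.sum_apply]
  simp [EuclideanSpace.single_apply]

lemma clm_apply_eq_sum (φ : E →L[ℝ] ℝ) (v : E) :
    φ v = ∑ i, v i * φ (EuclideanSpace.single i 1) := by
  conv_lhs => rw [euclid_decomp v]
  rw [map_sum]
  simp [smul_eq_mul]

lemma fderiv_eq_sum_pd (g : E → ℝ) (x : E) (v : E) :
    fderiv ℝ g x v = ∑ i, v i * pd g x i :=
  clm_apply_eq_sum (fderiv ℝ g x) v

lemma hessian_quadform (g : E → ℝ) (hg : ContDiff ℝ 2 g) (x v : E) :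
    (v : Fin n → ℝ) ⬝ᵥ (hessian g x) *ᵥ (v : Fin n → ℝ) =
      fderiv ℝ (fderiv ℝ g) x v v := by
  classical
  set B := fderiv ℝ (fderiv ℝ g) x with hB
  have hdiff : DifferentiableAt ℝ (fderiv ℝ g) x := by
    have h1 : ContDiff ℝ 1 (fderiv ℝ g) := hg.fderiv_right (le_refl _)
    exact (h1.differentiable (by norm_num)).differentiableAt
  have hentry : ∀ i j, hessian g x i j
      = B (EuclideanSpace.single i 1) (EuclideanSpace.single j 1) := by
    intro i j
    have hcomp := (ContinuousLinearMap.apply ℝ ℝ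
      (EuclideanSpace.single j 1 : E)).hasFDerivAt.comp x hdiff.hasFDerivAt
    show pd (fun y => pd g y j) x i = _
    unfold pd
    rw [show (fun y => fderiv ℝ g y (EuclideanSpace.single j 1 : E))
      = (⇑(ContinuousLinearMap.apply ℝ ℝ (EuclideanSpace.single j 1 : E)) ∘ fderiv ℝ g)
      from rfl, hcomp.fderiv]
    rfl
  have hBv1 : B v = ∑ i, v i • B (EuclideanSpace.single i 1) := by
    conv_lhs => rw [euclid_decomp v]
    rw [map_sum]
    refine Finset.sum_congr rfl fun i _ => ?_
    exact B.map_smul _ _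
  have hrhs : B v v = ∑ i, ∑ j, v i * (B (EuclideanSpace.single i 1)
      (EuclideanSpace.single j 1)) * v j := by
    rw [hBv1, ContinuousLinearMap.sum_apply]
    refine Finset.sum_congr rfl fun i _ => ?_
    rw [ContinuousLinearMap.smul_apply, smul_eq_mul,
      clm_apply_eq_sum (B (EuclideanSpace.single i 1)) v, Finset.mul_sum]
    refine Finset.sum_congr rfl fun j _ => ?_
    ring
  rw [hrhs]
  unfold dotProduct Matrix.mulVec
  refine Finset.sum_congr rfl fun i _ => ?_
  show v i * ∑ j, hessian g x i j * v j = _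
  rw [Finset.mul_sum]
  refine Finset.sum_congr rfl fun j _ => ?_
  rw [hentry]
  ring

lemma tendsto_dirderiv_nonpos {g : E → ℝ} {x : E} (hg : DifferentiableAt ℝ g x)
    {y : ℕ → E} (hyx : ∀ k, y k ≠ x) (hy : Tendsto y atTop (𝓝 x))
    {d : E} (hd : Tendsto (fun k => ‖y k - x‖⁻¹ • (y k - x)) atTop (𝓝 d))
    (hle : ∀ k, g (y k) ≤ g x) : fderiv ℝ g x d ≤ 0 := by
  set φ := fderiv ℝ g x with hφ
  have hlittle : (fun y' => g y' - g x - φ (y' - x)) =o[𝓝 x] fun y' => y' - x :=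
    hg.hasFDerivAt.isLittleO
  have hcomp : (fun k => g (y k) - g x - φ (y k - x)) =o[atTop] fun k => y k - x :=
    hlittle.comp_tendsto hy
  have hnorm : Tendsto (fun k => (g (y k) - g x - φ (y k - x)) / ‖y k - x‖) atTop (𝓝 0) := by
    have h2 := hcomp.norm_right
    refine (Asymptotics.isLittleO_iff_tendsto fun k hk => absurd hk ?_).mp h2
    simpa [sub_eq_zero] using hyx k
  have hratio : ∀ k, φ (‖y k - x‖⁻¹ • (y k - x))
      = (g (y k) - g x) / ‖y k - x‖ - (g (y k) - g x - φ (y k - x)) / ‖y k - x‖ := by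
    intro k
    have hne : ‖y k - x‖ ≠ 0 := by
      simpa [sub_eq_zero] using hyx k
    rw [φ.map_smul, smul_eq_mul, div_sub_div_same, sub_sub_cancel, inv_mul_eq_div]
  have hlim1 : Tendsto (fun k => φ (‖y k - x‖⁻¹ • (y k - x))) atTop (𝓝 (φ d)) :=
    (φ.continuous.tendsto d).comp hd
  have hlim2 : Tendsto (fun k => φ (‖y k - x‖⁻¹ • (y k - x))
      + (g (y k) - g x - φ (y k - x)) / ‖y k - x‖) atTop (𝓝 (φ d)) := by
    simpa using hlim1.add hnorm
  refine le_of_tendsto hlim2 (Eventually.of_forall fun k => ?_)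
  rw [hratio k]
  have hne : (0:ℝ) ≤ ‖y k - x‖ := norm_nonneg _
  have : (g (y k) - g x) / ‖y k - x‖ ≤ 0 :=
    div_nonpos_iff.mpr (Or.inr ⟨by linarith [hle k], hne⟩)
  linarith

lemma exists_second_deriv_neg {g : E → ℝ} (hg : ContDiff ℝ 2 g) {x h : E}
    (hder : fderiv ℝ g x = 0) (hlt : g (x + h) < g x) :
    ∃ θ ∈ Set.Ioo (0:ℝ) 1, fderiv ℝ (fderiv ℝ g) (x + θ • h) h h < 0 := by
  have hgdiff : Differentiable ℝ g := hg.differentiable (by norm_num)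
  have hg1 : ContDiff ℝ 1 (fderiv ℝ g) := hg.fderiv_right (le_refl _)
  have hg1diff : Differentiable ℝ (fderiv ℝ g) := hg1.differentiable (by norm_num)
  -- the line
  have hline : ∀ t : ℝ, HasDerivAt (fun t : ℝ => x + t • h) h t := by
    intro t
    simpa using ((hasDerivAt_id t).smul_const h).const_add x
  set φ : ℝ → ℝ := fun t => g (x + t • h) with hφ
  set ψ : ℝ → ℝ := fun t => fderiv ℝ g (x + t • h) h with hψ
  have hφd : ∀ t : ℝ, HasDerivAt φ (ψ t) t := by
    intro t
    have := ((hgdiff (x + t • h)).hasFDerivAt).comp_hasDerivAt t (hline t)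
    exact this
  have hψd : ∀ t : ℝ, HasDerivAt ψ (fderiv ℝ (fderiv ℝ g) (x + t • h) h h) t := by
    intro t
    have h1 : HasFDerivAt (fun y => fderiv ℝ g y h)
        ((ContinuousLinearMap.apply ℝ ℝ h).comp (fderiv ℝ (fderiv ℝ g) (x + t • h)))
        (x + t • h) :=
      (ContinuousLinearMap.apply ℝ ℝ h).hasFDerivAt.comp _ (hg1diff _).hasFDerivAt
    have := h1.comp_hasDerivAt t (hline t)
    exact this
  -- first mean value on [0,1]
  have h01 : (0:ℝ) < 1 := one_pos
  obtain ⟨c, hc, hceq⟩ := exists_hasDerivAt_eq_slope φ ψ h01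
    (fun t _ => (hφd t).continuousAt.continuousWithinAt)
    (fun t _ => hφd t)
  have hψc : ψ c < 0 := by
    rw [hceq]
    have h10 : φ 1 < φ 0 := by simpa [φ] using hlt
    apply div_neg_of_neg_of_pos
    · linarith
    · norm_num
  -- second mean value on [0,c]
  obtain ⟨θ, hθ, hθeq⟩ := exists_hasDerivAt_eq_slope ψ
    (fun t => fderiv ℝ (fderiv ℝ g) (x + t • h) h h) hc.1
    (fun t _ => (hψd t).continuousAt.continuousWithinAt)
    (fun t _ => hψd t)
  refine ⟨θ, ⟨hθ.1, hθ.2.trans hc.2⟩, ?_⟩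
  rw [hθeq]
  have hψ0 : ψ 0 = 0 := by simp [ψ, hder]
  rw [hψ0]
  apply div_neg_of_neg_of_pos
  · simpa using hψc
  · simpa using hc.1

end Helpers

set_option maxHeartbeats 2000000 in
/-- **Second order sufficient conditions for constrained minimization**:
if `g(z,0) = 0` with `λ, s ≥ 0`, the LICQ and strict complementarity hold at `z`, and
`inertia(H_zz f(z)) = (n+m, l+m, 0)`, then `x` is a local minimum of the constrained problem. -/
theorem secondOrder_sufficient_constrained_min
    (f : EuclideanSpace ℝ (Fin n) → ℝ) (G : EuclideanSpace ℝ (Fin n) → Fin l → ℝ)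
    (F : EuclideanSpace ℝ (Fin n) → Fin m → ℝ)
    (hf : ContDiff ℝ 2 f) (hG : ContDiff ℝ 2 G) (hF : ContDiff ℝ 2 F)
    (x : EuclideanSpace ℝ (Fin n)) (s : Fin m → ℝ) (ν : Fin l → ℝ) (lam : Fin m → ℝ)
    -- g(z,0) = 0 :
    (hgrad : gradient (LagrangianMin f G F s ν lam) x = 0)
    (hcompl : ∀ i, lam i * s i = 0)
    (hGeq : ∀ j, G x j = 0)
    (hFeq : ∀ i, F x i + s i = 0)
    (hlam : ∀ i, 0 ≤ lam i) (hs : ∀ i, 0 ≤ s i)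
    -- LICQ :
    (hLICQ : LinearIndependent ℝ
      (Sum.elim (fun j : Fin l => gradient (fun x' => G x' j) x)
        (fun i : {i : Fin m // F x i = 0} => gradient (fun x' => F x' i.1) x)))
    -- strict complementarity :
    (hstrict : ∀ i, F x i = 0 → 0 < lam i)
    -- inertia condition :
    (hinertia : HasInertia (HzzMin f G F x s ν lam) (n + m, l + m, 0)) :
    ∃ δ > 0, ∀ x' : EuclideanSpace ℝ (Fin n),
      (∀ j, G x' j = 0) → (∀ i, F x' i ≤ 0) → ‖x' - x‖ < δ → f x ≤ f x' := by
  classical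
  set L := LagrangianMin f G F s ν lam with hLdef
  have hGj : ∀ j, ContDiff ℝ 2 (fun x' => G x' j) := fun j => (contDiff_pi.mp hG j)
  have hFi : ∀ i, ContDiff ℝ 2 (fun x' => F x' i) := fun i => (contDiff_pi.mp hF i)
  have hL : ContDiff ℝ 2 L := by
    rw [hLdef]
    unfold LagrangianMin
    refine (hf.add ?_).add ?_
    · exact ContDiff.sum fun j _ => contDiff_const.mul (hGj j)
    · exact ContDiff.sum fun i _ => contDiff_const.mul ((hFi i).add contDiff_const)
  have hfderivL0 : fderiv ℝ L x = 0 := by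
    have h := congrArg (InnerProductSpace.toDual ℝ (EuclideanSpace ℝ (Fin n))) hgrad
    rw [map_zero] at h
    rw [← h, gradient, LinearIsometryEquiv.apply_symm_apply]
  have hLx : L x = f x := by
    rw [hLdef]
    unfold LagrangianMin
    have h1 : ∀ j, ν j * G x j = 0 := fun j => by rw [hGeq j, mul_zero]
    have h2 : ∀ i, lam i * (F x i + s i) = 0 := fun i => by rw [hFeq i, mul_zero]
    rw [Finset.sum_congr rfl fun j _ => h1 j, Finset.sum_congr rfl fun i _ => h2 i]
    simp
  have hLle : ∀ x', (∀ j, G x' j = 0) → (∀ i, F x' i ≤ 0) → L x' ≤ f x' := by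
    intro x' hG' hF'
    rw [hLdef]
    unfold LagrangianMin
    have h1 : ∑ j, ν j * G x' j = 0 :=
      Finset.sum_eq_zero fun j _ => by rw [hG' j, mul_zero]
    have h2 : ∑ i, lam i * (F x' i + s i) ≤ 0 := by
      refine Finset.sum_nonpos fun i _ => ?_
      have : lam i * (F x' i + s i) = lam i * F x' i + lam i * s i := by ring
      rw [this, hcompl i, add_zero]
      exact mul_nonpos_of_nonneg_of_nonpos (hlam i) (hF' i)
    linarith
  by_contra hcon
  push_neg at hcon
  have hseq : ∀ k : ℕ, ∃ x', (∀ j, G x' j = 0) ∧ (∀ i, F x' i ≤ 0) ∧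
      ‖x' - x‖ < 1 / (k + 1 : ℝ) ∧ f x' < f x := by
    intro k
    obtain ⟨x', h1, h2, h3, h4⟩ := hcon (1 / (k + 1 : ℝ)) (by positivity)
    exact ⟨x', h1, h2, h3, h4⟩
  choose y hGy hFy hnear hlt using hseq
  have hyne : ∀ k, y k ≠ x := by
    intro k h
    have := hlt k
    rw [h] at this
    exact lt_irrefl _ this
  have hnorm_ne : ∀ k, ‖y k - x‖ ≠ 0 :=
    fun k => norm_ne_zero_iff.mpr (sub_ne_zero.mpr (hyne k))
  have htends0 : Tendsto (fun k : ℕ => ‖y k - x‖) atTop (𝓝 0) := by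
    refine squeeze_zero (fun k => norm_nonneg _) (fun k => le_of_lt (hnear k)) ?_
    exact tendsto_one_div_add_atTop_nhds_zero_nat
  have hyx : Tendsto y atTop (𝓝 x) := by
    rw [tendsto_iff_dist_tendsto_zero]
    simpa [dist_eq_norm] using htends0
  set d : ℕ → EuclideanSpace ℝ (Fin n) := fun k => ‖y k - x‖⁻¹ • (y k - x) with hd
  have hdsphere : ∀ k, d k ∈ Metric.sphere (0 : EuclideanSpace ℝ (Fin n)) 1 := by
    intro k
    rw [Metric.mem_sphere, dist_zero_right, hd]
    rw [norm_smul, norm_inv, norm_norm]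
    exact inv_mul_cancel₀ (hnorm_ne k)
  obtain ⟨dinf, hdlmem, ψ, hψmono, hdconv⟩ :=
    (isCompact_sphere (0 : EuclideanSpace ℝ (Fin n)) 1).tendsto_subseq hdsphere
  have hdinfnorm : ‖dinf‖ = 1 := by
    have := hdlmem
    rwa [Metric.mem_sphere, dist_zero_right] at this
  have hdinfne : dinf ≠ 0 := by
    intro h
    rw [h, norm_zero] at hdinfnorm
    norm_num at hdinfnorm
  set z : ℕ → EuclideanSpace ℝ (Fin n) := y ∘ ψ with hz
  have hzx : Tendsto z atTop (𝓝 x) := hyx.comp hψmono.tendsto_atTop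
  have hzne : ∀ k, z k ≠ x := fun k => hyne (ψ k)
  have hdz : ∀ k, ‖z k - x‖⁻¹ • (z k - x) = d (ψ k) := fun k => rfl
  have hdconv' : Tendsto (fun k => ‖z k - x‖⁻¹ • (z k - x)) atTop (𝓝 dinf) := hdconv
  -- directional derivatives at the limit
  have hGd : ∀ j, fderiv ℝ (fun x' => G x' j) x dinf = 0 := by
    intro j
    have hdiff : DifferentiableAt ℝ (fun x' => G x' j) x :=
      ((hGj j).differentiable (by norm_num)).differentiableAt
    have h1 : fderiv ℝ (fun x' => G x' j) x dinf ≤ 0 :=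
      tendsto_dirderiv_nonpos hdiff hzne hzx hdconv'
        (fun k => by show G (y (ψ k)) j ≤ G x j; rw [hGy (ψ k) j, hGeq j])
    have hdiffneg : DifferentiableAt ℝ (fun x' => -G x' j) x := hdiff.neg
    have h2 : fderiv ℝ (fun x' => -G x' j) x dinf ≤ 0 :=
      tendsto_dirderiv_nonpos hdiffneg hzne hzx hdconv'
        (fun k => by show -G (y (ψ k)) j ≤ -G x j; rw [hGy (ψ k) j, hGeq j])
    have h3 : fderiv ℝ (fun x' => -G x' j) x = -fderiv ℝ (fun x' => G x' j) x := by
      have : (fun x' => -G x' j) = fun x' => -(fun x'' => G x'' j) x' := rfl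
      rw [this]; exact fderiv_fun_neg
    rw [h3] at h2
    simp only [ContinuousLinearMap.neg_apply, neg_nonpos] at h2
    linarith
  have hFd : ∀ i, F x i = 0 → fderiv ℝ (fun x' => F x' i) x dinf ≤ 0 := by
    intro i hFxi
    have hdiff : DifferentiableAt ℝ (fun x' => F x' i) x :=
      ((hFi i).differentiable (by norm_num)).differentiableAt
    exact tendsto_dirderiv_nonpos hdiff hzne hzx hdconv'
      (fun k => by rw [hFxi]; exact hFy (ψ k) i)
  have hfd : fderiv ℝ f x dinf ≤ 0 := by
    have hdiff : DifferentiableAt ℝ f x := (hf.differentiable (by norm_num)).differentiableAt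
    exact tendsto_dirderiv_nonpos hdiff hzne hzx hdconv'
      (fun k => le_of_lt (hlt (ψ k)))
  -- fderiv of L as a sum
  have hLsum : (0 : EuclideanSpace ℝ (Fin n) →L[ℝ] ℝ)
      = fderiv ℝ f x + (∑ j, ν j • fderiv ℝ (fun x' => G x' j) x)
        + ∑ i, lam i • fderiv ℝ (fun x' => F x' i) x := by
    have h1 : HasFDerivAt L (fderiv ℝ f x + (∑ j, ν j • fderiv ℝ (fun x' => G x' j) x)
        + ∑ i, lam i • fderiv ℝ (fun x' => F x' i) x) x := by
      rw [hLdef]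
      unfold LagrangianMin
      refine HasFDerivAt.add (HasFDerivAt.add ?_ ?_) ?_
      · exact (hf.differentiable (by norm_num)).differentiableAt.hasFDerivAt
      · refine HasFDerivAt.fun_sum fun j _ => ?_
        exact (((hGj j).differentiable (by norm_num)).differentiableAt.hasFDerivAt).const_mul (ν j)
      · refine HasFDerivAt.fun_sum fun i _ => ?_
        have hd1 : HasFDerivAt (fun x' => F x' i + s i)
            (fderiv ℝ (fun x' => F x' i) x) x :=
          (((hFi i).differentiable (by norm_num)).differentiableAt.hasFDerivAt).add_const (s i)
        exact hd1.const_mul (lam i)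
    rw [← h1.fderiv, hfderivL0]
  have happly := congrFun (congrArg (fun (φ : EuclideanSpace ℝ (Fin n) →L[ℝ] ℝ) => (φ : EuclideanSpace ℝ (Fin n) → ℝ)) hLsum) dinf
  simp only [ContinuousLinearMap.zero_apply, ContinuousLinearMap.add_apply,
    ContinuousLinearMap.coe_sum', Finset.sum_apply, ContinuousLinearMap.coe_smul',
    Pi.smul_apply, smul_eq_mul] at happly
  have hGzero : ∑ j, ν j * fderiv ℝ (fun x' => G x' j) x dinf = 0 :=
    Finset.sum_eq_zero fun j _ => by rw [hGd j, mul_zero]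
  rw [hGzero] at happly
  -- each lam i * c i is nonpositive, and the sum is -fderiv f x dinf ≥ 0
  have hterm : ∀ i ∈ Finset.univ, lam i * fderiv ℝ (fun x' => F x' i) x dinf ≤ 0 := by
    intro i _
    rcases eq_or_ne (F x i) 0 with hFxi | hFxi
    · exact mul_nonpos_of_nonneg_of_nonpos (hlam i) (hFd i hFxi)
    · have hsi : s i ≠ 0 := fun h => hFxi (by have := hFeq i; rw [h] at this; linarith)
      have : lam i = 0 := (mul_eq_zero.mp (hcompl i)).resolve_right hsi
      rw [this, zero_mul]
  have hsumzero : ∑ i, lam i * fderiv ℝ (fun x' => F x' i) x dinf = 0 := by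
    have hub : ∑ i, lam i * fderiv ℝ (fun x' => F x' i) x dinf ≤ 0 :=
      Finset.sum_nonpos fun i _ => hterm i (Finset.mem_univ i)
    linarith
  have heach := (Finset.sum_eq_zero_iff_of_nonpos hterm).mp hsumzero
  have hFcrit : ∀ i, F x i = 0 → fderiv ℝ (fun x' => F x' i) x dinf = 0 := by
    intro i hFxi
    have h0 : lam i * fderiv ℝ (fun x' => F x' i) x dinf = 0 := heach i (Finset.mem_univ i)
    have hlpos : 0 < lam i := hstrict i hFxi
    rcases mul_eq_zero.mp h0 with h | h
    · exact absurd h (ne_of_gt hlpos)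
    · exact h
  -- step A : positive definiteness on the critical subspace
  have hposdef := stepA f G F x s ν lam hcompl hFeq hs hinertia dinf hdinfne hGd hFcrit
  rw [hessian_quadform L hL x dinf] at hposdef
  -- Taylor / mean value argument gives the opposite inequality
  have hsecond : ∀ k : ℕ, ∃ θ ∈ Set.Ioo (0:ℝ) 1,
      fderiv ℝ (fderiv ℝ L) (x + θ • (z k - x)) (z k - x) (z k - x) < 0 := by
    intro k
    apply exists_second_deriv_neg hL hfderivL0
    have h1 : x + (z k - x) = z k := by abel
    rw [h1, hLx]
    calc L (z k) ≤ f (z k) := hLle (z k) (hGy (ψ k)) (hFy (ψ k))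
    _ < f x := hlt (ψ k)
  choose θ hθmem hθneg using hsecond
  set ξ : ℕ → EuclideanSpace ℝ (Fin n) := fun k => x + θ k • (z k - x) with hξdef
  have hξx : Tendsto ξ atTop (𝓝 x) := by
    rw [tendsto_iff_dist_tendsto_zero]
    have hbound : ∀ k, dist (ξ k) x ≤ ‖z k - x‖ := by
      intro k
      rw [hξdef]
      simp only [dist_eq_norm, add_sub_cancel_left]
      rw [norm_smul, Real.norm_eq_abs, abs_of_pos (hθmem k).1]
      exact mul_le_of_le_one_left (norm_nonneg _) (le_of_lt (hθmem k).2)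
    refine squeeze_zero (fun k => dist_nonneg) hbound ?_
    have h0 : Tendsto (fun k => z k - x) atTop (𝓝 (x - x)) :=
      hzx.sub tendsto_const_nhds
    rw [sub_self] at h0
    simpa using h0.norm
  have hquadneg : ∀ k, fderiv ℝ (fderiv ℝ L) (ξ k) (d (ψ k)) (d (ψ k)) < 0 := by
    intro k
    have hsm : z k - x = ‖z k - x‖ • d (ψ k) := by
      show z k - x = ‖z k - x‖ • (‖y (ψ k) - x‖⁻¹ • (y (ψ k) - x))
      rw [smul_smul]
      show y (ψ k) - x = (‖y (ψ k) - x‖ * ‖y (ψ k) - x‖⁻¹) • (y (ψ k) - x)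
      rw [mul_inv_cancel₀ (hnorm_ne (ψ k)), one_smul]
    have hexp : fderiv ℝ (fderiv ℝ L) (ξ k) (z k - x) (z k - x)
        = (‖z k - x‖ * ‖z k - x‖) * fderiv ℝ (fderiv ℝ L) (ξ k) (d (ψ k)) (d (ψ k)) := by
      conv_lhs => rw [hsm]
      rw [(fderiv ℝ (fderiv ℝ L) (ξ k)).map_smul]
      simp only [ContinuousLinearMap.smul_apply, smul_eq_mul]
      rw [(fderiv ℝ (fderiv ℝ L) (ξ k) (d (ψ k))).map_smul]
      simp only [smul_eq_mul]
      ring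
    have hneg := hθneg k
    rw [hexp] at hneg
    by_contra hge
    push_neg at hge
    have hnn : 0 ≤ (‖z k - x‖ * ‖z k - x‖) * fderiv ℝ (fderiv ℝ L) (ξ k) (d (ψ k)) (d (ψ k)) :=
      mul_nonneg (mul_self_nonneg _) hge
    linarith
  -- continuity of the second derivative and passage to the limit
  have hcont2 : Continuous (fderiv ℝ (fderiv ℝ L)) := by
    have h1 : ContDiff ℝ 1 (fderiv ℝ L) := hL.fderiv_right (le_refl _)
    exact h1.continuous_fderiv (by norm_num)
  have hcontB : Continuous (fun p : (EuclideanSpace ℝ (Fin n)) × (EuclideanSpace ℝ (Fin n)) =>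
      fderiv ℝ (fderiv ℝ L) p.1 p.2 p.2) := by
    have c1 : Continuous (fun p : (EuclideanSpace ℝ (Fin n)) × (EuclideanSpace ℝ (Fin n)) =>
        fderiv ℝ (fderiv ℝ L) p.1 p.2) :=
      isBoundedBilinearMap_apply.continuous.comp ((hcont2.comp continuous_fst).prodMk continuous_snd)
    exact isBoundedBilinearMap_apply.continuous.comp (c1.prodMk continuous_snd)
  have hlim : Tendsto (fun k => fderiv ℝ (fderiv ℝ L) (ξ k) (d (ψ k)) (d (ψ k))) atTop
      (𝓝 (fderiv ℝ (fderiv ℝ L) x dinf dinf)) := by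
    have hpair : Tendsto (fun k => (ξ k, d (ψ k))) atTop (𝓝 (x, dinf)) :=
      hξx.prodMk_nhds hdconv
    exact (hcontB.tendsto (x, dinf)).comp hpair
  have hfinal : fderiv ℝ (fderiv ℝ L) x dinf dinf ≤ 0 :=
    le_of_tendsto hlim (Eventually.of_forall fun k => le_of_lt (hquadneg k))
  linarith
end
end

section
/- Let f : ℝ^{n_x} × ℝ^{n_y} → ℝ be twice continuously differentiable and let (x*, y*) satisfy ∇ₓf(x*, y*) = 0 and ∇_yf(x*, y*) = 0. If the inertia of ∇_{yy}f(x*, y*) equals (0, n_y, 0) (i.e., ∇_{yy}f(x*, y*) is negative definite) and the inertia of the full Hessian ∇_{zz}f(x*, y*) = [[∇ₓₓf, ∇ₓᵧf], [∇ᵧₓf, ∇ᵧᵧf]](x*, y*) equals (n_x, n_y, 0), then (x*, y*) is a local minmax of min_x max_y f(x, y). -/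
open Filter Topology Matrix

noncomputable section

variable {nx ny : ℕ}

/-- Partial derivative of `f(x,y)` in the `i`-th `x`-coordinate. -/
def pdX (f : EuclideanSpace ℝ (Fin nx) → EuclideanSpace ℝ (Fin ny) → ℝ)
    (x : EuclideanSpace ℝ (Fin nx)) (y : EuclideanSpace ℝ (Fin ny)) (i : Fin nx) : ℝ :=
  fderiv ℝ (fun x' => f x' y) x (EuclideanSpace.single i 1)

/-- Partial derivative of `f(x,y)` in the `j`-th `y`-coordinate. -/
def pdY (f : EuclideanSpace ℝ (Fin nx) → EuclideanSpace ℝ (Fin ny) → ℝ)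
    (x : EuclideanSpace ℝ (Fin nx)) (y : EuclideanSpace ℝ (Fin ny)) (j : Fin ny) : ℝ :=
  fderiv ℝ (fun y' => f x y') y (EuclideanSpace.single j 1)

/-- The block `∇ₓₓf(x,y)`. -/
def Hxx (f : EuclideanSpace ℝ (Fin nx) → EuclideanSpace ℝ (Fin ny) → ℝ)
    (x : EuclideanSpace ℝ (Fin nx)) (y : EuclideanSpace ℝ (Fin ny)) :
    Matrix (Fin nx) (Fin nx) ℝ :=
  Matrix.of fun i j => fderiv ℝ (fun x' => pdX f x' y j) x (EuclideanSpace.single i 1)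

/-- The block `∇ₓᵧf(x,y)`. -/
def Hxy (f : EuclideanSpace ℝ (Fin nx) → EuclideanSpace ℝ (Fin ny) → ℝ)
    (x : EuclideanSpace ℝ (Fin nx)) (y : EuclideanSpace ℝ (Fin ny)) :
    Matrix (Fin nx) (Fin ny) ℝ :=
  Matrix.of fun i j => fderiv ℝ (fun x' => pdY f x' y j) x (EuclideanSpace.single i 1)

/-- The block `∇ᵧₓf(x,y)`. -/
def Hyx (f : EuclideanSpace ℝ (Fin nx) → EuclideanSpace ℝ (Fin ny) → ℝ)
    (x : EuclideanSpace ℝ (Fin nx)) (y : EuclideanSpace ℝ (Fin ny)) :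
    Matrix (Fin ny) (Fin nx) ℝ :=
  Matrix.of fun j i => fderiv ℝ (fun y' => pdX f x y' i) y (EuclideanSpace.single j 1)

/-- The block `∇ᵧᵧf(x,y)`. -/
def Hyy (f : EuclideanSpace ℝ (Fin nx) → EuclideanSpace ℝ (Fin ny) → ℝ)
    (x : EuclideanSpace ℝ (Fin nx)) (y : EuclideanSpace ℝ (Fin ny)) :
    Matrix (Fin ny) (Fin ny) ℝ :=
  Matrix.of fun i j => fderiv ℝ (fun y' => pdY f x y' j) y (EuclideanSpace.single i 1)

/-- The full Hessian `∇_zz f(x,y) = [[∇ₓₓf, ∇ₓᵧf],[∇ᵧₓf, ∇ᵧᵧf]]`. -/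
def Hzz (f : EuclideanSpace ℝ (Fin nx) → EuclideanSpace ℝ (Fin ny) → ℝ)
    (x : EuclideanSpace ℝ (Fin nx)) (y : EuclideanSpace ℝ (Fin ny)) :
    Matrix (Fin nx ⊕ Fin ny) (Fin nx ⊕ Fin ny) ℝ :=
  Matrix.fromBlocks (Hxx f x y) (Hxy f x y) (Hyx f x y) (Hyy f x y)

/-- `(xs, ys)` is a local minmax point of `min_x max_y f(x,y)`. -/
def IsLocalMinMax (f : EuclideanSpace ℝ (Fin nx) → EuclideanSpace ℝ (Fin ny) → ℝ)
    (xs : EuclideanSpace ℝ (Fin nx)) (ys : EuclideanSpace ℝ (Fin ny)) : Prop :=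
  ∃ δ₀ > (0 : ℝ), ∃ h : ℝ → ℝ,
    (∀ δ ∈ Set.Ioc (0 : ℝ) δ₀, 0 < h δ) ∧
    Tendsto h (𝓝[>] 0) (𝓝 0) ∧
    ∀ δ ∈ Set.Ioc (0 : ℝ) δ₀, ∀ x y, ‖x - xs‖ ≤ δ → ‖y - ys‖ ≤ h δ →
      f xs y ≤ f xs ys ∧ ∃ yt, ‖yt - ys‖ ≤ h δ ∧ f xs ys ≤ f x yt

lemma quad_approx {E : Type*} [NormedAddCommGroup E] [NormedSpace ℝ E]
    (g : E → ℝ) (hg : ContDiff ℝ 2 g) (z : E) {ε : ℝ} (hε : 0 < ε) :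
    ∃ r > (0:ℝ), ∀ w : E, ‖w‖ ≤ r →
      |g (z + w) - g z - fderiv ℝ g z w - (1/2) * fderiv ℝ (fderiv ℝ g) z w w| ≤ ε * ‖w‖ ^ 2 := by
  have h2 : ContDiff ℝ (1+1) g := by norm_num at hg ⊢; exact hg
  obtain ⟨hdg, -, hcd1⟩ := contDiff_succ_iff_fderiv.mp h2
  obtain ⟨hdg', hcont⟩ := contDiff_one_iff_fderiv.mp hcd1
  set B := fderiv ℝ (fderiv ℝ g) z with hB
  obtain ⟨δ, hδ, hδball⟩ := Metric.continuousAt_iff.mp hcont.continuousAt ε hε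
  refine ⟨δ/2, by positivity, fun w hw => ?_⟩
  -- Step A : mean value bound on the derivative of fderiv
  have stepA : ∀ t : ℝ, t ∈ Set.Icc (0:ℝ) 1 →
      ‖fderiv ℝ g (z + t • w) - fderiv ℝ g z - B (t • w)‖ ≤ ε * ‖t • w‖ := by
    intro t ht
    have hconv : Convex ℝ (Metric.closedBall z (δ/2)) := convex_closedBall _ _
    have hmem : z + t • w ∈ Metric.closedBall z (δ/2) := by
      simp only [Metric.mem_closedBall, dist_self_add_left]
      calc ‖t • w‖ = |t| * ‖w‖ := by rw [norm_smul, Real.norm_eq_abs]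
        _ ≤ 1 * (δ/2) := by
            apply mul_le_mul (abs_le.mpr ⟨by linarith [ht.1], ht.2⟩) hw (norm_nonneg _) zero_le_one
        _ = δ/2 := one_mul _
    have hzmem : z ∈ Metric.closedBall z (δ/2) := Metric.mem_closedBall_self (by positivity)
    have key := hconv.norm_image_sub_le_of_norm_hasFDerivWithin_le
      (f := fun u => fderiv ℝ g u - B u)
      (f' := fun u => fderiv ℝ (fderiv ℝ g) u - B)
      (fun u _ => ((hdg'.differentiableAt.hasFDerivAt).sub (B.hasFDerivAt)).hasFDerivWithinAt)
      (fun u hu => by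
        have : dist u z < δ := lt_of_le_of_lt (Metric.mem_closedBall.mp hu) (by linarith)
        have := hδball this
        rw [dist_eq_norm] at this
        exact le_of_lt this)
      hzmem hmem
    have : (fderiv ℝ g (z + t • w) - B (z + t • w)) - (fderiv ℝ g z - B z)
        = fderiv ℝ g (z + t • w) - fderiv ℝ g z - B (t • w) := by
      rw [map_add]; abel
    rw [this] at key
    simpa using key
  -- define ψ and its derivative
  set Q : ℝ := B w w with hQ
  set ψ : ℝ → ℝ := fun t => g (z + t • w) - t * (fderiv ℝ g z w) - t^2/2 * Q with hψ
  have hψderiv : ∀ t : ℝ, HasDerivAt ψ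
      (fderiv ℝ g (z + t • w) w - fderiv ℝ g z w - t * Q) t := by
    intro t
    have h1 : HasDerivAt (fun t : ℝ => z + t • w) w t := by
      simpa using ((hasDerivAt_id t).smul_const w).const_add z
    have h2 : HasDerivAt (fun t : ℝ => g (z + t • w)) (fderiv ℝ g (z + t • w) w) t := by
      have := (hdg.differentiableAt.hasFDerivAt).comp_hasDerivAt t h1
      exact this
    have h3 : HasDerivAt (fun t : ℝ => t * (fderiv ℝ g z w)) (fderiv ℝ g z w) t := by
      simpa using (hasDerivAt_id t).mul_const (fderiv ℝ g z w)
    have h4 : HasDerivAt (fun t : ℝ => t^2/2 * Q) (t * Q) t := by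
      have := ((hasDerivAt_pow 2 t).div_const 2).mul_const Q
      refine this.congr_deriv ?_
      ring
    exact (h2.sub h3).sub h4
  have hbound : ∀ t ∈ Set.Ico (0:ℝ) 1,
      ‖fderiv ℝ g (z + t • w) w - fderiv ℝ g z w - t * Q‖ ≤ ε * ‖w‖^2 := by
    intro t ht
    have htmem : t ∈ Set.Icc (0:ℝ) 1 := ⟨ht.1, le_of_lt ht.2⟩
    have hA := stepA t htmem
    have : fderiv ℝ g (z + t • w) w - fderiv ℝ g z w - t * Q
        = (fderiv ℝ g (z + t • w) - fderiv ℝ g z - B (t • w)) w := by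
      simp [hQ, ContinuousLinearMap.sub_apply, B.map_smul, smul_eq_mul]
    rw [this]
    calc ‖(fderiv ℝ g (z + t • w) - fderiv ℝ g z - B (t • w)) w‖
        ≤ ‖fderiv ℝ g (z + t • w) - fderiv ℝ g z - B (t • w)‖ * ‖w‖ :=
          ContinuousLinearMap.le_opNorm _ _
      _ ≤ (ε * ‖t • w‖) * ‖w‖ := by
          apply mul_le_mul_of_nonneg_right (stepA t htmem) (norm_nonneg _)
      _ ≤ ε * ‖w‖^2 := by
          rw [norm_smul, Real.norm_eq_abs]
          have : |t| ≤ 1 := abs_le.mpr ⟨by linarith [ht.1], le_of_lt ht.2⟩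
          nlinarith [mul_nonneg (mul_nonneg hε.le (sub_nonneg.mpr this)) (mul_nonneg (norm_nonneg w) (norm_nonneg w))]
  have hmvt := norm_image_sub_le_of_norm_deriv_le_segment'
    (f := ψ) (f' := fun t => fderiv ℝ g (z + t • w) w - fderiv ℝ g z w - t * Q)
    (a := 0) (b := 1)
    (fun t _ => (hψderiv t).hasDerivWithinAt) hbound 1 (Set.right_mem_Icc.mpr zero_le_one)
  have : ψ 1 - ψ 0 = g (z + w) - g z - fderiv ℝ g z w - (1/2) * B w w := by
    simp [hψ, hQ]
    ring
  rw [this] at hmvt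
  simpa [Real.norm_eq_abs] using hmvt

open RealInnerProductSpace

lemma dotProduct_eq_inner {ι : Type*} [Fintype ι] (x y : EuclideanSpace ℝ ι) :
    (⇑x) ⬝ᵥ (⇑y) = ⟪x, y⟫ := by
  simp [dotProduct, PiLp.inner_apply, RCLike.inner_apply, mul_comm]

lemma all_of_card {ι : Type*} [Fintype ι] (p : ι → Prop)
    (h : Nat.card {i // p i} = Fintype.card ι) : ∀ i, p i := by
  classical
  rw [Nat.card_eq_fintype_card, Fintype.card_subtype] at h
  have h2 := Finset.eq_univ_of_card _ h
  intro i
  have : i ∈ Finset.univ.filter p := by rw [h2]; exact Finset.mem_univ i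
  exact (Finset.mem_filter.mp this).2

lemma coe_sum_smul {ι κ : Type*} [Fintype ι] [Fintype κ]
    (b : κ → EuclideanSpace ℝ ι) (c : κ → ℝ) :
    ⇑(∑ k, c k • b k) = ∑ k, c k • ⇑(b k) := by simp [WithLp.ofLp_sum, WithLp.ofLp_smul]

lemma eigen_mulVec_expansion {ι κ : Type*} [Fintype ι] [DecidableEq ι] [Fintype κ]
    {A : Matrix ι ι ℝ} (hA : A.IsHermitian) (e : κ → ι) (c : κ → ℝ) :
    A *ᵥ ⇑(∑ k, c k • (hA.eigenvectorBasis (e k))) =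
      ⇑(∑ k, (hA.eigenvalues (e k) * c k) • (hA.eigenvectorBasis (e k))) := by
  rw [coe_sum_smul, coe_sum_smul]
  rw [show A *ᵥ (∑ k, c k • ⇑(hA.eigenvectorBasis (e k)))
      = ∑ k, c k • (A *ᵥ ⇑(hA.eigenvectorBasis (e k))) by
    rw [← Matrix.mulVecLin_apply, map_sum]
    refine Finset.sum_congr rfl fun k _ => ?_
    simp [Matrix.mulVecLin_apply, Matrix.mulVec_smul]]
  refine Finset.sum_congr rfl fun k _ => ?_
  rw [hA.mulVec_eigenvectorBasis, smul_smul, mul_comm]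

lemma eigen_quad {ι κ : Type*} [Fintype ι] [DecidableEq ι] [Fintype κ]
    {A : Matrix ι ι ℝ} (hA : A.IsHermitian) (e : κ → ι) (he : Function.Injective e)
    (c : κ → ℝ) :
    ⇑(∑ k, c k • (hA.eigenvectorBasis (e k))) ⬝ᵥ
      (A *ᵥ ⇑(∑ k, c k • (hA.eigenvectorBasis (e k)))) =
      ∑ k, hA.eigenvalues (e k) * (c k)^2 := by
  rw [eigen_mulVec_expansion, dotProduct_eq_inner]
  have horth : Orthonormal ℝ (fun k => hA.eigenvectorBasis (e k)) :=
    (hA.eigenvectorBasis.orthonormal).comp e he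
  rw [horth.inner_sum c (fun k => hA.eigenvalues (e k) * c k) Finset.univ]
  refine Finset.sum_congr rfl fun k _ => ?_
  simp
  ring

lemma eigen_norm_sq {ι κ : Type*} [Fintype ι] [DecidableEq ι] [Fintype κ]
    {A : Matrix ι ι ℝ} (hA : A.IsHermitian) (e : κ → ι) (he : Function.Injective e)
    (c : κ → ℝ) :
    ‖(∑ k, c k • (hA.eigenvectorBasis (e k)) : EuclideanSpace ℝ ι)‖^2 = ∑ k, (c k)^2 := by
  have horth : Orthonormal ℝ (fun k => hA.eigenvectorBasis (e k)) :=
    (hA.eigenvectorBasis.orthonormal).comp e he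
  rw [← real_inner_self_eq_norm_sq]
  rw [horth.inner_sum c c Finset.univ]
  refine Finset.sum_congr rfl fun k _ => ?_
  simp
  ring

/-- Negative definiteness bound from inertia. -/
lemma negdef_bound {n : ℕ} {N : Matrix (Fin n) (Fin n) ℝ} (hN : HasInertia N (0, n, 0)) :
    ∃ cN > (0:ℝ), ∀ u : EuclideanSpace ℝ (Fin n), (⇑u) ⬝ᵥ (N *ᵥ ⇑u) ≤ -cN * ‖u‖^2 := by
  classical
  obtain ⟨hherm, -, hneg, -⟩ := hN
  have hall : ∀ i, hherm.eigenvalues i < 0 := by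
    apply all_of_card
    simpa using hneg
  rcases Nat.eq_zero_or_pos n with hn | hn
  · refine ⟨1, one_pos, fun u => ?_⟩
    subst hn
    have hu : u = 0 := by
      ext i
      exact i.elim0
    subst hu
    simp [dotProduct]
  · have hne : Nonempty (Fin n) := ⟨⟨0, hn⟩⟩
    set cN : ℝ := Finset.univ.inf' (Finset.univ_nonempty) (fun i => -hherm.eigenvalues i) with hcN
    have hcNpos : 0 < cN := by
      rw [hcN]
      rw [Finset.lt_inf'_iff]
      intro i _
      linarith [hall i]
    refine ⟨cN, hcNpos, fun u => ?_⟩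
    have hrepr : u = ∑ k, (hherm.eigenvectorBasis.repr u k) • hherm.eigenvectorBasis k :=
      (hherm.eigenvectorBasis.sum_repr u).symm
    set c : Fin n → ℝ := fun k => hherm.eigenvectorBasis.repr u k with hc
    have hq := eigen_quad hherm id Function.injective_id c
    have hns := eigen_norm_sq hherm id Function.injective_id c
    simp only [id] at hq hns
    rw [show u = ∑ k, c k • hherm.eigenvectorBasis k from hrepr]
    rw [hq, hns]
    have : ∀ k : Fin n, hherm.eigenvalues k * (c k)^2 ≤ -cN * (c k)^2 := by
      intro k
      have h1 : cN ≤ -hherm.eigenvalues k := Finset.inf'_le _ (Finset.mem_univ k)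
      nlinarith [sq_nonneg (c k)]
    calc ∑ k, hherm.eigenvalues k * (c k)^2 ≤ ∑ k, -cN * (c k)^2 :=
          Finset.sum_le_sum (fun k _ => this k)
      _ = -cN * ∑ k, (c k)^2 := by rw [Finset.mul_sum]

def projX {nx ny : ℕ} : EuclideanSpace ℝ (Fin nx ⊕ Fin ny) →ₗ[ℝ] EuclideanSpace ℝ (Fin nx) where
  toFun v := WithLp.toLp 2 (fun i => v (Sum.inl i))
  map_add' _ _ := rfl
  map_smul' _ _ := rfl

def projY {nx ny : ℕ} : EuclideanSpace ℝ (Fin nx ⊕ Fin ny) →ₗ[ℝ] EuclideanSpace ℝ (Fin ny) where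
  toFun v := WithLp.toLp 2 (fun j => v (Sum.inr j))
  map_add' _ _ := rfl
  map_smul' _ _ := rfl

lemma norm_sq_eq_dot {ι : Type*} [Fintype ι] (v : EuclideanSpace ℝ ι) :
    ‖v‖^2 = ∑ i, (v i)^2 := by
  rw [← real_inner_self_eq_norm_sq, ← dotProduct_eq_inner]
  simp [dotProduct, sq]

lemma euclid_app {ι : Type*} [Fintype ι] {u w : EuclideanSpace ℝ ι} (h : u = w) (i : ι) :
    u i = w i := by rw [h]

set_option maxHeartbeats 1000000 in
lemma posdef_graph {nx ny : ℕ} {M : Matrix (Fin nx ⊕ Fin ny) (Fin nx ⊕ Fin ny) ℝ}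
    (hM : HasInertia M (nx, ny, 0))
    (hNegOnY : ∀ v : EuclideanSpace ℝ (Fin nx ⊕ Fin ny),
        (∀ i, v (Sum.inl i) = 0) → (⇑v) ⬝ᵥ (M *ᵥ ⇑v) ≤ 0) :
    ∃ (L : EuclideanSpace ℝ (Fin nx) →L[ℝ] EuclideanSpace ℝ (Fin ny)) (c : ℝ), 0 < c ∧
      ∀ dx : EuclideanSpace ℝ (Fin nx),
        c * ‖dx‖^2 ≤ (Sum.elim (⇑dx) (⇑(L dx))) ⬝ᵥ (M *ᵥ Sum.elim (⇑dx) (⇑(L dx))) := by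
  classical
  obtain ⟨hherm, hpos, -, -⟩ := hM
  have hpos' : Nat.card {i // 0 < hherm.eigenvalues i} = nx := hpos
  rcases Nat.eq_zero_or_pos nx with hn | hn
  · subst hn
    refine ⟨0, 1, one_pos, fun dx => ?_⟩
    have hdx : dx = 0 := by ext i; exact i.elim0
    subst hdx
    have h0 : (Sum.elim (⇑(0 : EuclideanSpace ℝ (Fin 0)))
        (⇑((0 : EuclideanSpace ℝ (Fin 0) →L[ℝ] EuclideanSpace ℝ (Fin ny)) 0))
          : Fin 0 ⊕ Fin ny → ℝ) = 0 := by
      funext k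
      cases k with
      | inl i => exact i.elim0
      | inr j => simp
    rw [h0]
    simp
  · set P := {i : Fin nx ⊕ Fin ny // 0 < hherm.eigenvalues i} with hP
    have hcard : Fintype.card P = nx := by rw [← Nat.card_eq_fintype_card]; exact hpos'
    have hPne : Nonempty P := Fintype.card_pos_iff.mp (by omega)
    set lam := hherm.eigenvalues with hlam
    set b := hherm.eigenvectorBasis with hb
    set cP : ℝ := Finset.univ.inf' Finset.univ_nonempty (fun k : P => lam k.1) with hcP
    have hcPpos : 0 < cP := by
      rw [hcP, Finset.lt_inf'_iff]
      exact fun k _ => k.2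
    set Φ : (P → ℝ) →ₗ[ℝ] EuclideanSpace ℝ (Fin nx ⊕ Fin ny) :=
      { toFun := fun c => ∑ k : P, c k • b k.1
        map_add' := by intro a b'; simp [add_smul, Finset.sum_add_distrib]
        map_smul' := by intro m a; simp [smul_smul, Finset.smul_sum] } with hΦ
    set ψ : (P → ℝ) →ₗ[ℝ] EuclideanSpace ℝ (Fin nx) := projX ∘ₗ Φ with hψdef
    have hquad : ∀ c : P → ℝ, (⇑(Φ c)) ⬝ᵥ (M *ᵥ ⇑(Φ c)) = ∑ k : P, lam k.1 * (c k)^2 :=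
      fun c => eigen_quad hherm Subtype.val Subtype.val_injective c
    have hnormsq : ∀ c : P → ℝ, ‖Φ c‖^2 = ∑ k : P, (c k)^2 :=
      fun c => eigen_norm_sq hherm Subtype.val Subtype.val_injective c
    have hinj : Function.Injective ψ := by
      intro c c' hcc
      rw [← sub_eq_zero, ← map_sub] at hcc
      set d := c - c' with hd
      have hvx : ∀ i, (Φ d) (Sum.inl i) = 0 := fun i => euclid_app hcc i
      have hneg := hNegOnY (Φ d) hvx
      rw [hquad d] at hneg
      have hterm : ∀ k : P, (0:ℝ) ≤ lam k.1 * (d k)^2 :=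
        fun k => mul_nonneg (le_of_lt k.2) (sq_nonneg _)
      have hzero : ∑ k : P, lam k.1 * (d k)^2 = 0 :=
        le_antisymm hneg (Finset.sum_nonneg (fun k _ => hterm k))
      have hdk : ∀ k : P, d k = 0 := by
        intro k
        have := (Finset.sum_eq_zero_iff_of_nonneg (fun k _ => hterm k)).mp hzero k
          (Finset.mem_univ k)
        have hlk := k.2
        have h2 : d k ^ 2 = 0 := by
          rcases mul_eq_zero.mp this with h | h
          · exact absurd h (by positivity)
          · exact h
        exact pow_eq_zero_iff two_ne_zero |>.mp h2
      have : d = 0 := funext hdk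
      rwa [hd, sub_eq_zero] at this
    have hrange : LinearMap.range ψ = ⊤ := by
      apply Submodule.eq_top_of_finrank_eq
      rw [LinearMap.finrank_range_of_inj hinj]
      simp [hcard, finrank_euclideanSpace]
    set eqv := LinearEquiv.ofBijective ψ ⟨hinj, LinearMap.range_eq_top.mp hrange⟩ with heqv
    set L₀ : EuclideanSpace ℝ (Fin nx) →ₗ[ℝ] EuclideanSpace ℝ (Fin ny) :=
      projY ∘ₗ Φ ∘ₗ (eqv.symm : EuclideanSpace ℝ (Fin nx) →ₗ[ℝ] (P → ℝ)) with hL₀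
    refine ⟨LinearMap.toContinuousLinearMap L₀, cP, hcPpos, fun dx => ?_⟩
    set cvec : P → ℝ := eqv.symm dx with hcvec
    set v := Φ cvec with hv
    have hψc : ψ cvec = dx := by
      have := eqv.apply_symm_apply dx
      exact this
    have hvx : ∀ i, v (Sum.inl i) = dx i := fun i => euclid_app hψc i
    have hvy : ∀ j, v (Sum.inr j) = (LinearMap.toContinuousLinearMap L₀ dx) j := by
      intro j
      rw [LinearMap.coe_toContinuousLinearMap']
      rfl
    have hcoe : (⇑v : Fin nx ⊕ Fin ny → ℝ) =
        Sum.elim (⇑dx) (⇑(LinearMap.toContinuousLinearMap L₀ dx)) := by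
      funext k
      cases k with
      | inl i => exact hvx i
      | inr j => exact hvy j
    rw [← hcoe, hquad cvec]
    have hlow : ∀ k : P, cP * (cvec k)^2 ≤ lam k.1 * (cvec k)^2 := by
      intro k
      have := Finset.inf'_le (fun k : P => lam k.1) (Finset.mem_univ k)
      nlinarith [sq_nonneg (cvec k)]
    have h1 : cP * ‖v‖^2 ≤ ∑ k : P, lam k.1 * (cvec k)^2 := by
      rw [hv, hnormsq cvec, Finset.mul_sum]
      exact Finset.sum_le_sum (fun k _ => hlow k)
    have h2 : ‖dx‖^2 ≤ ‖v‖^2 := by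
      rw [norm_sq_eq_dot, norm_sq_eq_dot v, Fintype.sum_sum_type]
      have : ∑ i, (dx i)^2 = ∑ i, (v (Sum.inl i))^2 :=
        Finset.sum_congr rfl (fun i _ => by rw [hvx i])
      rw [this]
      have : (0:ℝ) ≤ ∑ j, (v (Sum.inr j))^2 := Finset.sum_nonneg (fun j _ => sq_nonneg _)
      linarith
    nlinarith [hcPpos]

section Bridge

variable (f : EuclideanSpace ℝ (Fin nx) → EuclideanSpace ℝ (Fin ny) → ℝ)
variable (hf : ContDiff ℝ 2 (fun p : EuclideanSpace ℝ (Fin nx) × EuclideanSpace ℝ (Fin ny) =>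
      f p.1 p.2))

local notation "E" => EuclideanSpace ℝ (Fin nx)
local notation "F" => EuclideanSpace ℝ (Fin ny)

def gg : E × F → ℝ := fun p => f p.1 p.2

include hf

lemma gg_diff : Differentiable ℝ (gg f) := hf.differentiable (by norm_num)

lemma gg_diff' : Differentiable ℝ (fderiv ℝ (gg f)) := by
  have h2 : ContDiff ℝ (1+1) (gg f) := by norm_num; exact hf
  obtain ⟨-, -, hcd1⟩ := contDiff_succ_iff_fderiv.mp h2
  exact hcd1.differentiable (by norm_num)

lemma bridge1 (x' : E) (y : F) :
    fderiv ℝ (fun x'' => f x'' y) x' =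
      (fderiv ℝ (gg f) (x', y)).comp (ContinuousLinearMap.inl ℝ E F) :=
  by
  have h := ((gg_diff f hf) (x', y)).hasFDerivAt.comp x' (hasFDerivAt_prodMk_left (𝕜 := ℝ) x' y)
  exact h.fderiv

lemma bridge1' (x : E) (y' : F) :
    fderiv ℝ (fun y'' => f x y'') y' =
      (fderiv ℝ (gg f) (x, y')).comp (ContinuousLinearMap.inr ℝ E F) :=
  by
  have h := ((gg_diff f hf) (x, y')).hasFDerivAt.comp y' (hasFDerivAt_prodMk_right (𝕜 := ℝ) x y')
  exact h.fderiv

lemma d2_left (xs : E) (ys : F) (a : E × F) (u : E) :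
    fderiv ℝ (fun x' => fderiv ℝ (gg f) (x', ys) a) xs u =
      (fderiv ℝ (fderiv ℝ (gg f)) (xs, ys) (u, 0)) a := by
  have hD : HasFDerivAt (fun x' : E => fderiv ℝ (gg f) (x', ys))
      ((fderiv ℝ (fderiv ℝ (gg f)) (xs, ys)).comp (ContinuousLinearMap.inl ℝ E F)) xs :=
    ((gg_diff' f hf) (xs, ys)).hasFDerivAt.comp xs (hasFDerivAt_prodMk_left xs ys)
  have hev : HasFDerivAt (fun x' => fderiv ℝ (gg f) (x', ys) a)
      (((ContinuousLinearMap.apply ℝ ℝ a)).comp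
        ((fderiv ℝ (fderiv ℝ (gg f)) (xs, ys)).comp (ContinuousLinearMap.inl ℝ E F))) xs :=
    (ContinuousLinearMap.apply ℝ ℝ a).hasFDerivAt.comp xs hD
  rw [hev.fderiv]
  rfl

lemma d2_right (xs : E) (ys : F) (a : E × F) (v : F) :
    fderiv ℝ (fun y' => fderiv ℝ (gg f) (xs, y') a) ys v =
      (fderiv ℝ (fderiv ℝ (gg f)) (xs, ys) (0, v)) a := by
  have hD : HasFDerivAt (fun y' : F => fderiv ℝ (gg f) (xs, y'))
      ((fderiv ℝ (fderiv ℝ (gg f)) (xs, ys)).comp (ContinuousLinearMap.inr ℝ E F)) ys :=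
    ((gg_diff' f hf) (xs, ys)).hasFDerivAt.comp ys (hasFDerivAt_prodMk_right xs ys)
  have hev : HasFDerivAt (fun y' => fderiv ℝ (gg f) (xs, y') a)
      (((ContinuousLinearMap.apply ℝ ℝ a)).comp
        ((fderiv ℝ (fderiv ℝ (gg f)) (xs, ys)).comp (ContinuousLinearMap.inr ℝ E F))) ys :=
    (ContinuousLinearMap.apply ℝ ℝ a).hasFDerivAt.comp ys hD
  rw [hev.fderiv]
  rfl

/-- basis vectors in the product space -/
def ee (k : Fin nx ⊕ Fin ny) : EuclideanSpace ℝ (Fin nx) × EuclideanSpace ℝ (Fin ny) :=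
  Sum.elim (fun i => (EuclideanSpace.single i 1, 0)) (fun j => (0, EuclideanSpace.single j 1)) k

lemma hzz_entries (xs : E) (ys : F) (k l : Fin nx ⊕ Fin ny) :
    Hzz f xs ys k l = (fderiv ℝ (fderiv ℝ (gg f)) (xs, ys) (ee k)) (ee l) := by
  set B := fderiv ℝ (fderiv ℝ (gg f)) (xs, ys) with hB
  cases k with
  | inl i =>
    cases l with
    | inl j =>
      show Hxx f xs ys i j = _
      have hfun : (fun x' => pdX f x' ys j) =
          (fun x' => fderiv ℝ (gg f) (x', ys) (EuclideanSpace.single j 1, 0)) := by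
        funext x'
        show fderiv ℝ (fun x'' => f x'' ys) x' (EuclideanSpace.single j 1) = _
        rw [bridge1 f hf]
        rfl
      show fderiv ℝ (fun x' => pdX f x' ys j) xs (EuclideanSpace.single i 1) = _
      rw [hfun, d2_left f hf]
      rfl
    | inr j =>
      show Hxy f xs ys i j = _
      have hfun : (fun x' => pdY f x' ys j) =
          (fun x' => fderiv ℝ (gg f) (x', ys) ((0 : E), EuclideanSpace.single j 1)) := by
        funext x'
        show fderiv ℝ (fun y'' => f x' y'') ys (EuclideanSpace.single j 1) = _
        rw [bridge1' f hf]
        rfl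
      show fderiv ℝ (fun x' => pdY f x' ys j) xs (EuclideanSpace.single i 1) = _
      rw [hfun, d2_left f hf]
      rfl
  | inr i =>
    cases l with
    | inl j =>
      show Hyx f xs ys i j = _
      have hfun : (fun y' => pdX f xs y' j) =
          (fun y' => fderiv ℝ (gg f) (xs, y') (EuclideanSpace.single j 1, (0 : F))) := by
        funext y'
        show fderiv ℝ (fun x'' => f x'' y') xs (EuclideanSpace.single j 1) = _
        rw [bridge1 f hf]
        rfl
      show fderiv ℝ (fun y' => pdX f xs y' j) ys (EuclideanSpace.single i 1) = _
      rw [hfun, d2_right f hf]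
      rfl
    | inr j =>
      show Hyy f xs ys i j = _
      have hfun : (fun y' => pdY f xs y' j) =
          (fun y' => fderiv ℝ (gg f) (xs, y') ((0 : E), EuclideanSpace.single j 1)) := by
        funext y'
        show fderiv ℝ (fun y'' => f xs y'') y' (EuclideanSpace.single j 1) = _
        rw [bridge1' f hf]
        rfl
      show fderiv ℝ (fun y' => pdY f xs y' j) ys (EuclideanSpace.single i 1) = _
      rw [hfun, d2_right f hf]
      rfl

omit hf

lemma euclid_decomp_s8 {n : ℕ} (u : EuclideanSpace ℝ (Fin n)) :
    ∑ i, u i • EuclideanSpace.single i (1:ℝ) = u := by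
  have h := (EuclideanSpace.basisFun (Fin n) ℝ).sum_repr u
  simpa [EuclideanSpace.basisFun_apply, EuclideanSpace.basisFun_repr] using h

lemma prod_decomp (dx : E) (dy : F) :
    ∑ k, (Sum.elim (⇑dx) (⇑dy) k) • ee (nx := nx) (ny := ny) k = (dx, dy) := by
  rw [Fintype.sum_sum_type]
  apply Prod.ext
  · simp [ee, Prod.fst_sum, euclid_decomp_s8 dx]
  · simp [ee, Prod.snd_sum, euclid_decomp_s8 dy]

include hf in
lemma quad_eq_matrix (xs : E) (ys : F) (dx : E) (dy : F) :
    fderiv ℝ (fderiv ℝ (gg f)) (xs, ys) (dx, dy) (dx, dy) =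
      (Sum.elim (⇑dx) (⇑dy)) ⬝ᵥ (Hzz f xs ys *ᵥ Sum.elim (⇑dx) (⇑dy)) := by
  set B := fderiv ℝ (fderiv ℝ (gg f)) (xs, ys) with hB
  set ζ : Fin nx ⊕ Fin ny → ℝ := Sum.elim (⇑dx) (⇑dy) with hζ
  have hdec : (dx, dy) = ∑ k, ζ k • ee (nx := nx) (ny := ny) k := (prod_decomp dx dy).symm
  rw [hdec]
  conv_lhs => rw [map_sum B (fun k => ζ k • ee (nx := nx) (ny := ny) k) Finset.univ]
  rw [ContinuousLinearMap.sum_apply]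
  have : ∀ k, (B (ζ k • ee k)) (∑ l, ζ l • ee l) = ∑ l, ζ k * ζ l * (B (ee k) (ee l)) := by
    intro k
    rw [_root_.map_smul]
    rw [ContinuousLinearMap.smul_apply, map_sum]
    rw [Finset.smul_sum]
    refine Finset.sum_congr rfl fun l _ => ?_
    rw [_root_.map_smul]
    simp [smul_eq_mul]
    ring
  rw [Finset.sum_congr rfl (fun k _ => this k)]
  simp only [dotProduct, Matrix.mulVec, hzz_entries f hf xs ys]
  refine Finset.sum_congr rfl fun k _ => ?_
  rw [Finset.mul_sum]
  refine Finset.sum_congr rfl fun l _ => ?_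
  ring

end Bridge


lemma dot_elim_zero {l m : Type*} [Fintype l] [Fintype m] (A : Matrix l l ℝ)
    (B : Matrix l m ℝ) (C : Matrix m l ℝ) (D : Matrix m m ℝ) (u : m → ℝ) :
    Sum.elim (0 : l → ℝ) u ⬝ᵥ (Matrix.fromBlocks A B C D *ᵥ Sum.elim 0 u) = u ⬝ᵥ (D *ᵥ u) := by
  simp [Matrix.fromBlocks_mulVec, sumElim_dotProduct_sumElim]

section GradZero

variable (f : EuclideanSpace ℝ (Fin nx) → EuclideanSpace ℝ (Fin ny) → ℝ)
variable (hf : ContDiff ℝ 2 (fun p : EuclideanSpace ℝ (Fin nx) × EuclideanSpace ℝ (Fin ny) =>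
      f p.1 p.2))

local notation "E" => EuclideanSpace ℝ (Fin nx)
local notation "F" => EuclideanSpace ℝ (Fin ny)

include hf in
lemma grad_zero (xs : E) (ys : F)
    (hgradx : gradient (fun x' => f x' ys) xs = 0)
    (hgrady : gradient (fun y' => f xs y') ys = 0) :
    fderiv ℝ (gg f) (xs, ys) = 0 := by
  have hx : fderiv ℝ (fun x' => f x' ys) xs = 0 := by
    have h := hgradx
    unfold gradient at h
    rwa [LinearIsometryEquiv.map_eq_zero_iff] at h
  have hy : fderiv ℝ (fun y' => f xs y') ys = 0 := by
    have h := hgrady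
    unfold gradient at h
    rwa [LinearIsometryEquiv.map_eq_zero_iff] at h
  apply ContinuousLinearMap.ext
  rintro ⟨u, v⟩
  have hsplit : ((u, v) : E × F) = (u, 0) + (0, v) := by simp [Prod.mk_add_mk]
  rw [hsplit, map_add]
  have h1 : fderiv ℝ (gg f) (xs, ys) (u, 0) = 0 := by
    have := bridge1 f hf xs ys
    have h2 : fderiv ℝ (gg f) (xs, ys) (u, (0:F)) =
        fderiv ℝ (fun x'' => f x'' ys) xs u := by
      rw [this]; rfl
    rw [h2, hx]; rfl
  have h2 : fderiv ℝ (gg f) (xs, ys) (0, v) = 0 := by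
    have := bridge1' f hf xs ys
    have h3 : fderiv ℝ (gg f) (xs, ys) ((0:E), v) =
        fderiv ℝ (fun y'' => f xs y'') ys v := by
      rw [this]; rfl
    rw [h3, hy]; rfl
  rw [h1, h2]
  simp

end GradZero

set_option maxHeartbeats 2000000 in
/-- **Second order sufficient condition for unconstrained minmax**: at a first-order
equilibrium, if `inertia(∇ᵧᵧf) = (0, n_y, 0)` and `inertia(∇_zz f) = (n_x, n_y, 0)`,
then the point is a local minmax. -/
theorem secondOrder_sufficient_unconstrained_minmax
    (f : EuclideanSpace ℝ (Fin nx) → EuclideanSpace ℝ (Fin ny) → ℝ)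
    (hf : ContDiff ℝ 2 (fun p : EuclideanSpace ℝ (Fin nx) × EuclideanSpace ℝ (Fin ny) =>
      f p.1 p.2))
    (xs : EuclideanSpace ℝ (Fin nx)) (ys : EuclideanSpace ℝ (Fin ny))
    (hgradx : gradient (fun x' => f x' ys) xs = 0)
    (hgrady : gradient (fun y' => f xs y') ys = 0)
    (hyy : HasInertia (Hyy f xs ys) (0, ny, 0))
    (hzz : HasInertia (Hzz f xs ys) (nx, ny, 0)) :
    IsLocalMinMax f xs ys := by
  classical
  obtain ⟨cN, hcN, hNbound⟩ := negdef_bound hyy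
  -- the quadratic form of Hzz is nonpositive on vectors supported on the y-block
  have hNegOnY : ∀ v : EuclideanSpace ℝ (Fin nx ⊕ Fin ny),
      (∀ i, v (Sum.inl i) = 0) → (⇑v) ⬝ᵥ (Hzz f xs ys *ᵥ ⇑v) ≤ 0 := by
    intro v hv
    set u : EuclideanSpace ℝ (Fin ny) := WithLp.toLp 2 (fun j => v (Sum.inr j))
      with hu
    have hvcoe : (⇑v : Fin nx ⊕ Fin ny → ℝ) = Sum.elim (0 : Fin nx → ℝ) (⇑u) := by
      funext k
      cases k with
      | inl i => exact hv i
      | inr j => rfl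
    rw [hvcoe]
    rw [show Hzz f xs ys = Matrix.fromBlocks (Hxx f xs ys) (Hxy f xs ys)
      (Hyx f xs ys) (Hyy f xs ys) from rfl]
    rw [dot_elim_zero]
    have := hNbound u
    nlinarith [sq_nonneg ‖u‖, norm_nonneg u]
  obtain ⟨L, cS, hcS, hSbound⟩ := posdef_graph hzz hNegOnY
  set K : ℝ := ‖L‖ + 1 with hK
  have hK1 : 1 ≤ K := by have := norm_nonneg L; linarith
  have hKpos : 0 < K := by linarith
  set ε : ℝ := min (cN / 2) (cS / (2 * K ^ 2)) with hε
  have hεpos : 0 < ε := by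
    apply lt_min
    · linarith
    · positivity
  have hεN : ε ≤ cN / 2 := min_le_left _ _
  have hεS : ε ≤ cS / (2 * K ^ 2) := min_le_right _ _
  have hgg : ContDiff ℝ 2 (gg f) := hf
  obtain ⟨r, hrpos, htaylor⟩ := quad_approx (gg f) hgg (xs, ys) hεpos
  have hD0 : fderiv ℝ (gg f) (xs, ys) = 0 := grad_zero f hf xs ys hgradx hgrady
  have key : ∀ w : EuclideanSpace ℝ (Fin nx) × EuclideanSpace ℝ (Fin ny), ‖w‖ ≤ r →
      |gg f ((xs, ys) + w) - gg f (xs, ys)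
        - (1/2) * (fderiv ℝ (fderiv ℝ (gg f)) (xs, ys) w w)| ≤ ε * ‖w‖^2 := by
    intro w hw
    have h := htaylor w hw
    rw [hD0] at h
    simpa using h
  refine ⟨r / K, by positivity, fun δ => K * δ, fun δ hδ => mul_pos hKpos hδ.1, ?_, ?_⟩
  · have : Filter.Tendsto (fun δ : ℝ => K * δ) (𝓝 0) (𝓝 (K * 0)) :=
      (continuous_const.mul continuous_id).tendsto 0
    simpa using this.mono_left nhdsWithin_le_nhds
  · intro δ hδ x y hx hy
    have hδ0 : 0 < δ := hδ.1
    have hδr : K * δ ≤ r := by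
      have := hδ.2
      calc K * δ ≤ K * (r / K) := mul_le_mul_of_nonneg_left hδ.2 hKpos.le
        _ = r := by field_simp
    constructor
    · -- f xs y ≤ f xs ys
      set dy : EuclideanSpace ℝ (Fin ny) := y - ys with hdy
      have hdynorm : ‖dy‖ ≤ K * δ := hy
      have hwnorm : ‖(((0 : EuclideanSpace ℝ (Fin nx)), dy) :
          EuclideanSpace ℝ (Fin nx) × EuclideanSpace ℝ (Fin ny))‖ = ‖dy‖ := by
        rw [Prod.norm_def]
        simp [norm_nonneg]
      have hk := key (0, dy) (by rw [hwnorm]; linarith)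
      have hq := quad_eq_matrix f hf xs ys 0 dy
      have hz : Sum.elim (⇑(0 : EuclideanSpace ℝ (Fin nx))) (⇑dy)
          = Sum.elim (0 : Fin nx → ℝ) (⇑dy) := rfl
      rw [hz] at hq
      rw [show Hzz f xs ys = Matrix.fromBlocks (Hxx f xs ys) (Hxy f xs ys)
        (Hyx f xs ys) (Hyy f xs ys) from rfl, dot_elim_zero] at hq
      have hqle : fderiv ℝ (fderiv ℝ (gg f)) (xs, ys) (0, dy) (0, dy) ≤ -cN * ‖dy‖^2 := by
        rw [hq]; exact hNbound dy
      have hpt : ((xs, ys) : EuclideanSpace ℝ (Fin nx) × EuclideanSpace ℝ (Fin ny))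
          + (0, dy) = (xs, y) := by
        rw [Prod.mk_add_mk]
        simp [hdy]
      rw [hpt, hwnorm] at hk
      have hggxy : gg f (xs, y) = f xs y := rfl
      have hggz : gg f (xs, ys) = f xs ys := rfl
      rw [hggxy, hggz] at hk
      have habs := abs_le.mp hk
      nlinarith [habs.2, hqle, mul_nonneg (sub_nonneg.mpr hεN) (sq_nonneg ‖dy‖)]
    · -- exists yt
      set dx : EuclideanSpace ℝ (Fin nx) := x - xs with hdx
      have hdxnorm : ‖dx‖ ≤ δ := hx
      refine ⟨ys + L dx, ?_, ?_⟩
      · have : ‖L dx‖ ≤ ‖L‖ * ‖dx‖ := L.le_opNorm dx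
        have h2 : ys + L dx - ys = L dx := by abel
        rw [h2]
        calc ‖L dx‖ ≤ ‖L‖ * ‖dx‖ := this
          _ ≤ K * δ := by
              have h3 := mul_le_mul_of_nonneg_left hdxnorm (norm_nonneg L)
              rw [hK]
              nlinarith [hδ0]
      · set w : EuclideanSpace ℝ (Fin nx) × EuclideanSpace ℝ (Fin ny) := (dx, L dx) with hw
        have hLdx : ‖L dx‖ ≤ ‖L‖ * ‖dx‖ := L.le_opNorm dx
        have hwnorm : ‖w‖ ≤ K * ‖dx‖ := by
          rw [hw, Prod.norm_def]
          apply max_le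
          · nlinarith [mul_nonneg (sub_nonneg.mpr hK1) (norm_nonneg dx)]
          · have h4 : ‖L‖ ≤ K := by rw [hK]; linarith
            linarith [hLdx, mul_le_mul_of_nonneg_right h4 (norm_nonneg dx)]
        have hwr : ‖w‖ ≤ r := by
          calc ‖w‖ ≤ K * ‖dx‖ := hwnorm
            _ ≤ K * δ := mul_le_mul_of_nonneg_left hdxnorm hKpos.le
            _ ≤ r := hδr
        have hk := key w hwr
        have hq := quad_eq_matrix f hf xs ys dx (L dx)
        have hqge : cS * ‖dx‖^2 ≤ fderiv ℝ (fderiv ℝ (gg f)) (xs, ys) w w := by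
          rw [hw, hq]
          exact hSbound dx
        have hpt : ((xs, ys) : EuclideanSpace ℝ (Fin nx) × EuclideanSpace ℝ (Fin ny)) + w
            = (x, ys + L dx) := by
          rw [hw, Prod.mk_add_mk]
          simp [hdx]
        rw [hpt] at hk
        have hggxy : gg f (x, ys + L dx) = f x (ys + L dx) := rfl
        have hggz : gg f (xs, ys) = f xs ys := rfl
        rw [hggxy, hggz] at hk
        have habs := abs_le.mp hk
        clear_value K ε dx w
        have hwsq : ‖w‖^2 ≤ K^2 * ‖dx‖^2 := by nlinarith [mul_self_le_mul_self (norm_nonneg w) hwnorm]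
        have hεw : ε * ‖w‖^2 ≤ ε * (K^2 * ‖dx‖^2) :=
          mul_le_mul_of_nonneg_left hwsq hεpos.le
        have hfinal : ε * (K^2 * ‖dx‖^2) ≤ 1/2 * (cS * ‖dx‖^2) := by
          have h1 : ε * K^2 ≤ cS/2 := by
            have hK2 : (0:ℝ) < K^2 := by positivity
            calc ε * K^2 ≤ (cS / (2 * K^2)) * K^2 :=
                mul_le_mul_of_nonneg_right hεS (le_of_lt hK2)
              _ = cS/2 := by field_simp
          nlinarith [mul_nonneg (sub_nonneg.mpr h1) (sq_nonneg ‖dx‖)]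
        have e1 : 1/2 * (cS * ‖dx‖^2) ≤
            1/2 * (fderiv ℝ (fderiv ℝ (gg f)) (xs, ys) w w) := by linarith [hqge]
        have e2 : f x (ys + L dx) - f xs ys ≥
            1/2 * (fderiv ℝ (fderiv ℝ (gg f)) (xs, ys) w w) - ε * ‖w‖^2 := by
          linarith [habs.1]
        have t1 : f x (ys + L dx) - f xs ys ≥ 1/2 * (cS * ‖dx‖^2) - ε * ‖w‖^2 := by
          linarith only [e1, e2]
        have t2 : ε * ‖w‖^2 ≤ 1/2 * (cS * ‖dx‖^2) := by linarith only [hεw, hfinal]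
        linarith only [t1, t2]
end
end

section
/- Let A be an n_y × n_y real symmetric negative definite matrix, C an n_x × n_x real symmetric matrix, B an n_x × n_y real matrix with C − B A⁻¹ B' positive definite, and let g_x ∈ ℝ^{n_x}, g_y ∈ ℝ^{n_y}. Define the quadratic q(u, v) = g_x'u + g_y'v + u'Bv + ½ u'Cu + ½ v'Av. Then q has a unique global minmax point (u*, v*): the map v ↦ q(u*, v) attains its maximum over ℝ^{n_y} uniquely at v*, the map u ↦ max_v q(u, v) attains its minimum over ℝ^{n_x} uniquely at u*, and (u*; v*) = −[[C, B], [B', A]]⁻¹ (g_x; g_y). -/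
open Matrix

noncomputable section
lemma dot_symm {n : Type*} [Fintype n] {P : Matrix n n ℝ} (hP : Pᵀ = P) (v w : n → ℝ) :
    v ⬝ᵥ P *ᵥ w = w ⬝ᵥ P *ᵥ v := by
  rw [Matrix.dotProduct_mulVec, ← Matrix.mulVec_transpose, hP, dotProduct_comm]
lemma quad_key {n : Type*} [Fintype n] (P : Matrix n n ℝ) (hP : Pᵀ = P)
    (b v₀ : n → ℝ) (hv₀ : P *ᵥ v₀ = b) (v : n → ℝ) :
    (b ⬝ᵥ v₀ - 2⁻¹ * (v₀ ⬝ᵥ P *ᵥ v₀)) - (b ⬝ᵥ v - 2⁻¹ * (v ⬝ᵥ P *ᵥ v))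
      = 2⁻¹ * ((v - v₀) ⬝ᵥ P *ᵥ (v - v₀)) := by
  subst hv₀
  have h1 : (P *ᵥ v₀) ⬝ᵥ v₀ = v₀ ⬝ᵥ P *ᵥ v₀ := dotProduct_comm _ _
  have h2 : (P *ᵥ v₀) ⬝ᵥ v = v ⬝ᵥ P *ᵥ v₀ := dotProduct_comm _ _
  have h3 : v ⬝ᵥ P *ᵥ v₀ = v₀ ⬝ᵥ P *ᵥ v := dot_symm hP v v₀
  rw [h1, h2, h3]
  rw [Matrix.mulVec_sub, sub_dotProduct, dotProduct_sub, dotProduct_sub]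
  rw [h3]
  ring
lemma quad_max {n : Type*} [Fintype n] (P : Matrix n n ℝ) (hP : P.PosDef)
    (b v₀ : n → ℝ) (hv₀ : P *ᵥ v₀ = b) :
    (∀ v, b ⬝ᵥ v - 2⁻¹ * (v ⬝ᵥ P *ᵥ v) ≤ b ⬝ᵥ v₀ - 2⁻¹ * (v₀ ⬝ᵥ P *ᵥ v₀)) ∧
    (∀ v, b ⬝ᵥ v - 2⁻¹ * (v ⬝ᵥ P *ᵥ v) = b ⬝ᵥ v₀ - 2⁻¹ * (v₀ ⬝ᵥ P *ᵥ v₀) → v = v₀) := by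
  have hPt : Pᵀ = P := by
    have := hP.1
    rw [← Matrix.conjTranspose_eq_transpose_of_trivial]; exact this
  constructor
  · intro v
    have key := quad_key P hPt b v₀ hv₀ v
    have h := hP.posSemidef.dotProduct_mulVec_nonneg (v - v₀)
    rw [star_trivial] at h
    nlinarith [h, key]
  · intro v hv
    by_contra hne
    have h0 : v - v₀ ≠ 0 := sub_ne_zero.2 hne
    have := hP.dotProduct_mulVec_pos h0
    have key := quad_key P hPt b v₀ hv₀ v
    rw [hv] at key
    simp only [sub_self] at key
    rw [star_trivial] at this
    nlinarith [this]

/-- A real matrix is negative definite if it is symmetric and `v'Av < 0` for all `v ≠ 0`. -/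
def MatNegDef {ι : Type*} [Fintype ι] (A : Matrix ι ι ℝ) : Prop :=
  A.IsHermitian ∧ ∀ v : ι → ℝ, v ≠ 0 → v ⬝ᵥ A.mulVec v < 0

/-- **Well-posedness of the local quadratic approximation for minmax**: if `A ≺ 0` and
`C − B A⁻¹ B' ≻ 0`, the quadratic `q(u,v) = g_x'u + g_y'v + u'Bv + ½u'Cu + ½v'Av`
has a unique global minmax point, given by the Newton step. -/
theorem quadratic_minmax_wellPosed {nx ny : ℕ}
    (C : Matrix (Fin nx) (Fin nx) ℝ) (B : Matrix (Fin nx) (Fin ny) ℝ)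
    (A : Matrix (Fin ny) (Fin ny) ℝ)
    (hC : C.IsHermitian) (hA : MatNegDef A)
    (hSchur : (C - B * A⁻¹ * Bᵀ).PosDef)
    (gx : Fin nx → ℝ) (gy : Fin ny → ℝ) :
    ∃ us : Fin nx → ℝ, ∃ vs : Fin ny → ℝ,
      letI q : (Fin nx → ℝ) → (Fin ny → ℝ) → ℝ := fun u v =>
        gx ⬝ᵥ u + gy ⬝ᵥ v + u ⬝ᵥ B.mulVec v +
          (1 / 2) * (u ⬝ᵥ C.mulVec u) + (1 / 2) * (v ⬝ᵥ A.mulVec v)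
      -- the inner maximization is attained uniquely at `vs` :
      (∀ v, q us v ≤ q us vs) ∧ (∀ v, q us v = q us vs → v = vs) ∧
      -- the outer minimization of `u ↦ max_v q(u,v)` is attained uniquely at `us` :
      (∀ u, (⨆ v, q us v) ≤ ⨆ v, q u v) ∧
      (∀ u, (⨆ v, q u v) = (⨆ v, q us v) → u = us) ∧
      -- the solution is the Newton step :
      Sum.elim us vs =
        -(Matrix.fromBlocks C B Bᵀ A)⁻¹.mulVec (Sum.elim gx gy) := by
  
  -- basic facts
  have hAt : Aᵀ = A := by rw [← Matrix.conjTranspose_eq_transpose_of_trivial]; exact hA.1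
  have hnegA : (-A).PosDef := by
    refine Matrix.PosDef.of_dotProduct_mulVec_pos hA.1.neg ?_
    intro x hx
    rw [star_trivial]
    have := hA.2 x hx
    simp only [Matrix.neg_mulVec, dotProduct_neg]
    linarith
  have hAdet : IsUnit A.det := by
    have h1 : (-A).det ≠ 0 := hnegA.det_pos.ne'
    have h2 : (-A).det = (-1) ^ (Fintype.card (Fin ny)) * A.det := Matrix.det_neg A
    have : A.det ≠ 0 := by
      intro h; rw [h, mul_zero] at h2; exact h1 h2
    exact isUnit_iff_ne_zero.2 this
  have hAinvt : (A⁻¹)ᵀ = A⁻¹ := by rw [Matrix.transpose_nonsing_inv, hAt]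
  set S : Matrix (Fin nx) (Fin nx) ℝ := C - B * A⁻¹ * Bᵀ with hSdef
  have hSdet : IsUnit S.det := hSchur.det_pos.ne'.isUnit
  have hBadj : ∀ (u : Fin nx → ℝ) (x : Fin ny → ℝ),
      (Bᵀ *ᵥ u) ⬝ᵥ x = u ⬝ᵥ B *ᵥ x := by
    intro u x; rw [Matrix.mulVec_transpose, ← Matrix.dotProduct_mulVec]
  -- the candidate points
  set vstar : (Fin nx → ℝ) → (Fin ny → ℝ) :=
    fun u => -(A⁻¹ *ᵥ (gy + Bᵀ *ᵥ u)) with hvstar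
  obtain ⟨us, hus⟩ : ∃ u : Fin nx → ℝ, u = S⁻¹ *ᵥ (B *ᵥ (A⁻¹ *ᵥ gy) - gx) := ⟨_, rfl⟩
  have hAv : ∀ u, A *ᵥ vstar u = -(gy + Bᵀ *ᵥ u) := by
    intro u
    show A *ᵥ (-(A⁻¹ *ᵥ (gy + Bᵀ *ᵥ u))) = _
    simp only [Matrix.mulVec_neg, Matrix.mulVec_mulVec,
      Matrix.mul_nonsing_inv _ hAdet, Matrix.one_mulVec]
  have hPv : ∀ u, (-A) *ᵥ vstar u = gy + Bᵀ *ᵥ u := by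
    intro u; rw [Matrix.neg_mulVec, hAv, neg_neg]
  have hSus : S *ᵥ us = B *ᵥ (A⁻¹ *ᵥ gy) - gx := by
    rw [hus, Matrix.mulVec_mulVec, Matrix.mul_nonsing_inv _ hSdet, Matrix.one_mulVec]
  -- rewrite q in inner-quadratic form
  have hq : ∀ u v, gx ⬝ᵥ u + gy ⬝ᵥ v + u ⬝ᵥ B.mulVec v +
        (1 / 2) * (u ⬝ᵥ C.mulVec u) + (1 / 2) * (v ⬝ᵥ A.mulVec v)
      = (gx ⬝ᵥ u + 2⁻¹ * (u ⬝ᵥ C *ᵥ u)) +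
        ((gy + Bᵀ *ᵥ u) ⬝ᵥ v - 2⁻¹ * (v ⬝ᵥ (-A) *ᵥ v)) := by
    intro u v
    have h1 : u ⬝ᵥ B.mulVec v = (Bᵀ *ᵥ u) ⬝ᵥ v := (hBadj u v).symm
    rw [h1, add_dotProduct, Matrix.neg_mulVec, dotProduct_neg]
    ring
  -- inner maximization
  have hinner : ∀ u, (∀ v, (gy + Bᵀ *ᵥ u) ⬝ᵥ v - 2⁻¹ * (v ⬝ᵥ (-A) *ᵥ v)
        ≤ (gy + Bᵀ *ᵥ u) ⬝ᵥ vstar u - 2⁻¹ * (vstar u ⬝ᵥ (-A) *ᵥ vstar u)) ∧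
      (∀ v, (gy + Bᵀ *ᵥ u) ⬝ᵥ v - 2⁻¹ * (v ⬝ᵥ (-A) *ᵥ v)
        = (gy + Bᵀ *ᵥ u) ⬝ᵥ vstar u - 2⁻¹ * (vstar u ⬝ᵥ (-A) *ᵥ vstar u) → v = vstar u) :=
    fun u => quad_max (-A) hnegA _ _ (hPv u)
  -- the value of the inner maximum
  set Φ : (Fin nx → ℝ) → ℝ := fun u => (gx ⬝ᵥ u + 2⁻¹ * (u ⬝ᵥ C *ᵥ u)) +
      ((gy + Bᵀ *ᵥ u) ⬝ᵥ vstar u - 2⁻¹ * (vstar u ⬝ᵥ (-A) *ᵥ vstar u)) with hΦ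
  -- the outer quadratic form
  have hφ : ∀ u, -(Φ u)
      = 2⁻¹ * (gy ⬝ᵥ (A⁻¹ *ᵥ gy)) +
        ((B *ᵥ (A⁻¹ *ᵥ gy) - gx) ⬝ᵥ u - 2⁻¹ * (u ⬝ᵥ S *ᵥ u)) := by
    intro u
    have e2 : vstar u = -(A⁻¹ *ᵥ (gy + Bᵀ *ᵥ u)) := rfl
    have h2 : vstar u ⬝ᵥ (-A) *ᵥ vstar u
        = -((gy + Bᵀ *ᵥ u) ⬝ᵥ (A⁻¹ *ᵥ (gy + Bᵀ *ᵥ u))) := by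
      calc vstar u ⬝ᵥ (-A) *ᵥ vstar u = vstar u ⬝ᵥ (gy + Bᵀ *ᵥ u) := by rw [hPv u]
        _ = -((A⁻¹ *ᵥ (gy + Bᵀ *ᵥ u)) ⬝ᵥ (gy + Bᵀ *ᵥ u)) := by
            rw [e2, neg_dotProduct]
        _ = -((gy + Bᵀ *ᵥ u) ⬝ᵥ (A⁻¹ *ᵥ (gy + Bᵀ *ᵥ u))) := by rw [dotProduct_comm]
    have h3 : (gy + Bᵀ *ᵥ u) ⬝ᵥ vstar u
        = -((gy + Bᵀ *ᵥ u) ⬝ᵥ (A⁻¹ *ᵥ (gy + Bᵀ *ᵥ u))) := by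
      rw [e2, dotProduct_neg]
    have hT : (gy + Bᵀ *ᵥ u) ⬝ᵥ (A⁻¹ *ᵥ (gy + Bᵀ *ᵥ u))
        = gy ⬝ᵥ (A⁻¹ *ᵥ gy) + 2 * (u ⬝ᵥ B *ᵥ (A⁻¹ *ᵥ gy))
          + u ⬝ᵥ (B * A⁻¹ * Bᵀ) *ᵥ u := by
      rw [Matrix.mulVec_add, dotProduct_add, add_dotProduct,
        add_dotProduct]
      have c1 : gy ⬝ᵥ (A⁻¹ *ᵥ (Bᵀ *ᵥ u)) = (Bᵀ *ᵥ u) ⬝ᵥ (A⁻¹ *ᵥ gy) :=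
        dot_symm hAinvt gy (Bᵀ *ᵥ u)
      have c2 : (Bᵀ *ᵥ u) ⬝ᵥ (A⁻¹ *ᵥ gy) = u ⬝ᵥ B *ᵥ (A⁻¹ *ᵥ gy) := hBadj u _
      have c3 : (Bᵀ *ᵥ u) ⬝ᵥ (A⁻¹ *ᵥ (Bᵀ *ᵥ u)) = u ⬝ᵥ (B * A⁻¹ * Bᵀ) *ᵥ u := by
        rw [hBadj u _, Matrix.mulVec_mulVec, Matrix.mulVec_mulVec]
      rw [c1, c2, c3]
      ring
    have hU : u ⬝ᵥ S *ᵥ u = u ⬝ᵥ C *ᵥ u - u ⬝ᵥ (B * A⁻¹ * Bᵀ) *ᵥ u := by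
      rw [hSdef, Matrix.sub_mulVec, dotProduct_sub]
    have hb2 : (B *ᵥ (A⁻¹ *ᵥ gy) - gx) ⬝ᵥ u
        = u ⬝ᵥ B *ᵥ (A⁻¹ *ᵥ gy) - gx ⬝ᵥ u := by
      rw [sub_dotProduct, dotProduct_comm]
    rw [hΦ]
    simp only []
    rw [h2, h3, hT, hU, hb2]
    ring
  -- outer minimization
  have houter := quad_max S hSchur (B *ᵥ (A⁻¹ *ᵥ gy) - gx) us hSus
  have houter1 : ∀ u, Φ us ≤ Φ u := by
    intro u
    have e : -Φ u ≤ -Φ us := by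
      rw [hφ u, hφ us]
      exact add_le_add_right (houter.1 u) _
    exact le_of_neg_le_neg e
  have houter2 : ∀ u, Φ u = Φ us → u = us := by
    intro u h
    apply houter.2 u
    have e : -Φ u = -Φ us := by rw [h]
    rw [hφ u, hφ us] at e
    exact add_left_cancel e
  -- suprema
  have hqle : ∀ u v, gx ⬝ᵥ u + gy ⬝ᵥ v + u ⬝ᵥ B.mulVec v +
        (1 / 2) * (u ⬝ᵥ C.mulVec u) + (1 / 2) * (v ⬝ᵥ A.mulVec v) ≤ Φ u := by
    intro u v
    rw [hq u v, hΦ]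
    exact add_le_add_right ((hinner u).1 v) _
  have hqeq : ∀ u, gx ⬝ᵥ u + gy ⬝ᵥ (vstar u) + u ⬝ᵥ B.mulVec (vstar u) +
        (1 / 2) * (u ⬝ᵥ C.mulVec u) + (1 / 2) * ((vstar u) ⬝ᵥ A.mulVec (vstar u)) = Φ u := by
    intro u; rw [hq u (vstar u), hΦ]
  have hsup : ∀ u, (⨆ v, gx ⬝ᵥ u + gy ⬝ᵥ v + u ⬝ᵥ B.mulVec v +
        (1 / 2) * (u ⬝ᵥ C.mulVec u) + (1 / 2) * (v ⬝ᵥ A.mulVec v)) = Φ u := by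
    intro u
    apply le_antisymm
    · exact ciSup_le (hqle u)
    · have hbdd : BddAbove (Set.range fun v => gx ⬝ᵥ u + gy ⬝ᵥ v + u ⬝ᵥ B.mulVec v +
          (1 / 2) * (u ⬝ᵥ C.mulVec u) + (1 / 2) * (v ⬝ᵥ A.mulVec v)) := by
        refine ⟨Φ u, ?_⟩
        rintro x ⟨v, rfl⟩
        exact hqle u v
      have := le_ciSup hbdd (vstar u)
      rw [hqeq u] at this
      exact this
  -- Newton step
  haveI : Invertible A := A.invertibleOfIsUnitDet hAdet
  have hMdet : IsUnit (Matrix.fromBlocks C B Bᵀ A).det := by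
    rw [Matrix.det_fromBlocks₂₂, Matrix.invOf_eq_nonsing_inv]
    exact hAdet.mul hSchur.det_pos.ne'.isUnit
  have h2v : Bᵀ *ᵥ us + A *ᵥ (vstar us) = -gy := by
    rw [hAv us]; abel
  have h1v : C *ᵥ us + B *ᵥ (vstar us) = -gx := by
    have e : B *ᵥ (vstar us) = -(B *ᵥ (A⁻¹ *ᵥ gy) + (B * A⁻¹ * Bᵀ) *ᵥ us) := by
      have key : B *ᵥ (A⁻¹ *ᵥ (Bᵀ *ᵥ us)) = (B * A⁻¹ * Bᵀ) *ᵥ us := by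
        rw [Matrix.mulVec_mulVec, Matrix.mulVec_mulVec]
      show B *ᵥ (-(A⁻¹ *ᵥ (gy + Bᵀ *ᵥ us))) = _
      rw [Matrix.mulVec_neg, Matrix.mulVec_add, Matrix.mulVec_add, key]
    have e2 : C *ᵥ us - (B * A⁻¹ * Bᵀ) *ᵥ us = B *ᵥ (A⁻¹ *ᵥ gy) - gx := by
      rw [← Matrix.sub_mulVec, ← hSdef]
      exact hSus
    have e3 : C *ᵥ us = (B *ᵥ (A⁻¹ *ᵥ gy) - gx) + (B * A⁻¹ * Bᵀ) *ᵥ us := by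
      rw [← e2]; abel
    rw [e, e3]; abel
  have hMv : Matrix.fromBlocks C B Bᵀ A *ᵥ (Sum.elim us (vstar us)) = -(Sum.elim gx gy) := by
    rw [Matrix.fromBlocks_mulVec]
    simp only [Sum.elim_comp_inl, Sum.elim_comp_inr]
    rw [h1v, h2v]
    funext x
    cases x <;> simp
  have hfinal : Sum.elim us (vstar us) = -(Matrix.fromBlocks C B Bᵀ A)⁻¹.mulVec (Sum.elim gx gy) := by
    calc Sum.elim us (vstar us)
        = (Matrix.fromBlocks C B Bᵀ A)⁻¹ *ᵥ (Matrix.fromBlocks C B Bᵀ A *ᵥ (Sum.elim us (vstar us))) := by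
          rw [Matrix.mulVec_mulVec, Matrix.nonsing_inv_mul _ hMdet, Matrix.one_mulVec]
      _ = -(Matrix.fromBlocks C B Bᵀ A)⁻¹.mulVec (Sum.elim gx gy) := by
          rw [hMv, Matrix.mulVec_neg]
  -- assemble
  refine ⟨us, (vstar us), ?_, ?_, ?_, ?_, hfinal⟩
  · intro v
    calc gx ⬝ᵥ us + gy ⬝ᵥ v + us ⬝ᵥ B.mulVec v +
        (1 / 2) * (us ⬝ᵥ C.mulVec us) + (1 / 2) * (v ⬝ᵥ A.mulVec v) ≤ Φ us := hqle us v
      _ = gx ⬝ᵥ us + gy ⬝ᵥ (vstar us) + us ⬝ᵥ B.mulVec (vstar us) +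
        (1 / 2) * (us ⬝ᵥ C.mulVec us) + (1 / 2) * ((vstar us) ⬝ᵥ A.mulVec (vstar us)) := (hqeq us).symm
  · intro v hv
    apply (hinner us).2 v
    have hv2 : gx ⬝ᵥ us + 2⁻¹ * (us ⬝ᵥ C *ᵥ us) +
          ((gy + Bᵀ *ᵥ us) ⬝ᵥ v - 2⁻¹ * (v ⬝ᵥ (-A) *ᵥ v))
        = gx ⬝ᵥ us + 2⁻¹ * (us ⬝ᵥ C *ᵥ us) +
          ((gy + Bᵀ *ᵥ us) ⬝ᵥ vstar us - 2⁻¹ * (vstar us ⬝ᵥ (-A) *ᵥ vstar us)) := by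
      rw [← hq us v, ← hq us (vstar us)]
      exact hv
    exact add_left_cancel hv2
  · intro u
    have h1 := hsup us
    have h2 := hsup u
    calc (⨆ v, gx ⬝ᵥ us + gy ⬝ᵥ v + us ⬝ᵥ B.mulVec v +
        (1 / 2) * (us ⬝ᵥ C.mulVec us) + (1 / 2) * (v ⬝ᵥ A.mulVec v)) = Φ us := h1
      _ ≤ Φ u := houter1 u
      _ = _ := (hsup u).symm
  · intro u hu
    apply houter2 u
    rw [← hsup u, ← hsup us]
    exact hu
end
end

section
/- Let H = [[C, B], [B', A]] be a real symmetric (n_x + n_y) × (n_x + n_y) matrix with A (n_y × n_y) negative definite and the Schur complement C − B A⁻¹ B' positive definite. Let ε_y ≥ 0 and ε_x ≥ 0 satisfy ε_x·I ⪰ ε_y · B A⁻² B' in the Loewner order. Then for every μ ∈ [0, 2] the matrix H + μ·diag(ε_x·I_{n_x}, −ε_y·I_{n_y}) is invertible; moreover, for every μ ∈ [0, 2], A − μ·ε_y·I is negative definite and C − B (A − μ·ε_y·I)⁻¹ B' + μ·ε_x·I is positive definite. -/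
open Matrix

noncomputable section

lemma matNegDef_iff_neg_posDef {ι : Type*} [Fintype ι] (A : Matrix ι ι ℝ) :
    MatNegDef A ↔ (-A).PosDef := by
  constructor
  · rintro ⟨h1, h2⟩
    refine Matrix.posDef_iff_dotProduct_mulVec.mpr ⟨h1.neg, fun x hx => ?_⟩
    have := h2 x hx
    simp only [star_trivial, neg_mulVec, dotProduct_neg]
    linarith
  · intro h
    obtain ⟨h1, h2⟩ := Matrix.posDef_iff_dotProduct_mulVec.mp h
    refine ⟨by simpa using h1.neg, fun x hx => ?_⟩
    have := h2 hx
    simp only [star_trivial, neg_mulVec, dotProduct_neg] at this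
    linarith

lemma posSemidef_smul_real {ι : Type*} [Fintype ι] {M : Matrix ι ι ℝ} (hM : M.PosSemidef)
    {c : ℝ} (hc : 0 ≤ c) : (c • M).PosSemidef := by
  refine Matrix.posSemidef_iff_dotProduct_mulVec.mpr ⟨?_, fun x => ?_⟩
  · unfold Matrix.IsHermitian
    rw [conjTranspose_smul, hM.1.eq]
    simp
  · rw [smul_mulVec, dotProduct_smul]
    exact mul_nonneg hc (hM.dotProduct_mulVec_nonneg x)


/-- **Nonsingularity of the modified minmax Hessian along the homotopy**: if `A ≺ 0`,
`C − B A⁻¹ B' ≻ 0` and `ε_x·I ⪰ ε_y·B A⁻² B'`, then for every `μ ∈ [0,2]` the matrix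
`H + μ·diag(ε_x·I, −ε_y·I)` is invertible, `A − μ·ε_y·I ≺ 0`, and
`C − B(A − μ·ε_y·I)⁻¹B' + μ·ε_x·I ≻ 0`. -/
theorem modified_hessian_nonsingular_on_homotopy {nx ny : ℕ}
    (C : Matrix (Fin nx) (Fin nx) ℝ) (B : Matrix (Fin nx) (Fin ny) ℝ)
    (A : Matrix (Fin ny) (Fin ny) ℝ)
    (hC : C.IsHermitian) (hA : MatNegDef A)
    (hSchur : (C - B * A⁻¹ * Bᵀ).PosDef)
    (εx εy : ℝ) (hεx : 0 ≤ εx) (hεy : 0 ≤ εy)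
    (hLoewner : (εx • (1 : Matrix (Fin nx) (Fin nx) ℝ) -
        εy • (B * A⁻¹ * A⁻¹ * Bᵀ)).PosSemidef) :
    ∀ μ ∈ Set.Icc (0 : ℝ) 2,
      IsUnit (Matrix.fromBlocks C B Bᵀ A +
          μ • Matrix.diagonal (Sum.elim (fun _ : Fin nx => εx) (fun _ : Fin ny => -εy))).det ∧
      MatNegDef (A - (μ * εy) • (1 : Matrix (Fin ny) (Fin ny) ℝ)) ∧
      (C - B * (A - (μ * εy) • (1 : Matrix (Fin ny) (Fin ny) ℝ))⁻¹ * Bᵀ +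
          (μ * εx) • (1 : Matrix (Fin nx) (Fin nx) ℝ)).PosDef := by
  rintro μ ⟨hμ0, hμ2⟩
  set c : ℝ := μ * εy with hc
  have hc0 : 0 ≤ c := mul_nonneg hμ0 hεy
  set Aμ : Matrix (Fin ny) (Fin ny) ℝ := A - c • 1 with hAμdef
  -- negative definiteness of Aμ
  have hnegA : (-A).PosDef := (matNegDef_iff_neg_posDef A).mp hA
  have hcI : ((c : ℝ) • (1 : Matrix (Fin ny) (Fin ny) ℝ)).PosSemidef :=
    posSemidef_smul_real (Matrix.PosSemidef.one) hc0
  have hnegAμ : (-Aμ).PosDef := by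
    have : -Aμ = -A + c • 1 := by rw [hAμdef]; abel
    rw [this]
    exact hnegA.add_posSemidef hcI
  have hAμnegdef : MatNegDef Aμ := (matNegDef_iff_neg_posDef Aμ).mpr hnegAμ
  -- invertibility facts
  have hdetA : IsUnit A.det := by
    have := (Matrix.isUnit_iff_isUnit_det _).mp hnegA.isUnit
    rw [Matrix.det_neg] at this
    exact (isUnit_of_mul_isUnit_right this)
  have hdetAμ : IsUnit Aμ.det := by
    have := (Matrix.isUnit_iff_isUnit_det _).mp hnegAμ.isUnit
    rw [Matrix.det_neg] at this
    exact (isUnit_of_mul_isUnit_right this)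
  set a := A⁻¹ with hadef
  set m := Aμ⁻¹ with hmdef
  have hAa : A * a = 1 := Matrix.mul_nonsing_inv A hdetA
  have haA : a * A = 1 := Matrix.nonsing_inv_mul A hdetA
  have hAm : Aμ * m = 1 := Matrix.mul_nonsing_inv Aμ hdetAμ
  have hmA : m * Aμ = 1 := Matrix.nonsing_inv_mul Aμ hdetAμ
  -- -m is posdef
  have hnegm : (-m).PosDef := by
    have : (-Aμ)⁻¹ = -m := Matrix.inv_eq_right_inv (by rw [neg_mul_neg, hAm])
    rw [← this]
    exact hnegAμ.inv
  -- commutation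
  have hcomm : a * m = m * a := by
    have h1 : A * Aμ = Aμ * A := by
      rw [hAμdef]
      simp [Matrix.mul_sub, Matrix.sub_mul, Matrix.mul_smul, Matrix.smul_mul]
    calc a * m = (Aμ * A)⁻¹ := by rw [Matrix.mul_inv_rev]
    _ = (A * Aμ)⁻¹ := by rw [h1]
    _ = m * a := by rw [Matrix.mul_inv_rev]
  -- key resolvent identity
  have hkey : a - m = (-c) • (a * m) := by
    have h1 : a * Aμ * m - a * A * m = a - m := by
      rw [Matrix.mul_assoc a Aμ m, hAm, Matrix.mul_one, haA, Matrix.one_mul]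
    rw [← h1, ← Matrix.sub_mul, ← Matrix.mul_sub]
    have : Aμ - A = (-c) • 1 := by rw [hAμdef]; simp
    rw [this, Matrix.mul_smul, Matrix.mul_one, Matrix.smul_mul]
  have hm2 : m = a + c • (a * a) + (c * c) • (a * (a * m)) := by
    have ham : a * m = a * a + c • (a * (a * m)) := by
      have := congrArg (fun X => a * X) hkey
      simp only [Matrix.mul_sub, Matrix.mul_smul] at this
      -- this : a * a - a * m = (-c) • (a * (a * m))
      rw [sub_eq_iff_eq_add] at this
      rw [this, neg_smul]
      abel
    calc m = a - (a - m) := by abel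
    _ = a + c • (a * m) := by rw [hkey, neg_smul]; abel
    _ = a + c • (a * a + c • (a * (a * m))) := by rw [← ham]
    _ = a + c • (a * a) + (c * c) • (a * (a * m)) := by
        rw [smul_add, smul_smul]; abel
  -- hermitian of a
  have hainv : a.IsHermitian := hA.1.inv
  -- the PSD congruence term
  have hconj : ((B * a) * (-m) * (a * Bᵀ)).PosSemidef := by
    have := (hnegm.posSemidef).mul_mul_conjTranspose_same (B * a)
    rwa [conjTranspose_mul, hainv.eq, conjTranspose_eq_transpose_of_trivial] at this
  -- key decomposition of the shifted Schur complement
  have hkey2 : C - B * m * Bᵀ + (μ * εx) • (1 : Matrix (Fin nx) (Fin nx) ℝ) =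
      (C - B * a * Bᵀ) + (μ • (εx • (1 : Matrix (Fin nx) (Fin nx) ℝ) - εy • (B * a * a * Bᵀ))
        + (c * c) • ((B * a) * (-m) * (a * Bᵀ))) := by
    have hN : (B * a) * (-m) * (a * Bᵀ) = -(B * (a * (a * m)) * Bᵀ) := by
      have h1 : (a * m) * a = a * (a * m) := by
        rw [Matrix.mul_assoc, ← hcomm]
      calc (B * a) * (-m) * (a * Bᵀ) = -(B * ((a * m) * a) * Bᵀ) := by
            simp only [Matrix.mul_neg, Matrix.neg_mul, Matrix.mul_assoc]
      _ = -(B * (a * (a * m)) * Bᵀ) := by rw [h1]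
    rw [hN]
    conv_lhs => rw [hm2]
    simp only [Matrix.mul_add, Matrix.add_mul, Matrix.mul_smul, Matrix.smul_mul, hc,
      smul_sub, smul_smul, Matrix.mul_assoc]
    module
  have hS : (C - B * m * Bᵀ + (μ * εx) • (1 : Matrix (Fin nx) (Fin nx) ℝ)).PosDef := by
    rw [hkey2]
    exact hSchur.add_posSemidef
      ((posSemidef_smul_real hLoewner hμ0).add
        (posSemidef_smul_real hconj (mul_nonneg hc0 hc0)))
  refine ⟨?_, hAμnegdef, hS⟩
  -- determinant
  have e1 : μ • Matrix.diagonal (fun _ : Fin nx => εx) =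
      (μ * εx) • (1 : Matrix (Fin nx) (Fin nx) ℝ) := by
    rw [← Matrix.smul_one_eq_diagonal, smul_smul]
  have e2 : μ • Matrix.diagonal (fun _ : Fin ny => -εy) =
      -(c • (1 : Matrix (Fin ny) (Fin ny) ℝ)) := by
    rw [← Matrix.smul_one_eq_diagonal, smul_smul, hc, mul_neg, neg_smul]
  have hblock : Matrix.fromBlocks C B Bᵀ A +
      μ • Matrix.diagonal (Sum.elim (fun _ : Fin nx => εx) (fun _ : Fin ny => -εy)) =
      Matrix.fromBlocks (C + (μ * εx) • 1) B Bᵀ Aμ := by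
    rw [← Matrix.fromBlocks_diagonal, Matrix.fromBlocks_smul, Matrix.fromBlocks_add, e1, e2]
    simp [hAμdef, sub_eq_add_neg]
  haveI : Invertible Aμ := Aμ.invertibleOfIsUnitDet hdetAμ
  rw [hblock, Matrix.det_fromBlocks₂₂, Matrix.invOf_eq_nonsing_inv]
  refine hdetAμ.mul ?_
  have : C + (μ * εx) • (1 : Matrix (Fin nx) (Fin nx) ℝ) - B * m * Bᵀ =
      C - B * m * Bᵀ + (μ * εx) • 1 := by abel
  rw [this]
  exact hS.det_pos.ne'.isUnit
end
end

section
/- Let H = [[C, B], [B', A]] be a real symmetric (n_x + n_y) × (n_x + n_y) matrix that is invertible with inertia(H) = (n_x, n_y, 0), and suppose the n_y × n_y block A is invertible but not negative definite (inertia(A) ≠ (0, n_y, 0)). Fix any ε_y > 0 such that A − ε_y·I is negative definite. Then there exists ε̄ ≥ 0 such that for every ε_x ≥ ε̄, setting E = diag(ε_x·I_{n_x}, −ε_y·I_{n_y}), one has inertia(H + E) = (n_x, n_y, 0) (so the LQAC holds) and there exists μ ∈ (0, 1) such that H + μ·E is singular. -/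
open Matrix

noncomputable section

open Module

namespace InstabilityAux

set_option linter.unusedSectionVars false
set_option maxHeartbeats 1000000

section Basic

variable {ι : Type*} [Fintype ι] [DecidableEq ι]

lemma dot_self_nonneg (v : ι → ℝ) : 0 ≤ v ⬝ᵥ v :=
  Finset.sum_nonneg fun i _ => mul_self_nonneg _

lemma dot_self_pos {v : ι → ℝ} (hv : v ≠ 0) : 0 < v ⬝ᵥ v :=
  lt_of_le_of_ne (dot_self_nonneg v) fun h => hv (dotProduct_self_eq_zero.mp h.symm)

lemma herm_of_symm {M : Matrix ι ι ℝ} (h : Mᵀ = M) : M.IsHermitian := by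
  rw [Matrix.IsHermitian, conjTranspose_eq_transpose_of_trivial]; exact h

lemma eig_congr {M N : Matrix ι ι ℝ} (h : M = N) (hM : M.IsHermitian) (hN : N.IsHermitian) :
    hM.eigenvalues = hN.eigenvalues := by subst h; rfl

lemma sq_add_sq_bound (v : ι → ℝ) (i j : ι) : |v i| * |v j| ≤ v ⬝ᵥ v := by
  have h1 : |v i| * |v j| ≤ ((v i)^2 + (v j)^2) / 2 := by
    nlinarith [sq_nonneg (|v i| - |v j|), sq_abs (v i), sq_abs (v j)]
  have h2 : (v i)^2 ≤ v ⬝ᵥ v := by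
    rw [dotProduct]
    calc (v i)^2 = v i * v i := by ring
    _ ≤ ∑ k, v k * v k := Finset.single_le_sum (f := fun k => v k * v k)
        (fun k _ => mul_self_nonneg _) (Finset.mem_univ i)
  have h3 : (v j)^2 ≤ v ⬝ᵥ v := by
    rw [dotProduct]
    calc (v j)^2 = v j * v j := by ring
    _ ≤ ∑ k, v k * v k := Finset.single_le_sum (f := fun k => v k * v k)
        (fun k _ => mul_self_nonneg _) (Finset.mem_univ j)
  linarith

/-- entrywise bound on the quadratic form -/
lemma entry_bound (M : Matrix ι ι ℝ) (v : ι → ℝ) :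
    |v ⬝ᵥ (M *ᵥ v)| ≤ (∑ i, ∑ j, |M i j|) * (v ⬝ᵥ v) := by
  calc |v ⬝ᵥ (M *ᵥ v)| = |∑ i, ∑ j, v i * (M i j * v j)| := by
        rw [dotProduct, Finset.sum_congr rfl]
        intro i _
        rw [mulVec, dotProduct, Finset.mul_sum]
  _ ≤ ∑ i, ∑ j, |v i * (M i j * v j)| := by
        refine (Finset.abs_sum_le_sum_abs _ _).trans (Finset.sum_le_sum fun i _ =>
          Finset.abs_sum_le_sum_abs _ _)
  _ ≤ ∑ i, ∑ j, |M i j| * (v ⬝ᵥ v) := by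
        refine Finset.sum_le_sum fun i _ => Finset.sum_le_sum fun j _ => ?_
        rw [abs_mul, abs_mul]
        calc |v i| * (|M i j| * |v j|) = |M i j| * (|v i| * |v j|) := by ring
        _ ≤ |M i j| * (v ⬝ᵥ v) := mul_le_mul_of_nonneg_left (sq_add_sq_bound v i j) (abs_nonneg _)
  _ = (∑ i, ∑ j, |M i j|) * (v ⬝ᵥ v) := by
        rw [Finset.sum_mul, Finset.sum_congr rfl]
        intro i _; rw [Finset.sum_mul]

lemma posdef_isUnit {M : Matrix ι ι ℝ} (hM : M.IsHermitian) {α : ℝ} (hα : 0 < α)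
    (hq : ∀ v, α * (v ⬝ᵥ v) ≤ v ⬝ᵥ (M *ᵥ v)) : IsUnit M.det := by
  have hpd : M.PosDef := by
    refine posDef_iff_dotProduct_mulVec.mpr ⟨hM, fun v hv => ?_⟩
    have h1 := hq v
    have h2 := dot_self_pos hv
    have : star v = v := by funext i; exact star_trivial _
    rw [this]
    nlinarith
  exact isUnit_iff_ne_zero.mpr hpd.det_pos.ne'

lemma inv_quad_nonneg (M : Matrix ι ι ℝ) {α : ℝ} (hα : 0 < α)
    (hpos : ∀ v, α * (v ⬝ᵥ v) ≤ v ⬝ᵥ (M *ᵥ v)) (hdet : IsUnit M.det) (v : ι → ℝ) :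
    0 ≤ v ⬝ᵥ (M⁻¹ *ᵥ v) := by
  set w := M⁻¹ *ᵥ v with hw
  have hvw : v = M *ᵥ w := by
    rw [hw, mulVec_mulVec, mul_nonsing_inv _ hdet, one_mulVec]
  have ht : v ⬝ᵥ w = w ⬝ᵥ (M *ᵥ w) := by
    nth_rewrite 1 [hvw]
    exact dotProduct_comm _ _
  have := hpos w
  have := dot_self_nonneg w
  nlinarith

/-- inverse quadratic bound -/
lemma inv_quad_bound (M : Matrix ι ι ℝ) {α : ℝ} (hα : 0 < α)
    (hpos : ∀ v, α * (v ⬝ᵥ v) ≤ v ⬝ᵥ (M *ᵥ v)) (hdet : IsUnit M.det) (v : ι → ℝ) :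
    v ⬝ᵥ (M⁻¹ *ᵥ v) ≤ (1 / α) * (v ⬝ᵥ v) := by
  set w := M⁻¹ *ᵥ v with hw
  have hvw : v = M *ᵥ w := by
    rw [hw, mulVec_mulVec, mul_nonsing_inv _ hdet, one_mulVec]
  have ht : v ⬝ᵥ w = w ⬝ᵥ (M *ᵥ w) := by
    nth_rewrite 1 [hvw]
    exact dotProduct_comm _ _
  have hCS : (v ⬝ᵥ w)^2 ≤ (v ⬝ᵥ v) * (w ⬝ᵥ w) := by
    have := Finset.sum_mul_sq_le_sq_mul_sq Finset.univ v w
    simpa [dotProduct, pow_two] using this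
  have hqv : 0 ≤ v ⬝ᵥ v := dot_self_nonneg v
  have hqw : 0 ≤ w ⬝ᵥ w := dot_self_nonneg w
  rcases le_or_gt (v ⬝ᵥ w) 0 with h | h
  · calc v ⬝ᵥ w ≤ 0 := h
    _ ≤ (1/α) * (v ⬝ᵥ v) := by positivity
  · have h1 : α * (w ⬝ᵥ w) ≤ v ⬝ᵥ w := ht ▸ hpos w
    have h2 : α * (v ⬝ᵥ w)^2 ≤ (v ⬝ᵥ v) * (α * (w ⬝ᵥ w)) := by nlinarith [hCS]
    have h3 : (v ⬝ᵥ v) * (α * (w ⬝ᵥ w)) ≤ (v ⬝ᵥ v) * (v ⬝ᵥ w) :=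
      mul_le_mul_of_nonneg_left h1 hqv
    rw [div_mul_eq_mul_div, one_mul, le_div_iff₀ hα]
    nlinarith [h2, h3, h]

end Basic

section Model

variable {ι : Type*} [Fintype ι] [DecidableEq ι]

lemma dot_mulVec_swap {κ : Type*} [Fintype κ] (N : Matrix ι κ ℝ) (v : ι → ℝ) (z : κ → ℝ) :
    v ⬝ᵥ (N *ᵥ z) = (Nᵀ *ᵥ v) ⬝ᵥ z := by
  rw [dotProduct_mulVec, mulVec_transpose]

lemma model_exists {M : Matrix ι ι ℝ} (hM : M.IsHermitian) :
    ∃ e : (ι → ℝ) ≃ₗ[ℝ] (ι → ℝ),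
      (∀ v, v ⬝ᵥ (M *ᵥ v) = ∑ i, hM.eigenvalues i * (e v i) ^ 2) ∧
      (∀ v, v ⬝ᵥ v = ∑ i, (e v i) ^ 2) := by
  set U : Matrix ι ι ℝ := (hM.eigenvectorUnitary : Matrix ι ι ℝ) with hU
  have hUst : star U = Uᵀ := by
    rw [Matrix.star_eq_conjTranspose, conjTranspose_eq_transpose_of_trivial]
  have h1 : U * Uᵀ = 1 := by
    rw [← hUst]; exact (Matrix.mem_unitaryGroup_iff).mp hM.eigenvectorUnitary.2
  have h2 : Uᵀ * U = 1 := by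
    rw [← hUst]; exact (Matrix.mem_unitaryGroup_iff').mp hM.eigenvectorUnitary.2
  refine ⟨LinearEquiv.ofLinear (Matrix.mulVecLin Uᵀ) (Matrix.mulVecLin U) ?_ ?_, ?_, ?_⟩
  · rw [← Matrix.mulVecLin_mul, h2, Matrix.mulVecLin_one]
  · rw [← Matrix.mulVecLin_mul, h1, Matrix.mulVecLin_one]
  · intro v
    have hspec := hM.spectral_theorem
    simp only [RCLike.ofReal_real_eq_id, Function.comp_def, id_eq, Unitary.conjStarAlgAut_apply] at hspec
    conv_lhs => rw [hspec]
    rw [hUst] at *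
    rw [← mulVec_mulVec, ← mulVec_mulVec, dot_mulVec_swap]
    simp only [LinearEquiv.ofLinear_apply, Matrix.mulVecLin_apply]
    rw [dotProduct, Finset.sum_congr rfl]
    intro i _
    rw [mulVec_diagonal]
    ring
  · intro v
    have key : (Uᵀ *ᵥ v) ⬝ᵥ (Uᵀ *ᵥ v) = v ⬝ᵥ v := by
      rw [dot_mulVec_swap, transpose_transpose, mulVec_mulVec, h1, one_mulVec]
    simp only [LinearEquiv.ofLinear_apply, Matrix.mulVecLin_apply]
    rw [← key, dotProduct, Finset.sum_congr rfl]
    intro i _; ring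

end Model

section Counting

variable {ι : Type*} [Fintype ι] [DecidableEq ι]

/-- coordinate subspace supported on s -/
def coordSub (s : Finset ι) : Submodule ℝ (ι → ℝ) where
  carrier := {x | ∀ i ∉ s, x i = 0}
  add_mem' := by intro a b ha hb i hi; simp [ha i hi, hb i hi]
  zero_mem' := by intro i _; rfl
  smul_mem' := by intro c a ha i hi; simp [ha i hi]

lemma mem_coordSub {s : Finset ι} {x : ι → ℝ} : x ∈ coordSub s ↔ ∀ i ∉ s, x i = 0 := Iff.rfl

def coordEquiv (s : Finset ι) : coordSub s ≃ₗ[ℝ] (s → ℝ) where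
  toFun x i := x.1 i
  map_add' x y := rfl
  map_smul' c x := rfl
  invFun y := ⟨fun i => if h : i ∈ s then y ⟨i, h⟩ else 0, by
    intro i hi; simp [hi]⟩
  left_inv x := by
    ext i
    by_cases h : i ∈ s
    · simp [h]
    · simp [h, x.2 i h]
  right_inv y := by ext i; simp [i.2]

lemma finrank_coordSub (s : Finset ι) : finrank ℝ (coordSub s) = s.card := by
  rw [(coordEquiv s).finrank_eq, Module.finrank_fintype_fun_eq_card, Fintype.card_coe]

lemma natcard_eq_filter (p : ι → Prop) [DecidablePred p] :
    Nat.card {i // p i} = (Finset.univ.filter p).card := by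
  rw [Nat.card_eq_fintype_card, Fintype.card_subtype]

lemma counts_sum {M : Matrix ι ι ℝ} (hM : M.IsHermitian) :
    Nat.card {i // 0 < hM.eigenvalues i} + Nat.card {i // hM.eigenvalues i < 0} +
      Nat.card {i // hM.eigenvalues i = 0} = Fintype.card ι := by
  classical
  rw [natcard_eq_filter, natcard_eq_filter, natcard_eq_filter]
  have h1 := Finset.card_filter_add_card_filter_not
    (s := (Finset.univ : Finset ι)) (p := fun i => 0 < hM.eigenvalues i)
  have h2 := Finset.card_filter_add_card_filter_not
    (s := Finset.univ.filter (fun i => ¬ 0 < hM.eigenvalues i))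
    (p := fun i => hM.eigenvalues i < 0)
  rw [Finset.filter_filter, Finset.filter_filter] at h2
  have e1 : Finset.univ.filter (fun i => ¬ 0 < hM.eigenvalues i ∧ hM.eigenvalues i < 0)
      = Finset.univ.filter (fun i => hM.eigenvalues i < 0) := by
    apply Finset.filter_congr; intro i _; constructor
    · exact fun h => h.2
    · intro h; exact ⟨by linarith, h⟩
  have e2 : Finset.univ.filter (fun i => ¬ 0 < hM.eigenvalues i ∧ ¬ hM.eigenvalues i < 0)
      = Finset.univ.filter (fun i => hM.eigenvalues i = 0) := by
    apply Finset.filter_congr; intro i _; constructor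
    · intro h; push_neg at h; linarith [h.1, h.2]
    · intro h; constructor <;> simp [h]
  rw [e1, e2] at h2
  rw [Finset.card_univ] at h1
  omega

lemma zeroCount_eq_zero {M : Matrix ι ι ℝ} (hM : M.IsHermitian) (hd : M.det ≠ 0) :
    Nat.card {i // hM.eigenvalues i = 0} = 0 := by
  rw [natcard_eq_filter, Finset.card_eq_zero, Finset.filter_eq_empty_iff]
  intro i _ h0
  apply hd
  rw [hM.det_eq_prod_eigenvalues]
  exact Finset.prod_eq_zero (Finset.mem_univ i) (by simp [h0])

/-- margin subspace of dimension = number of negative eigenvalues -/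
lemma negSubM_of_count {M : Matrix ι ι ℝ} (hM : M.IsHermitian) :
    ∃ (V : Submodule ℝ (ι → ℝ)) (δ : ℝ), 0 < δ ∧
      finrank ℝ V = Nat.card {i // hM.eigenvalues i < 0} ∧
      ∀ v ∈ V, v ⬝ᵥ (M *ᵥ v) ≤ -δ * (v ⬝ᵥ v) := by
  classical
  obtain ⟨e, hQ, hq⟩ := model_exists hM
  set s : Finset ι := Finset.univ.filter (fun i => hM.eigenvalues i < 0) with hs
  obtain ⟨δ, hδpos, hδ⟩ : ∃ δ : ℝ, 0 < δ ∧ ∀ i ∈ s, hM.eigenvalues i ≤ -δ := by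
    rcases s.eq_empty_or_nonempty with h | h
    · exact ⟨1, one_pos, by simp [h]⟩
    · obtain ⟨i0, hi0, hmin⟩ := s.exists_max_image (fun i => hM.eigenvalues i) h
      refine ⟨-hM.eigenvalues i0, ?_, fun i hi => by simpa using hmin i hi⟩
      have : hM.eigenvalues i0 < 0 := by simpa [hs] using hi0
      linarith
  refine ⟨(coordSub s).map (e.symm : (ι → ℝ) →ₗ[ℝ] (ι → ℝ)), δ, hδpos, ?_, ?_⟩
  · rw [LinearEquiv.finrank_map_eq, finrank_coordSub, natcard_eq_filter]
  · intro v hv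
    rw [Submodule.mem_map_equiv, LinearEquiv.symm_symm, mem_coordSub] at hv
    rw [hQ, hq, Finset.mul_sum]
    apply Finset.sum_le_sum
    intro i _
    by_cases hi : i ∈ s
    · exact mul_le_mul_of_nonneg_right (hδ i hi) (sq_nonneg _)
    · rw [hv i hi]; simp

lemma posSubM_of_count {M : Matrix ι ι ℝ} (hM : M.IsHermitian) :
    ∃ (V : Submodule ℝ (ι → ℝ)) (δ : ℝ), 0 < δ ∧
      finrank ℝ V = Nat.card {i // 0 < hM.eigenvalues i} ∧
      ∀ v ∈ V, δ * (v ⬝ᵥ v) ≤ v ⬝ᵥ (M *ᵥ v) := by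
  classical
  obtain ⟨e, hQ, hq⟩ := model_exists hM
  set s : Finset ι := Finset.univ.filter (fun i => 0 < hM.eigenvalues i) with hs
  obtain ⟨δ, hδpos, hδ⟩ : ∃ δ : ℝ, 0 < δ ∧ ∀ i ∈ s, δ ≤ hM.eigenvalues i := by
    rcases s.eq_empty_or_nonempty with h | h
    · exact ⟨1, one_pos, by simp [h]⟩
    · obtain ⟨i0, hi0, hmin⟩ := s.exists_min_image (fun i => hM.eigenvalues i) h
      refine ⟨hM.eigenvalues i0, ?_, fun i hi => hmin i hi⟩
      simpa [hs] using hi0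
  refine ⟨(coordSub s).map (e.symm : (ι → ℝ) →ₗ[ℝ] (ι → ℝ)), δ, hδpos, ?_, ?_⟩
  · rw [LinearEquiv.finrank_map_eq, finrank_coordSub, natcard_eq_filter]
  · intro v hv
    rw [Submodule.mem_map_equiv, LinearEquiv.symm_symm, mem_coordSub] at hv
    rw [hQ, hq, Finset.mul_sum]
    apply Finset.sum_le_sum
    intro i _
    by_cases hi : i ∈ s
    · exact mul_le_mul_of_nonneg_right (hδ i hi) (sq_nonneg _)
    · rw [hv i hi]; simp

lemma count_le_of_negSub {M : Matrix ι ι ℝ} (hM : M.IsHermitian) {k : ℕ}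
    (h : ∃ V : Submodule ℝ (ι → ℝ), k ≤ finrank ℝ V ∧
      ∀ v ∈ V, v ≠ 0 → v ⬝ᵥ (M *ᵥ v) < 0) :
    k ≤ Nat.card {i // hM.eigenvalues i < 0} := by
  classical
  obtain ⟨V, hkV, hneg⟩ := h
  obtain ⟨e, hQ, hq⟩ := model_exists hM
  set s : Finset ι := Finset.univ.filter (fun i => ¬ hM.eigenvalues i < 0) with hs
  set W := (coordSub s).map (e.symm : (ι → ℝ) →ₗ[ℝ] (ι → ℝ)) with hW
  have hWpos : ∀ v ∈ W, 0 ≤ v ⬝ᵥ (M *ᵥ v) := by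
    intro v hv
    rw [hW, Submodule.mem_map_equiv, LinearEquiv.symm_symm, mem_coordSub] at hv
    rw [hQ]
    apply Finset.sum_nonneg
    intro i _
    by_cases hi : i ∈ s
    · have : ¬ hM.eigenvalues i < 0 := by simpa [hs] using hi
      exact mul_nonneg (by linarith) (sq_nonneg _)
    · rw [hv i hi]; simp
  have hdisj : V ⊓ W = ⊥ := by
    rw [Submodule.eq_bot_iff]
    intro v hv
    by_contra hv0
    exact absurd (hWpos v hv.2) (not_le.mpr (hneg v hv.1 hv0))
  have hsum := Submodule.finrank_sup_add_finrank_inf_eq V W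
  rw [hdisj, finrank_bot, add_zero] at hsum
  have hle : finrank ℝ ((V ⊔ W : Submodule ℝ (ι → ℝ)) : Type _) ≤ finrank ℝ (ι → ℝ) :=
    Submodule.finrank_le _
  have hWrank : finrank ℝ W = s.card := by
    rw [hW, LinearEquiv.finrank_map_eq, finrank_coordSub]
  have hcard : (Finset.univ.filter (fun i => hM.eigenvalues i < 0)).card + s.card
      = Fintype.card ι := by
    rw [hs, ← Finset.card_univ]
    exact Finset.card_filter_add_card_filter_not _
  rw [natcard_eq_filter]
  have : finrank ℝ (ι → ℝ) = Fintype.card ι := Module.finrank_fintype_fun_eq_card ℝ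
  omega

lemma count_le_of_posSub {M : Matrix ι ι ℝ} (hM : M.IsHermitian) {k : ℕ}
    (h : ∃ V : Submodule ℝ (ι → ℝ), k ≤ finrank ℝ V ∧
      ∀ v ∈ V, v ≠ 0 → 0 < v ⬝ᵥ (M *ᵥ v)) :
    k ≤ Nat.card {i // 0 < hM.eigenvalues i} := by
  classical
  obtain ⟨V, hkV, hpos⟩ := h
  obtain ⟨e, hQ, hq⟩ := model_exists hM
  set s : Finset ι := Finset.univ.filter (fun i => ¬ 0 < hM.eigenvalues i) with hs
  set W := (coordSub s).map (e.symm : (ι → ℝ) →ₗ[ℝ] (ι → ℝ)) with hW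
  have hWneg : ∀ v ∈ W, v ⬝ᵥ (M *ᵥ v) ≤ 0 := by
    intro v hv
    rw [hW, Submodule.mem_map_equiv, LinearEquiv.symm_symm, mem_coordSub] at hv
    rw [hQ]
    apply Finset.sum_nonpos
    intro i _
    by_cases hi : i ∈ s
    · have : ¬ 0 < hM.eigenvalues i := by simpa [hs] using hi
      exact mul_nonpos_of_nonpos_of_nonneg (by linarith) (sq_nonneg _)
    · rw [hv i hi]; simp
  have hdisj : V ⊓ W = ⊥ := by
    rw [Submodule.eq_bot_iff]
    intro v hv
    by_contra hv0
    exact absurd (hWneg v hv.2) (not_le.mpr (hpos v hv.1 hv0))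
  have hsum := Submodule.finrank_sup_add_finrank_inf_eq V W
  rw [hdisj, finrank_bot, add_zero] at hsum
  have hle : finrank ℝ ((V ⊔ W : Submodule ℝ (ι → ℝ)) : Type _) ≤ finrank ℝ (ι → ℝ) :=
    Submodule.finrank_le _
  have hWrank : finrank ℝ W = s.card := by
    rw [hW, LinearEquiv.finrank_map_eq, finrank_coordSub]
  have hcard : (Finset.univ.filter (fun i => 0 < hM.eigenvalues i)).card + s.card
      = Fintype.card ι := by
    rw [hs, ← Finset.card_univ]
    exact Finset.card_filter_add_card_filter_not _
  rw [natcard_eq_filter]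
  have : finrank ℝ (ι → ℝ) = Fintype.card ι := Module.finrank_fintype_fun_eq_card ℝ
  omega

end Counting

section Blocks

variable {m n : Type*} [Fintype m] [Fintype n] [DecidableEq m] [DecidableEq n]

lemma diagonal_sum_elim (a : m → ℝ) (b : n → ℝ) :
    Matrix.diagonal (Sum.elim a b) =
      Matrix.fromBlocks (Matrix.diagonal a) 0 0 (Matrix.diagonal b) := by
  ext i j
  cases i <;> cases j <;> simp [Matrix.diagonal, Matrix.fromBlocks, Sum.elim]

lemma sum_elim_eq_zero_iff (a : m → ℝ) (b : n → ℝ) :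
    Sum.elim a b = 0 ↔ a = 0 ∧ b = 0 := by
  constructor
  · intro h
    constructor <;> funext i
    · exact congrFun h (Sum.inl i)
    · exact congrFun h (Sum.inr i)
  · rintro ⟨ha, hb⟩; subst ha; subst hb; funext i; cases i <;> rfl

/-- quadratic form of a block matrix on a split vector -/
lemma blockQuad (P : Matrix m m ℝ) (Q : Matrix m n ℝ) (R : Matrix n m ℝ) (S : Matrix n n ℝ)
    (x : m → ℝ) (y : n → ℝ) :
    (Sum.elim x y) ⬝ᵥ ((Matrix.fromBlocks P Q R S) *ᵥ (Sum.elim x y)) =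
      x ⬝ᵥ (P *ᵥ x) + x ⬝ᵥ (Q *ᵥ y) + y ⬝ᵥ (R *ᵥ x) + y ⬝ᵥ (S *ᵥ y) := by
  rw [fromBlocks_mulVec, sumElim_dotProduct_sumElim, dotProduct_add, dotProduct_add]
  simp only [Sum.elim_comp_inl, Sum.elim_comp_inr]
  ring

lemma graphQuad (P : Matrix m m ℝ) (B : Matrix m n ℝ) (S : Matrix n n ℝ)
    (hP : Pᵀ = P) (hdet : IsUnit P.det) (x : m → ℝ) (y : n → ℝ) :
    (Sum.elim (x - (P⁻¹ * B) *ᵥ y) y) ⬝ᵥ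
        ((Matrix.fromBlocks P B Bᵀ S) *ᵥ (Sum.elim (x - (P⁻¹ * B) *ᵥ y) y)) =
      x ⬝ᵥ (P *ᵥ x) + y ⬝ᵥ (S *ᵥ y) - (B *ᵥ y) ⬝ᵥ (P⁻¹ *ᵥ (B *ᵥ y)) := by
  set k : m → ℝ := (P⁻¹ * B) *ᵥ y with hk
  have hKy : P *ᵥ k = B *ᵥ y := by
    rw [hk, mulVec_mulVec, ← Matrix.mul_assoc, mul_nonsing_inv _ hdet, Matrix.one_mul]
  have hkinv : k = P⁻¹ *ᵥ (B *ᵥ y) := by rw [hk, mulVec_mulVec]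
  rw [blockQuad]
  have h1 : y ⬝ᵥ (Bᵀ *ᵥ (x - k)) = (x - k) ⬝ᵥ (B *ᵥ y) := by
    rw [dotProduct_mulVec, ← mulVec_transpose, transpose_transpose, dotProduct_comm]
  have h2 : (x - k) ⬝ᵥ (P *ᵥ (x - k)) =
      x ⬝ᵥ (P *ᵥ x) - x ⬝ᵥ (P *ᵥ k) - k ⬝ᵥ (P *ᵥ x) + k ⬝ᵥ (P *ᵥ k) := by
    rw [Matrix.mulVec_sub, dotProduct_sub, sub_dotProduct, sub_dotProduct]
    ring
  have h3 : k ⬝ᵥ (P *ᵥ x) = x ⬝ᵥ (B *ᵥ y) := by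
    rw [dotProduct_mulVec, ← mulVec_transpose, hP, hKy, dotProduct_comm]
  have h4 : (x - k) ⬝ᵥ (B *ᵥ y) = x ⬝ᵥ (B *ᵥ y) - k ⬝ᵥ (B *ᵥ y) := sub_dotProduct _ _ _
  have h5 : k ⬝ᵥ (P *ᵥ k) = k ⬝ᵥ (B *ᵥ y) := by rw [hKy]
  have h6 : x ⬝ᵥ (P *ᵥ k) = x ⬝ᵥ (B *ᵥ y) := by rw [hKy]
  have h7 : k ⬝ᵥ (B *ᵥ y) = (B *ᵥ y) ⬝ᵥ (P⁻¹ *ᵥ (B *ᵥ y)) := by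
    rw [hkinv, dotProduct_comm]
  rw [h1, h2, h3, h4, h5, h6, h7]
  ring

def inlMap (m n : Type*) [Fintype m] [Fintype n] : (m → ℝ) →ₗ[ℝ] ((m ⊕ n) → ℝ) where
  toFun x := Sum.elim x 0
  map_add' a b := by funext i; cases i <;> simp
  map_smul' c a := by funext i; cases i <;> simp

lemma inlMap_inj : Function.Injective (inlMap m n) := by
  intro a b h
  funext i
  exact congrFun h (Sum.inl i)

lemma finrank_range_inlMap :
    finrank ℝ (LinearMap.range (inlMap m n)) = Fintype.card m := by
  rw [LinearMap.finrank_range_of_inj inlMap_inj, Module.finrank_fintype_fun_eq_card]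

def graphMap (K : Matrix m n ℝ) : (n → ℝ) →ₗ[ℝ] ((m ⊕ n) → ℝ) where
  toFun y := Sum.elim (-(K *ᵥ y)) y
  map_add' a b := by
    funext i
    cases i <;> simp [Matrix.mulVec_add] <;> ring
  map_smul' c a := by
    funext i
    cases i <;> simp [Matrix.mulVec_smul]

lemma graphMap_inj (K : Matrix m n ℝ) : Function.Injective (graphMap K) := by
  intro a b h
  funext i
  exact congrFun h (Sum.inr i)

lemma graph_decomp {V : Submodule ℝ (n → ℝ)} {K : Matrix m n ℝ} {v : (m ⊕ n) → ℝ}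
    (hv : v ∈ LinearMap.range (inlMap m n) ⊔ V.map (graphMap K)) :
    ∃ x y, y ∈ V ∧ v = Sum.elim (x - K *ᵥ y) y := by
  rw [Submodule.mem_sup] at hv
  obtain ⟨v1, hv1, v2, hv2, rfl⟩ := hv
  obtain ⟨x, rfl⟩ := hv1
  obtain ⟨y, hy, rfl⟩ := hv2
  refine ⟨x, y, hy, ?_⟩
  funext i
  cases i <;> simp [inlMap, graphMap, sub_eq_add_neg]

lemma finrank_inl_sup_graph (V : Submodule ℝ (n → ℝ)) (K : Matrix m n ℝ) :
    finrank ℝ ((LinearMap.range (inlMap m n) ⊔ V.map (graphMap K) :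
        Submodule ℝ ((m ⊕ n) → ℝ)) : Type _) = Fintype.card m + finrank ℝ V := by
  have hinf : LinearMap.range (inlMap m n) ⊓ V.map (graphMap K) = ⊥ := by
    rw [Submodule.eq_bot_iff]
    rintro v ⟨⟨x, rfl⟩, ⟨y, hy, hgy⟩⟩
    have hy0 : y = 0 := by
      funext i
      have := congrFun hgy (Sum.inr i)
      simpa [graphMap, inlMap] using this
    rw [← hgy, hy0]
    simp [graphMap]
  have hsum := Submodule.finrank_sup_add_finrank_inf_eq
    (LinearMap.range (inlMap m n)) (V.map (graphMap K))
  rw [hinf, finrank_bot, add_zero] at hsum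
  have hmap : finrank ℝ (V.map (graphMap K) : Submodule ℝ ((m ⊕ n) → ℝ)) = finrank ℝ V :=
    (Submodule.equivMapOfInjective (graphMap K) (graphMap_inj K) V).finrank_eq.symm
  rw [hsum, finrank_range_inlMap, hmap]

lemma add_diag_quad {ι : Type*} [Fintype ι] [DecidableEq ι]
    (M : Matrix ι ι ℝ) (s : ℝ) (x : ι → ℝ) :
    x ⬝ᵥ ((M + Matrix.diagonal (fun _ => s)) *ᵥ x) = x ⬝ᵥ (M *ᵥ x) + s * (x ⬝ᵥ x) := by
  rw [Matrix.add_mulVec, dotProduct_add]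
  congr 1
  rw [dotProduct, dotProduct, Finset.mul_sum]
  apply Finset.sum_congr rfl
  intro i _
  rw [mulVec_diagonal]
  ring

end Blocks

end InstabilityAux

set_option maxHeartbeats 2000000
open InstabilityAux

/-- **Forcing instability in the hard case**: if `H = [[C, B],[B', A]]` is invertible with
inertia `(n_x, n_y, 0)` but `A` is invertible and not negative definite, then for any fixed
`ε_y > 0` with `A − ε_y·I ≺ 0` there is `ε̄ ≥ 0` such that for all `ε_x ≥ ε̄`, setting
`E = diag(ε_x·I, −ε_y·I)`, the LQAC holds (`inertia(H+E) = (n_x, n_y, 0)`) and `H + μ·E`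
is singular for some `μ ∈ (0,1)`. -/
theorem exists_large_epsx_forcing_singularity {nx ny : ℕ}
    (C : Matrix (Fin nx) (Fin nx) ℝ) (B : Matrix (Fin nx) (Fin ny) ℝ)
    (A : Matrix (Fin ny) (Fin ny) ℝ)
    (hH : (Matrix.fromBlocks C B Bᵀ A).IsHermitian)
    (hHinv : IsUnit (Matrix.fromBlocks C B Bᵀ A).det)
    (hHinertia : HasInertia (Matrix.fromBlocks C B Bᵀ A) (nx, ny, 0))
    (hAinv : IsUnit A.det)
    (hAnotneg : ∃ t : ℕ × ℕ × ℕ, t ≠ (0, ny, 0) ∧ HasInertia A t)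
    (εy : ℝ) (hεy : 0 < εy)
    (hεyneg : MatNegDef (A - εy • (1 : Matrix (Fin ny) (Fin ny) ℝ))) :
    ∃ εbar : ℝ, 0 ≤ εbar ∧ ∀ εx : ℝ, εbar ≤ εx →
      HasInertia (Matrix.fromBlocks C B Bᵀ A +
          Matrix.diagonal (Sum.elim (fun _ : Fin nx => εx) (fun _ : Fin ny => -εy)))
        (nx, ny, 0) ∧
      ∃ μ ∈ Set.Ioo (0 : ℝ) 1,
        (Matrix.fromBlocks C B Bᵀ A +
            μ • Matrix.diagonal (Sum.elim (fun _ : Fin nx => εx) (fun _ : Fin ny => -εy))).det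
          = 0 := by
  classical
  set H : Matrix (Fin nx ⊕ Fin ny) (Fin nx ⊕ Fin ny) ℝ := Matrix.fromBlocks C B Bᵀ A with hHdef
  have hHsym : Hᵀ = H := by
    rw [← conjTranspose_eq_transpose_of_trivial]; exact hH
  have hCs : Cᵀ = C := by
    have h := hHsym
    rw [hHdef, fromBlocks_transpose] at h
    ext i j
    have h2 := congrFun (congrFun h (Sum.inl i)) (Sum.inl j)
    simpa using h2
  have hcardι : Fintype.card (Fin nx ⊕ Fin ny) = nx + ny := by simp
  -- strict negativity of A - εy
  have hAneg : ∀ y : Fin ny → ℝ, y ≠ 0 → y ⬝ᵥ (A *ᵥ y) < εy * (y ⬝ᵥ y) := by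
    intro y hy
    have h := hεyneg.2 y hy
    rw [Matrix.sub_mulVec, smul_mulVec, one_mulVec, dotProduct_sub, dotProduct_smul,
      smul_eq_mul] at h
    linarith
  -- inertia data of A
  obtain ⟨⟨pA, qA, zA⟩, htne, hA, hpA, hqA, hzA⟩ := hAnotneg
  dsimp only at hpA hqA hzA
  have hdetA : A.det ≠ 0 := hAinv.ne_zero
  have hzA0 : zA = 0 := by rw [← hzA]; exact zeroCount_eq_zero hA hdetA
  have hsumA := counts_sum hA
  rw [Fintype.card_fin] at hsumA
  have hpA1 : 1 ≤ pA := by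
    by_contra hp0
    push_neg at hp0
    apply htne
    have hp : pA = 0 := by omega
    have hq : qA = ny := by omega
    rw [hp, hq, hzA0]
  obtain ⟨VA, δA, hδA, hVAdim, hVAq⟩ := posSubM_of_count hA
  rw [hpA] at hVAdim
  -- constants
  set mC : ℝ := ∑ i, ∑ j, |C i j| with hmCdef
  have hmC : 0 ≤ mC := by positivity
  set mBB : ℝ := ∑ i, ∑ j, |(Bᵀ * B) i j| with hmBBdef
  have hmBB : 0 ≤ mBB := by positivity
  have hCbd : ∀ x : Fin nx → ℝ, -(mC * (x ⬝ᵥ x)) ≤ x ⬝ᵥ (C *ᵥ x) := by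
    intro x
    have h := (abs_le.mp (entry_bound C x)).1
    linarith
  have hBbd : ∀ y : Fin ny → ℝ, (B *ᵥ y) ⬝ᵥ (B *ᵥ y) ≤ mBB * (y ⬝ᵥ y) := by
    intro y
    have hswap : (B *ᵥ y) ⬝ᵥ (B *ᵥ y) = y ⬝ᵥ ((Bᵀ * B) *ᵥ y) := by
      rw [dot_mulVec_swap, mulVec_mulVec, dotProduct_comm]
    rw [hswap]
    have h := (abs_le.mp (entry_bound (Bᵀ * B) y)).2
    linarith
  -- μ₀
  set μ₀ : ℝ := min (1/2) (δA / (3 * εy)) with hμ₀def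
  have hμ₀pos : 0 < μ₀ := lt_min (by norm_num) (by positivity)
  have hμ₀half : μ₀ ≤ 1/2 := min_le_left _ _
  have hμ₀εy : μ₀ * εy ≤ δA / 3 := by
    have h := min_le_right (1/2 : ℝ) (δA / (3 * εy))
    calc μ₀ * εy ≤ (δA / (3 * εy)) * εy := mul_le_mul_of_nonneg_right h hεy.le
    _ = δA / 3 := by field_simp
  refine ⟨max (mC + 1) ((mC + 3 * mBB / δA + 1) / μ₀), le_trans (by linarith) (le_max_left _ _), ?_⟩
  intro εx hεx
  have hεx1 : mC + 1 ≤ εx := le_trans (le_max_left _ _) hεx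
  have hεxpos : 0 < εx := by linarith
  have hμ₀εx : mC + 3 * mBB / δA + 1 ≤ μ₀ * εx := by
    have h := le_trans (le_max_right _ _) hεx
    rw [div_le_iff₀ hμ₀pos] at h
    calc mC + 3 * mBB / δA + 1 ≤ εx * μ₀ := h
    _ = μ₀ * εx := mul_comm _ _
  -- E
  set E : Matrix (Fin nx ⊕ Fin ny) (Fin nx ⊕ Fin ny) ℝ :=
    Matrix.diagonal (Sum.elim (fun _ : Fin nx => εx) (fun _ : Fin ny => -εy)) with hEdef
  have hEherm : E.IsHermitian := isHermitian_diagonal _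
  have hsmulE : ∀ t : ℝ, t • E = Matrix.diagonal
      (Sum.elim (fun _ : Fin nx => t * εx) (fun _ : Fin ny => t * -εy)) := by
    intro t
    rw [hEdef]
    ext i j
    rcases eq_or_ne i j with rfl | hij
    · cases i <;> simp [Matrix.diagonal_apply_eq]
    · simp [Matrix.diagonal_apply_ne _ hij]
  have hHt : ∀ t : ℝ, (H + t • E).IsHermitian := by
    intro t
    exact hH.add (by rw [hsmulE]; exact isHermitian_diagonal _)
  have hblock : ∀ a b : ℝ,
      H + Matrix.diagonal (Sum.elim (fun _ : Fin nx => a) (fun _ : Fin ny => b))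
      = Matrix.fromBlocks (C + Matrix.diagonal (fun _ => a)) B Bᵀ
          (A + Matrix.diagonal (fun _ => b)) := by
    intro a b
    rw [hHdef, diagonal_sum_elim, fromBlocks_add]
    simp
  -- Cm facts
  have hCmsym : ∀ s : ℝ,
      (C + Matrix.diagonal (fun _ : Fin nx => s))ᵀ = C + Matrix.diagonal (fun _ => s) := by
    intro s; rw [transpose_add, hCs, diagonal_transpose]
  have hCmmargin : ∀ s : ℝ, ∀ x : Fin nx → ℝ,
      (s - mC) * (x ⬝ᵥ x) ≤ x ⬝ᵥ ((C + Matrix.diagonal (fun _ : Fin nx => s)) *ᵥ x) := by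
    intro s x
    rw [add_diag_quad]
    have h1 := hCbd x
    linarith
  have hCmunit : ∀ s : ℝ, mC < s → IsUnit (C + Matrix.diagonal (fun _ : Fin nx => s)).det := by
    intro s hs
    exact posdef_isUnit (herm_of_symm (hCmsym s)) (show (0:ℝ) < s - mC by linarith)
      (hCmmargin s)
  constructor
  · -- part (a): inertia of H + E
    have hHE : (H + E).IsHermitian := hH.add hEherm
    have hEblock : H + E = Matrix.fromBlocks (C + Matrix.diagonal (fun _ : Fin nx => εx)) B Bᵀ
        (A + Matrix.diagonal (fun _ : Fin ny => -εy)) := by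
      rw [hEdef]; exact hblock εx (-εy)
    have hgb : nx ≤ Nat.card {i // 0 < hHE.eigenvalues i} := by
      apply count_le_of_posSub hHE
      refine ⟨LinearMap.range (inlMap (Fin nx) (Fin ny)), ?_, ?_⟩
      · rw [finrank_range_inlMap, Fintype.card_fin]
      · rintro v ⟨x, rfl⟩ hv0
        have hx0 : x ≠ 0 := by
          intro h; apply hv0; rw [h]; exact map_zero _
        have hrepr : (inlMap (Fin nx) (Fin ny)) x = Sum.elim x 0 := rfl
        rw [hrepr, hEblock, blockQuad]
        simp only [mulVec_zero, dotProduct_zero, zero_dotProduct, add_zero]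
        have h1 := hCmmargin εx x
        have hq := dot_self_pos hx0
        nlinarith
    have hfb : ny ≤ Nat.card {i // hHE.eigenvalues i < 0} := by
      apply count_le_of_negSub hHE
      have hunit := hCmunit εx (by linarith)
      refine ⟨Submodule.map (graphMap ((C + Matrix.diagonal (fun _ : Fin nx => εx))⁻¹ * B))
        (⊤ : Submodule ℝ (Fin ny → ℝ)), ?_, ?_⟩
      · have he := (Submodule.equivMapOfInjective _ (graphMap_inj
          ((C + Matrix.diagonal (fun _ : Fin nx => εx))⁻¹ * B)) ⊤).finrank_eq
        rw [← he, finrank_top, Module.finrank_fintype_fun_eq_card, Fintype.card_fin]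
      · rintro v ⟨y, -, rfl⟩ hv0
        have hy0 : y ≠ 0 := fun h => hv0 (by rw [h]; exact map_zero _)
        have hrepr : graphMap ((C + Matrix.diagonal (fun _ : Fin nx => εx))⁻¹ * B) y
            = Sum.elim ((0 : Fin nx → ℝ) - ((C + Matrix.diagonal (fun _ : Fin nx => εx))⁻¹ * B) *ᵥ y) y := by
          funext i; cases i <;> simp [graphMap]
        rw [hrepr, hEblock, graphQuad _ _ _ (hCmsym εx) hunit]
        have hz := inv_quad_nonneg _ (show (0:ℝ) < εx - mC by linarith)
          (hCmmargin εx) hunit (B *ᵥ y)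
        have hA' := hAneg y hy0
        rw [add_diag_quad A (-εy) y]
        simp only [zero_dotProduct]
        have hyq := dot_self_nonneg y
        linarith
    have hsum := counts_sum hHE
    rw [hcardι] at hsum
    refine ⟨hHE, ?_, ?_, ?_⟩
    · show Nat.card {i // 0 < hHE.eigenvalues i} = nx
      omega
    · show Nat.card {i // hHE.eigenvalues i < 0} = ny
      omega
    · show Nat.card {i // hHE.eigenvalues i = 0} = 0
      omega
  · -- part (b): crossing
    by_contra hcon
    push_neg at hcon
    set s₀ := μ₀ * εx with hs₀
    have h3mBB : 0 ≤ 3 * mBB / δA := div_nonneg (by linarith) hδA.le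
    have hs₀mC : mC + 1 ≤ s₀ := by linarith
    have hdetIcc : ∀ t ∈ Set.Icc (0:ℝ) μ₀, (H + t • E).det ≠ 0 := by
      intro t ht
      rcases eq_or_lt_of_le ht.1 with h0 | h0
      · rw [← h0, zero_smul, add_zero]; exact hHinv.ne_zero
      · exact hcon t ⟨h0, by linarith [ht.2, hμ₀half]⟩
    set sE : ℝ := ∑ i, ∑ j, |E i j| with hsEdef
    have hsE : 0 ≤ sE := Finset.sum_nonneg fun i _ => Finset.sum_nonneg fun j _ => abs_nonneg _
    have hpert : ∀ (t t' : ℝ) (v : (Fin nx ⊕ Fin ny) → ℝ), v ⬝ᵥ ((H + t' • E) *ᵥ v)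
        = v ⬝ᵥ ((H + t • E) *ᵥ v) + (t' - t) * (v ⬝ᵥ (E *ᵥ v)) := by
      intro t t' v
      have hmats : H + t' • E = (H + t • E) + (t' - t) • E := by
        rw [sub_smul]; abel
      rw [hmats, Matrix.add_mulVec, dotProduct_add, smul_mulVec, dotProduct_smul,
        smul_eq_mul]
    have hEbd : ∀ v : (Fin nx ⊕ Fin ny) → ℝ, |v ⬝ᵥ (E *ᵥ v)| ≤ sE * (v ⬝ᵥ v) :=
      fun v => entry_bound E v
    have hLOC : ∀ t : ℝ, (H + t • E).det ≠ 0 →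
        ∃ δ : ℝ, 0 < δ ∧ ∀ t', |t' - t| ≤ δ →
          Nat.card {i // (hHt t').eigenvalues i < 0} = Nat.card {i // (hHt t).eigenvalues i < 0} := by
      intro t hdet
      obtain ⟨Vn, δn, hδn, hVnrank, hVn⟩ := negSubM_of_count (hHt t)
      obtain ⟨Vp, δp, hδp, hVprank, hVp⟩ := posSubM_of_count (hHt t)
      set c := min δn δp with hc
      have hc0 : 0 < c := lt_min hδn hδp
      refine ⟨c / (2 * (sE + 1)), by positivity, ?_⟩
      intro t' ht'
      have key : ∀ v : (Fin nx ⊕ Fin ny) → ℝ,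
          |(t' - t) * (v ⬝ᵥ (E *ᵥ v))| ≤ (c / 2) * (v ⬝ᵥ v) := by
        intro v
        have hqv := dot_self_nonneg v
        rw [abs_mul]
        calc |t' - t| * |v ⬝ᵥ (E *ᵥ v)| ≤ (c / (2 * (sE + 1))) * (sE * (v ⬝ᵥ v)) :=
          mul_le_mul ht' (hEbd v) (abs_nonneg _) (by positivity)
        _ ≤ (c / (2 * (sE + 1))) * ((sE + 1) * (v ⬝ᵥ v)) := by
          apply mul_le_mul_of_nonneg_left _ (by positivity)
          nlinarith
        _ = (c / 2) * (v ⬝ᵥ v) := by field_simp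
      have hfmon : Nat.card {i // (hHt t).eigenvalues i < 0}
          ≤ Nat.card {i // (hHt t').eigenvalues i < 0} := by
        apply count_le_of_negSub (hHt t')
        refine ⟨Vn, le_of_eq hVnrank.symm, ?_⟩
        intro v hv hv0
        have h1 := hVn v hv
        have h2 := (abs_le.mp (key v)).2
        have h3 := hpert t t' v
        have hq := dot_self_pos hv0
        have hcn : c ≤ δn := min_le_left _ _
        nlinarith
      have hgmon : Nat.card {i // 0 < (hHt t).eigenvalues i}
          ≤ Nat.card {i // 0 < (hHt t').eigenvalues i} := by
        apply count_le_of_posSub (hHt t')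
        refine ⟨Vp, le_of_eq hVprank.symm, ?_⟩
        intro v hv hv0
        have h1 := hVp v hv
        have h2 := (abs_le.mp (key v)).1
        have h3 := hpert t t' v
        have hq := dot_self_pos hv0
        have hcp : c ≤ δp := min_le_right _ _
        nlinarith
      have hsum' := counts_sum (hHt t')
      have hsumt := counts_sum (hHt t)
      have hz := zeroCount_eq_zero (hHt t) hdet
      omega
    -- negative count is ny on [0, μ₀]
    have hf0 : Nat.card {i // (hHt 0).eigenvalues i < 0} = ny := by
      obtain ⟨hH', hgp, hgn, hgz⟩ := hHinertia
      have h0 : H + (0:ℝ) • E = H := by rw [zero_smul, add_zero]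
      have he := eig_congr h0 (hHt 0) hH'
      rw [he]
      exact hgn
    set T : Set ℝ := {t | t ∈ Set.Icc (0:ℝ) μ₀ ∧
      Nat.card {i // (hHt t).eigenvalues i < 0} = ny} with hTdef
    have hT0 : (0:ℝ) ∈ T := ⟨⟨le_refl 0, hμ₀pos.le⟩, hf0⟩
    have hTne : T.Nonempty := ⟨0, hT0⟩
    have hTbdd : BddAbove T := ⟨μ₀, fun t ht => ht.1.2⟩
    set cs := sSup T with hcdef
    have hc0 : 0 ≤ cs := le_csSup hTbdd hT0
    have hcμ : cs ≤ μ₀ := csSup_le hTne (fun t ht => ht.1.2)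
    obtain ⟨δ, hδ, hloc⟩ := hLOC cs (hdetIcc cs ⟨hc0, hcμ⟩)
    obtain ⟨t0, ht0T, ht0⟩ := exists_lt_of_lt_csSup hTne (show cs - δ < cs by linarith)
    have ht0c : t0 ≤ cs := le_csSup hTbdd ht0T
    have hfc : Nat.card {i // (hHt cs).eigenvalues i < 0} = ny :=
      ((hloc t0 (abs_le.mpr ⟨by linarith, by linarith⟩)).symm).trans ht0T.2
    have hcμ₀ : cs = μ₀ := by
      by_contra hne
      have hclt : cs < μ₀ := lt_of_le_of_ne hcμ hne
      set t1 := min (cs + δ) μ₀ with ht1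
      have ht1c : cs < t1 := lt_min (by linarith) hclt
      have ht1T : t1 ∈ T := by
        refine ⟨⟨by linarith, min_le_right _ _⟩, ?_⟩
        rw [hloc t1 (abs_le.mpr ⟨by linarith, by linarith [min_le_left (cs + δ) μ₀]⟩), hfc]
      exact absurd (le_csSup hTbdd ht1T) (not_le.mpr ht1c)
    have hfμ₀ : Nat.card {i // (hHt μ₀).eigenvalues i < 0} = ny := hcμ₀ ▸ hfc
    -- positive count at μ₀ is at least nx + pA
    have hgμ₀ : nx + pA ≤ Nat.card {i // 0 < (hHt μ₀).eigenvalues i} := by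
      apply count_le_of_posSub (hHt μ₀)
      have hs₀mC' : mC < s₀ := by linarith
      have hunit0 := hCmunit s₀ hs₀mC'
      refine ⟨LinearMap.range (inlMap (Fin nx) (Fin ny)) ⊔
        Submodule.map (graphMap ((C + Matrix.diagonal (fun _ : Fin nx => s₀))⁻¹ * B)) VA, ?_, ?_⟩
      · rw [finrank_inl_sup_graph, Fintype.card_fin, hVAdim]
      · intro v hv hv0
        obtain ⟨x, y, hyVA, rfl⟩ := graph_decomp hv
        have hμblock : H + μ₀ • E = Matrix.fromBlocks
            (C + Matrix.diagonal (fun _ : Fin nx => s₀)) B Bᵀ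
            (A + Matrix.diagonal (fun _ : Fin ny => μ₀ * -εy)) := by
          rw [hsmulE, hblock, hs₀]
        rw [hμblock, graphQuad _ _ _ (hCmsym s₀) hunit0]
        have hxq := hCmmargin s₀ x
        have hAy : δA * (y ⬝ᵥ y) ≤ y ⬝ᵥ (A *ᵥ y) := hVAq y hyVA
        rw [add_diag_quad A (μ₀ * -εy) y]
        have hinv := inv_quad_bound _ (show (0:ℝ) < s₀ - mC by linarith)
          (hCmmargin s₀) hunit0 (B *ᵥ y)
        have hBy := hBbd y
        have hzq := dot_self_nonneg (B *ᵥ y)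
        have hyq := dot_self_nonneg y
        have hxq0 := dot_self_nonneg x
        have hkey : (B *ᵥ y) ⬝ᵥ ((C + Matrix.diagonal (fun _ : Fin nx => s₀))⁻¹ *ᵥ (B *ᵥ y))
            ≤ (δA / 3) * (y ⬝ᵥ y) := by
          have h2 : (1 / (s₀ - mC)) * ((B *ᵥ y) ⬝ᵥ (B *ᵥ y))
              ≤ (1 / (s₀ - mC)) * (mBB * (y ⬝ᵥ y)) :=
            mul_le_mul_of_nonneg_left hBy (le_of_lt (by apply div_pos one_pos; linarith))
          have h3 : mBB ≤ (δA / 3) * (s₀ - mC) := by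
            have hα : 3 * mBB / δA + 1 ≤ s₀ - mC := by linarith
            have hid : (δA/3) * (3 * mBB / δA) = mBB := by field_simp
            nlinarith [mul_le_mul_of_nonneg_left hα (show (0:ℝ) ≤ δA/3 by positivity)]
          have h4 : (1 / (s₀ - mC)) * (mBB * (y ⬝ᵥ y)) ≤ (δA / 3) * (y ⬝ᵥ y) := by
            rw [div_mul_eq_mul_div, one_mul, div_le_iff₀ (show (0:ℝ) < s₀ - mC by linarith)]
            calc mBB * (y ⬝ᵥ y) ≤ ((δA/3) * (s₀ - mC)) * (y ⬝ᵥ y) :=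
              mul_le_mul_of_nonneg_right h3 hyq
            _ = (δA/3) * (y ⬝ᵥ y) * (s₀ - mC) := by ring
          linarith
        by_cases hy0 : y = 0
        · subst hy0
          have hx0 : x ≠ 0 := by
            intro hx
            apply hv0
            rw [hx]
            funext i
            cases i <;> simp
          have hq := dot_self_pos hx0
          simp only [mulVec_zero, dotProduct_zero, zero_dotProduct, dotProduct_zero]
          have h1 := hCmmargin s₀ x
          nlinarith
        · have hq := dot_self_pos hy0
          have hεyq : -(δA/3) * (y ⬝ᵥ y) ≤ μ₀ * -εy * (y ⬝ᵥ y) := by nlinarith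
          nlinarith
    have hsum := counts_sum (hHt μ₀)
    rw [hcardι] at hsum
    omega
end
end
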